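/- arXiv:1612.07776 — 6 statements merged into one kernel-verified Lean document; each statement's English description precedes it below -/
import Mathlib

section
/- For every n×n real matrix S whose entries satisfy s_*/n ≤ s_{ij} ≤ s^*/n (with constants 0 < s_* ≤ s^*) and for every τ ≥ 0 and η > 0, there exists a unique pair of vectors (v₁, v₂) ∈ (0,∞)^n × (0,∞)^n satisfying the Dyson equation 1/v₁ = η + S v₂ + τ/(η + Sᵗ v₁) and 1/v₂ = η + Sᵗ v₁ + τ/(η + S v₂). Consequently, for every τ ≥ 0 there exist uniquely determined functions v₁^τ, v₂^τ : (0,∞) → (0,∞)^n satisfying these equations for all η > 0. -/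
open Matrix Filter Topology

/-- The Dyson equation `1/v₁ = η + S v₂ + τ/(η + Sᵗ v₁)`,
`1/v₂ = η + Sᵗ v₁ + τ/(η + S v₂)` (componentwise), together with positivity
of the solution. -/
def IsDysonSolution {n : ℕ} (S : Matrix (Fin n) (Fin n) ℝ) (τ η : ℝ)
    (v₁ v₂ : Fin n → ℝ) : Prop :=
  (∀ i, 0 < v₁ i) ∧ (∀ i, 0 < v₂ i) ∧
  (∀ i, 1 / v₁ i = η + S.mulVec v₂ i + τ / (η + S.transpose.mulVec v₁ i)) ∧
  (∀ i, 1 / v₂ i = η + S.transpose.mulVec v₁ i + τ / (η + S.mulVec v₂ i))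

lemma mv_apply' {n : ℕ} (S : Matrix (Fin n) (Fin n) ℝ) (v : Fin n → ℝ) (i : Fin n) :
    S.mulVec v i = ∑ j, S i j * v j := by
  simp [Matrix.mulVec, dotProduct]

lemma mv_nonneg {n : ℕ} {S : Matrix (Fin n) (Fin n) ℝ} (hS : ∀ i j, 0 ≤ S i j)
    {v : Fin n → ℝ} (hv : ∀ j, 0 ≤ v j) (i : Fin n) : 0 ≤ S.mulVec v i := by
  rw [mv_apply']
  exact Finset.sum_nonneg fun j _ => mul_nonneg (hS i j) (hv j)

lemma mv_mono {n : ℕ} {S : Matrix (Fin n) (Fin n) ℝ} (hS : ∀ i j, 0 ≤ S i j)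
    {v w : Fin n → ℝ} (hvw : ∀ j, v j ≤ w j) (i : Fin n) :
    S.mulVec v i ≤ S.mulVec w i := by
  rw [mv_apply', mv_apply']
  exact Finset.sum_le_sum fun j _ => mul_le_mul_of_nonneg_left (hvw j) (hS i j)

lemma mv_upper {n : ℕ} {S : Matrix (Fin n) (Fin n) ℝ} {su : ℝ}
    (hS : ∀ i j, S i j ≤ su / n) (hsu : 0 ≤ su) (hpos : 0 < n)
    {v : Fin n → ℝ} {B : ℝ} (hv0 : ∀ j, 0 ≤ v j) (hvB : ∀ j, v j ≤ B) (i : Fin n) :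
    S.mulVec v i ≤ su * B := by
  have hn : (0:ℝ) < n := by exact_mod_cast hpos
  have hB : 0 ≤ B := le_trans (hv0 ⟨0, hpos⟩) (hvB ⟨0, hpos⟩)
  rw [mv_apply']
  calc ∑ j, S i j * v j ≤ ∑ _j : Fin n, (su / n) * B :=
        Finset.sum_le_sum fun j _ => mul_le_mul (hS i j) (hvB j) (hv0 j) (by positivity)
    _ = n * ((su / n) * B) := by rw [Finset.sum_const, Finset.card_univ, Fintype.card_fin, nsmul_eq_mul]
    _ = su * B := by field_simp

lemma dyson_swap {n : ℕ} {S : Matrix (Fin n) (Fin n) ℝ} {τ η : ℝ} {a b : Fin n → ℝ}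
    (h : IsDysonSolution S τ η a b) : IsDysonSolution S.transpose τ η b a := by
  obtain ⟨h1, h2, h3, h4⟩ := h
  exact ⟨h2, h1, by simpa using h4, by simpa using h3⟩

lemma dyson_key {n : ℕ} {S : Matrix (Fin n) (Fin n) ℝ} (hS : ∀ i j, 0 ≤ S i j)
    {τ η t : ℝ} (hτ : 0 ≤ τ) (hη : 0 < η) (ht : 1 < t)
    {v₁ v₂ u₁ u₂ : Fin n → ℝ}
    (hv : IsDysonSolution S τ η v₁ v₂) (hu : IsDysonSolution S τ η u₁ u₂)
    (h1 : ∀ i, u₁ i ≤ t * v₁ i) (h2 : ∀ i, v₂ i ≤ t * u₂ i)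
    (k : Fin n) (hk : u₁ k = t * v₁ k) : False := by
  obtain ⟨hv1, hv2, hveq, -⟩ := hv
  obtain ⟨hu1, hu2, hueq, -⟩ := hu
  have ht0 : (0:ℝ) < t := lt_trans one_pos ht
  have hd_v : 0 < η + S.transpose.mulVec v₁ k :=
    lt_of_lt_of_le hη (le_add_of_nonneg_right
      (mv_nonneg (fun i j => hS j i) (fun j => (hv1 j).le) k))
  have hd_u : 0 < η + S.transpose.mulVec u₁ k :=
    lt_of_lt_of_le hη (le_add_of_nonneg_right
      (mv_nonneg (fun i j => hS j i) (fun j => (hu1 j).le) k))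
  -- three componentwise bounds
  have hA : η / t < η := by
    rw [div_lt_iff₀ ht0]; nlinarith
  have hB : S.mulVec v₂ k / t ≤ S.mulVec u₂ k := by
    rw [div_le_iff₀ ht0]
    have : S.mulVec v₂ k ≤ S.mulVec (fun j => t * u₂ j) k := mv_mono hS h2 k
    calc S.mulVec v₂ k ≤ S.mulVec (fun j => t * u₂ j) k := this
      _ = t * S.mulVec u₂ k := by
          simpa using Matrix.mulVec_smul S t u₂ ▸ congrFun (Matrix.mulVec_smul S t u₂) k
      _ = S.mulVec u₂ k * t := mul_comm _ _
  have hC : (τ / (η + S.transpose.mulVec v₁ k)) / t ≤ τ / (η + S.transpose.mulVec u₁ k) := by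
    rw [div_div]
    apply div_le_div_of_nonneg_left hτ hd_u
    have h' : S.transpose.mulVec u₁ k ≤ S.transpose.mulVec (fun j => t * v₁ j) k :=
      mv_mono (fun i j => hS j i) h1 k
    have h'' : S.transpose.mulVec (fun j => t * v₁ j) k = t * S.transpose.mulVec v₁ k := by
      exact congrFun (Matrix.mulVec_smul S.transpose t v₁) k
    nlinarith [hd_v]
  have key : 1 / u₁ k > (1 / v₁ k) / t := by
    rw [hveq k, add_div, add_div, hueq k]
    have h0u : 0 ≤ S.mulVec u₂ k := mv_nonneg hS (fun j => (hu2 j).le) k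
    linarith
  rw [hk] at key
  have : (1 / v₁ k) / t = 1 / (t * v₁ k) := by
    rw [div_div, mul_comm]
  rw [this] at key
  exact lt_irrefl _ key

lemma dyson_unique {n : ℕ} (hn : 0 < n) {S : Matrix (Fin n) (Fin n) ℝ}
    (hS : ∀ i j, 0 ≤ S i j) {τ η : ℝ} (hτ : 0 ≤ τ) (hη : 0 < η)
    {v₁ v₂ u₁ u₂ : Fin n → ℝ}
    (hv : IsDysonSolution S τ η v₁ v₂) (hu : IsDysonSolution S τ η u₁ u₂) :
    v₁ = u₁ ∧ v₂ = u₂ := by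
  haveI : Nonempty (Fin n) := ⟨⟨0, hn⟩⟩
  obtain ⟨hv1, hv2, -, -⟩ := id hv
  obtain ⟨hu1, hu2, -, -⟩ := id hu
  set f : Fin n → ℝ := fun i =>
    max (max (u₁ i / v₁ i) (v₁ i / u₁ i)) (max (u₂ i / v₂ i) (v₂ i / u₂ i)) with hf
  set t := Finset.univ.sup' Finset.univ_nonempty f with htdef
  have hft : ∀ i, f i ≤ t := fun i => Finset.le_sup' f (Finset.mem_univ i)
  have b1 : ∀ i, u₁ i ≤ t * v₁ i := by
    intro i
    have := le_trans (le_trans (le_max_left _ _) (le_max_left _ _)) (hft i)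
    rw [div_le_iff₀ (hv1 i)] at this; linarith [this]
  have b2 : ∀ i, v₁ i ≤ t * u₁ i := by
    intro i
    have := le_trans (le_trans (le_max_right _ _) (le_max_left _ _)) (hft i)
    rw [div_le_iff₀ (hu1 i)] at this; linarith [this]
  have b3 : ∀ i, u₂ i ≤ t * v₂ i := by
    intro i
    have := le_trans (le_trans (le_max_left _ _) (le_max_right _ _)) (hft i)
    rw [div_le_iff₀ (hv2 i)] at this; linarith [this]
  have b4 : ∀ i, v₂ i ≤ t * u₂ i := by
    intro i
    have := le_trans (le_trans (le_max_right _ _) (le_max_right _ _)) (hft i)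
    rw [div_le_iff₀ (hu2 i)] at this; linarith [this]
  have ht1 : 1 ≤ t := by
    set i0 : Fin n := ⟨0, hn⟩
    refine le_trans ?_ (hft i0)
    rcases le_total (v₁ i0) (u₁ i0) with h | h
    · exact le_trans (le_trans ((one_le_div (hv1 i0)).2 h) (le_max_left _ _)) (le_max_left _ _)
    · exact le_trans (le_trans ((one_le_div (hu1 i0)).2 h) (le_max_right _ _)) (le_max_left _ _)
  rcases eq_or_lt_of_le ht1 with heq | hlt
  · constructor <;> funext i
    · have h1 := b1 i; have h2 := b2 i
      rw [← heq, one_mul] at h1 h2; linarith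
    · have h3 := b3 i; have h4 := b4 i
      rw [← heq, one_mul] at h3 h4; linarith
  · exfalso
    obtain ⟨k, -, hk⟩ := Finset.exists_mem_eq_sup' (Finset.univ_nonempty (α := Fin n)) f
    rw [← htdef] at hk
    have hSt : ∀ i j, 0 ≤ S.transpose i j := fun i j => hS j i
    have hswap : S.transpose.transpose = S := Matrix.transpose_transpose S
    rcases max_choice (max (u₁ k / v₁ k) (v₁ k / u₁ k)) (max (u₂ k / v₂ k) (v₂ k / u₂ k)) with h | h <;>
      rw [hf] at hk
    · rcases max_choice (u₁ k / v₁ k) (v₁ k / u₁ k) with h' | h'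
      · have hkk : u₁ k = t * v₁ k := by
          have : u₁ k / v₁ k = t := by rw [hk]; simp only []; rw [h, h']
          rw [div_eq_iff (ne_of_gt (hv1 k))] at this; linarith
        exact dyson_key hS hτ hη hlt hv hu b1 b4 k hkk
      · have hkk : v₁ k = t * u₁ k := by
          have : v₁ k / u₁ k = t := by rw [hk]; simp only []; rw [h, h']
          rw [div_eq_iff (ne_of_gt (hu1 k))] at this; linarith
        exact dyson_key hS hτ hη hlt hu hv b2 b3 k hkk
    · rcases max_choice (u₂ k / v₂ k) (v₂ k / u₂ k) with h' | h'
      · have hkk : u₂ k = t * v₂ k := by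
          have : u₂ k / v₂ k = t := by rw [hk]; simp only []; rw [h, h']
          rw [div_eq_iff (ne_of_gt (hv2 k))] at this; linarith
        exact dyson_key hSt hτ hη hlt (dyson_swap hv) (dyson_swap hu)
          b3 (by simpa [hswap] using b2) k hkk
      · have hkk : v₂ k = t * u₂ k := by
          have : v₂ k / u₂ k = t := by rw [hk]; simp only []; rw [h, h']
          rw [div_eq_iff (ne_of_gt (hu2 k))] at this; linarith
        exact dyson_key hSt hτ hη hlt (dyson_swap hu) (dyson_swap hv)
          b4 (by simpa [hswap] using b1) k hkk

lemma dyson_exists {n : ℕ} (hn : 0 < n) {su : ℝ} {S : Matrix (Fin n) (Fin n) ℝ}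
    (hS0 : ∀ i j, 0 ≤ S i j) (hSu : ∀ i j, S i j ≤ su / n) (hsu : 0 ≤ su)
    {τ η : ℝ} (hτ : 0 ≤ τ) (hη : 0 < η) :
    ∃ p : (Fin n → ℝ) × (Fin n → ℝ), IsDysonSolution S τ η p.1 p.2 := by
  have hS0t : ∀ i j, 0 ≤ S.transpose i j := fun i j => hS0 j i
  have hSut : ∀ i j, S.transpose i j ≤ su / n := fun i j => hSu j i
  set U : ℝ := 1 / η with hUdef
  set M : ℝ := η + su * U + τ / η with hMdef
  set L : ℝ := 1 / M with hLdef
  have hU : 0 < U := by positivity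
  have hM : 0 < M := by
    have : 0 ≤ su * U := by positivity
    have : 0 ≤ τ / η := by positivity
    rw [hMdef]; linarith
  have hL : 0 < L := by rw [hLdef]; positivity
  have hηM : η ≤ M := by
    have : 0 ≤ su * U := by positivity
    have : 0 ≤ τ / η := by positivity
    rw [hMdef]; linarith
  have hLU : L ≤ U := by
    rw [hLdef, hUdef]
    exact one_div_le_one_div_of_le hη hηM
  -- the iteration map
  set D1 : ((Fin n → ℝ) × (Fin n → ℝ)) → Fin n → ℝ :=
    fun p i => η + S.mulVec p.2 i + τ / (η + S.transpose.mulVec p.1 i) with hD1def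
  set D2 : ((Fin n → ℝ) × (Fin n → ℝ)) → Fin n → ℝ :=
    fun p i => η + S.transpose.mulVec p.1 i + τ / (η + S.mulVec p.2 i) with hD2def
  set Φ : ((Fin n → ℝ) × (Fin n → ℝ)) → ((Fin n → ℝ) × (Fin n → ℝ)) :=
    fun p => (fun i => 1 / D1 p i, fun i => 1 / D2 p i) with hΦdef
  set Box : ((Fin n → ℝ) × (Fin n → ℝ)) → Prop :=
    fun p => ∀ i, (L ≤ p.1 i ∧ p.1 i ≤ U) ∧ (L ≤ p.2 i ∧ p.2 i ≤ U) with hBoxdef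
  -- bounds on denominators in the box
  have hDbound : ∀ p, Box p → ∀ i,
      (η ≤ D1 p i ∧ D1 p i ≤ M) ∧ (η ≤ D2 p i ∧ D2 p i ≤ M) := by
    intro p hp i
    have hp10 : ∀ j, 0 ≤ p.1 j := fun j => le_trans hL.le ((hp j).1.1)
    have hp1U : ∀ j, p.1 j ≤ U := fun j => (hp j).1.2
    have hp20 : ∀ j, 0 ≤ p.2 j := fun j => le_trans hL.le ((hp j).2.1)
    have hp2U : ∀ j, p.2 j ≤ U := fun j => (hp j).2.2
    have hmv1 : 0 ≤ S.transpose.mulVec p.1 i := mv_nonneg hS0t hp10 i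
    have hmv2 : 0 ≤ S.mulVec p.2 i := mv_nonneg hS0 hp20 i
    have hmv1u : S.transpose.mulVec p.1 i ≤ su * U := mv_upper hSut hsu hn hp10 hp1U i
    have hmv2u : S.mulVec p.2 i ≤ su * U := mv_upper hSu hsu hn hp20 hp2U i
    have hden1 : 0 < η + S.transpose.mulVec p.1 i := by linarith
    have hden2 : 0 < η + S.mulVec p.2 i := by linarith
    have ht1 : 0 ≤ τ / (η + S.transpose.mulVec p.1 i) := by positivity
    have ht2 : 0 ≤ τ / (η + S.mulVec p.2 i) := by positivity
    have ht1' : τ / (η + S.transpose.mulVec p.1 i) ≤ τ / η :=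
      div_le_div_of_nonneg_left hτ hη (by linarith) |>.trans_eq rfl
    have ht2' : τ / (η + S.mulVec p.2 i) ≤ τ / η :=
      div_le_div_of_nonneg_left hτ hη (by linarith)
    constructor
    · constructor
      · rw [hD1def]; dsimp only; linarith
      · rw [hD1def, hMdef]; dsimp only; linarith
    · constructor
      · rw [hD2def]; dsimp only; linarith
      · rw [hD2def, hMdef]; dsimp only; linarith
  -- the box is invariant
  have hInv : ∀ p, Box p → Box (Φ p) := by
    intro p hp i
    obtain ⟨⟨h1, h2⟩, h3, h4⟩ := hDbound p hp i
    have hD1pos : 0 < D1 p i := lt_of_lt_of_le hη h1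
    have hD2pos : 0 < D2 p i := lt_of_lt_of_le hη h3
    refine ⟨⟨?_, ?_⟩, ?_, ?_⟩
    · exact one_div_le_one_div_of_le hD1pos h2
    · exact one_div_le_one_div_of_le hη h1
    · exact one_div_le_one_div_of_le hD2pos h4
    · exact one_div_le_one_div_of_le hη h3
  -- monotonicity (with the order reversed in the second component)
  have hMono : ∀ p q, Box p → Box q → (∀ i, p.1 i ≤ q.1 i) → (∀ i, q.2 i ≤ p.2 i) →
      (∀ i, (Φ p).1 i ≤ (Φ q).1 i) ∧ (∀ i, (Φ q).2 i ≤ (Φ p).2 i) := by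
    intro p q hp hq h1 h2
    have hp10 : ∀ j, 0 ≤ p.1 j := fun j => le_trans hL.le ((hp j).1.1)
    have hq10 : ∀ j, 0 ≤ q.1 j := fun j => le_trans hL.le ((hq j).1.1)
    have hq20 : ∀ j, 0 ≤ q.2 j := fun j => le_trans hL.le ((hq j).2.1)
    have key1 : ∀ i, D1 q i ≤ D1 p i := by
      intro i
      have ha : S.mulVec q.2 i ≤ S.mulVec p.2 i := mv_mono hS0 h2 i
      have hb : S.transpose.mulVec p.1 i ≤ S.transpose.mulVec q.1 i := mv_mono hS0t h1 i
      have hdp : 0 < η + S.transpose.mulVec p.1 i :=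
        lt_of_lt_of_le hη (le_add_of_nonneg_right (mv_nonneg hS0t hp10 i))
      have hc : τ / (η + S.transpose.mulVec q.1 i) ≤ τ / (η + S.transpose.mulVec p.1 i) :=
        div_le_div_of_nonneg_left hτ hdp (by linarith)
      rw [hD1def]; dsimp only; linarith
    have key2 : ∀ i, D2 p i ≤ D2 q i := by
      intro i
      have ha : S.transpose.mulVec p.1 i ≤ S.transpose.mulVec q.1 i := mv_mono hS0t h1 i
      have hb : S.mulVec q.2 i ≤ S.mulVec p.2 i := mv_mono hS0 h2 i
      have hdq : 0 < η + S.mulVec q.2 i :=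
        lt_of_lt_of_le hη (le_add_of_nonneg_right (mv_nonneg hS0 hq20 i))
      have hc : τ / (η + S.mulVec p.2 i) ≤ τ / (η + S.mulVec q.2 i) :=
        div_le_div_of_nonneg_left hτ hdq (by linarith)
      rw [hD2def]; dsimp only; linarith
    constructor
    · intro i
      have := (hDbound q hq i).1.1
      exact one_div_le_one_div_of_le (lt_of_lt_of_le hη this) (key1 i)
    · intro i
      have := (hDbound p hp i).2.1
      exact one_div_le_one_div_of_le (lt_of_lt_of_le hη this) (key2 i)
  -- the iteration sequence
  set seq : ℕ → ((Fin n → ℝ) × (Fin n → ℝ)) :=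
    fun k => Φ^[k] ((fun _ => L), (fun _ => U)) with hseqdef
  have hseq_succ : ∀ k, seq (k + 1) = Φ (seq k) := by
    intro k; rw [hseqdef]; exact Function.iterate_succ_apply' Φ k _
  have hseq0 : seq 0 = ((fun _ => L), (fun _ => U)) := rfl
  have hInvAll : ∀ k, Box (seq k) ∧
      (∀ i, (seq k).1 i ≤ (seq (k + 1)).1 i) ∧ (∀ i, (seq (k + 1)).2 i ≤ (seq k).2 i) := by
    intro k
    induction k with
    | zero =>
      have hbox0 : Box (seq 0) := by
        rw [hseq0]; intro i; exact ⟨⟨le_refl L, hLU⟩, hLU, le_refl U⟩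
      have hbox1 : Box (seq 1) := by rw [hseq_succ 0]; exact hInv _ hbox0
      refine ⟨hbox0, fun i => ?_, fun i => ?_⟩
      · rw [hseq0]; exact (hbox1 i).1.1
      · rw [hseq0]; exact (hbox1 i).2.2
    | succ k ih =>
      obtain ⟨hbox, hle1, hle2⟩ := ih
      have hbox' : Box (seq (k + 1)) := by rw [hseq_succ k]; exact hInv _ hbox
      have := hMono (seq k) (seq (k + 1)) hbox hbox' hle1 hle2
      refine ⟨hbox', fun i => ?_, fun i => ?_⟩
      · rw [hseq_succ k, hseq_succ (k + 1)]; exact this.1 i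
      · rw [hseq_succ k, hseq_succ (k + 1)]; exact this.2 i
  -- convergence of each coordinate
  set v₁ : Fin n → ℝ := fun i => ⨆ k, (seq k).1 i with hv₁def
  set v₂ : Fin n → ℝ := fun i => ⨅ k, (seq k).2 i with hv₂def
  have mono1 : ∀ i, Monotone fun k => (seq k).1 i :=
    fun i => monotone_nat_of_le_succ fun k => (hInvAll k).2.1 i
  have anti2 : ∀ i, Antitone fun k => (seq k).2 i :=
    fun i => antitone_nat_of_succ_le fun k => (hInvAll k).2.2 i
  have bdd1 : ∀ i, BddAbove (Set.range fun k => (seq k).1 i) := by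
    intro i
    refine ⟨U, ?_⟩
    rintro x ⟨k, rfl⟩
    exact ((hInvAll k).1 i).1.2
  have bdd2 : ∀ i, BddBelow (Set.range fun k => (seq k).2 i) := by
    intro i
    refine ⟨L, ?_⟩
    rintro x ⟨k, rfl⟩
    exact ((hInvAll k).1 i).2.1
  have tendsto1 : ∀ i, Tendsto (fun k => (seq k).1 i) atTop (𝓝 (v₁ i)) :=
    fun i => tendsto_atTop_ciSup (mono1 i) (bdd1 i)
  have tendsto2 : ∀ i, Tendsto (fun k => (seq k).2 i) atTop (𝓝 (v₂ i)) :=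
    fun i => tendsto_atTop_ciInf (anti2 i) (bdd2 i)
  -- bounds on the limit
  have hvbox : Box (v₁, v₂) := by
    intro i
    refine ⟨⟨?_, ?_⟩, ?_, ?_⟩
    · calc L = (seq 0).1 i := rfl
        _ ≤ v₁ i := le_ciSup (bdd1 i) 0
    · exact ciSup_le fun k => ((hInvAll k).1 i).1.2
    · exact le_ciInf fun k => ((hInvAll k).1 i).2.1
    · calc v₂ i ≤ (seq 0).2 i := ciInf_le (bdd2 i) 0
        _ = U := rfl
  -- limits of the matrix-vector products
  have hmv2lim : ∀ i, Tendsto (fun k => S.mulVec (seq k).2 i) atTop (𝓝 (S.mulVec v₂ i)) := by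
    intro i
    simp only [mv_apply']
    exact tendsto_finset_sum _ fun j _ => (tendsto2 j).const_mul (S i j)
  have hmv1lim : ∀ i, Tendsto (fun k => S.transpose.mulVec (seq k).1 i) atTop
      (𝓝 (S.transpose.mulVec v₁ i)) := by
    intro i
    simp only [mv_apply']
    exact tendsto_finset_sum _ fun j _ => (tendsto1 j).const_mul (S.transpose i j)
  -- limit denominators
  have hbnd := hDbound (v₁, v₂) hvbox
  have hden1 : ∀ i, 0 < η + S.transpose.mulVec v₁ i := by
    intro i
    have : 0 ≤ S.transpose.mulVec v₁ i :=
      mv_nonneg hS0t (fun j => le_trans hL.le ((hvbox j).1.1)) i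
    linarith
  have hden2 : ∀ i, 0 < η + S.mulVec v₂ i := by
    intro i
    have : 0 ≤ S.mulVec v₂ i :=
      mv_nonneg hS0 (fun j => le_trans hL.le ((hvbox j).2.1)) i
    linarith
  have hD1lim : ∀ i, Tendsto (fun k => D1 (seq k) i) atTop (𝓝 (D1 (v₁, v₂) i)) := by
    intro i
    rw [hD1def]; dsimp only
    exact (tendsto_const_nhds.add (hmv2lim i)).add
      (tendsto_const_nhds.div (tendsto_const_nhds.add (hmv1lim i)) (ne_of_gt (hden1 i)))
  have hD2lim : ∀ i, Tendsto (fun k => D2 (seq k) i) atTop (𝓝 (D2 (v₁, v₂) i)) := by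
    intro i
    rw [hD2def]; dsimp only
    exact (tendsto_const_nhds.add (hmv1lim i)).add
      (tendsto_const_nhds.div (tendsto_const_nhds.add (hmv2lim i)) (ne_of_gt (hden2 i)))
  have hD1pos : ∀ i, 0 < D1 (v₁, v₂) i := fun i => lt_of_lt_of_le hη (hbnd i).1.1
  have hD2pos : ∀ i, 0 < D2 (v₁, v₂) i := fun i => lt_of_lt_of_le hη (hbnd i).2.1
  -- fixed point property
  have hfix1 : ∀ i, v₁ i = 1 / D1 (v₁, v₂) i := by
    intro i
    have ha : Tendsto (fun k => (seq (k + 1)).1 i) atTop (𝓝 (v₁ i)) :=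
      (tendsto1 i).comp (tendsto_add_atTop_nat 1)
    have hb : Tendsto (fun k => (seq (k + 1)).1 i) atTop (𝓝 (1 / D1 (v₁, v₂) i)) := by
      have heq : ∀ k, (seq (k + 1)).1 i = 1 / D1 (seq k) i := by
        intro k; rw [hseq_succ k]
      simp only [heq]
      exact tendsto_const_nhds.div (hD1lim i) (ne_of_gt (hD1pos i))
    exact tendsto_nhds_unique ha hb
  have hfix2 : ∀ i, v₂ i = 1 / D2 (v₁, v₂) i := by
    intro i
    have ha : Tendsto (fun k => (seq (k + 1)).2 i) atTop (𝓝 (v₂ i)) :=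
      (tendsto2 i).comp (tendsto_add_atTop_nat 1)
    have hb : Tendsto (fun k => (seq (k + 1)).2 i) atTop (𝓝 (1 / D2 (v₁, v₂) i)) := by
      have heq : ∀ k, (seq (k + 1)).2 i = 1 / D2 (seq k) i := by
        intro k; rw [hseq_succ k]
      simp only [heq]
      exact tendsto_const_nhds.div (hD2lim i) (ne_of_gt (hD2pos i))
    exact tendsto_nhds_unique ha hb
  refine ⟨(v₁, v₂), fun i => lt_of_lt_of_le hL ((hvbox i).1.1),
    fun i => lt_of_lt_of_le hL ((hvbox i).2.1), fun i => ?_, fun i => ?_⟩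
  · dsimp only; rw [hfix1 i, one_div_one_div]
  · dsimp only; rw [hfix2 i, one_div_one_div]

/-- **Existence and uniqueness for the Dyson equation.**
For every flat variance matrix `S`, every `τ ≥ 0` and every `η > 0` there is a
unique pair of positive vectors solving the Dyson equation; consequently, for
every `τ ≥ 0` there is a unique pair of functions `(0,∞) → (0,∞)ⁿ × (0,∞)ⁿ`
solving the equations for all `η > 0`. -/
theorem existence_uniqueness_dyson_equation
    (n : ℕ) (hn : 1 ≤ n) (sl su : ℝ) (hsl : 0 < sl) (hslsu : sl ≤ su)
    (S : Matrix (Fin n) (Fin n) ℝ)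
    (hS : ∀ i j, sl / n ≤ S i j ∧ S i j ≤ su / n) :
    (∀ τ : ℝ, 0 ≤ τ → ∀ η : ℝ, 0 < η →
      ∃! p : (Fin n → ℝ) × (Fin n → ℝ), IsDysonSolution S τ η p.1 p.2) ∧
    (∀ τ : ℝ, 0 ≤ τ →
      ∃! v : {η : ℝ // 0 < η} → (Fin n → ℝ) × (Fin n → ℝ),
        ∀ η : {η : ℝ // 0 < η}, IsDysonSolution S τ η.1 (v η).1 (v η).2) := by
  have hn0 : 0 < n := hn
  have hS0 : ∀ i j, 0 ≤ S i j := fun i j =>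
    le_trans (div_nonneg hsl.le (Nat.cast_nonneg n)) (hS i j).1
  have hSu : ∀ i j, S i j ≤ su / n := fun i j => (hS i j).2
  have hsu : 0 ≤ su := le_trans hsl.le hslsu
  have part1 : ∀ τ : ℝ, 0 ≤ τ → ∀ η : ℝ, 0 < η →
      ∃! p : (Fin n → ℝ) × (Fin n → ℝ), IsDysonSolution S τ η p.1 p.2 := by
    intro τ hτ η hη
    obtain ⟨p, hp⟩ := dyson_exists hn0 hS0 hSu hsu hτ hη
    refine ⟨p, hp, ?_⟩
    rintro ⟨q1, q2⟩ hq
    obtain ⟨h1, h2⟩ := dyson_unique hn0 hS0 hτ hη hq hp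
    exact Prod.ext h1 h2
  refine ⟨part1, ?_⟩
  intro τ hτ
  refine ⟨fun η => (part1 τ hτ η.1 η.2).exists.choose,
    fun η => (part1 τ hτ η.1 η.2).exists.choose_spec, ?_⟩
  intro w hw
  funext η
  exact (part1 τ hτ η.1 η.2).unique (hw η) (part1 τ hτ η.1 η.2).exists.choose_spec
end

section
/- For every τ ≥ 0 and η > 0, the unique positive solution (v₁^τ(η), v₂^τ(η)) of the Dyson equation satisfies ⟨v₁^τ(η)⟩ = ⟨v₂^τ(η)⟩, i.e., n^{-1}Σ_{i=1}^n (v₁^τ(η))_i = n^{-1}Σ_{i=1}^n (v₂^τ(η))_i. -/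
open Matrix

/-- The average `⟨w⟩ = n⁻¹ ∑ᵢ wᵢ` of a vector. -/
noncomputable def avg {n : ℕ} (w : Fin n → ℝ) : ℝ := (∑ i, w i) / n

/-- **Equality of the averages of the two components of the Dyson solution:**
for every `τ ≥ 0` and `η > 0`, the (unique) positive solution `(v₁, v₂)` of the
Dyson equation satisfies `⟨v₁⟩ = ⟨v₂⟩`. -/
theorem avg_v1_eq_avg_v2
    (n : ℕ) (hn : 1 ≤ n) (sl su : ℝ) (hsl : 0 < sl) (hslsu : sl ≤ su)
    (S : Matrix (Fin n) (Fin n) ℝ)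
    (hS : ∀ i j, sl / n ≤ S i j ∧ S i j ≤ su / n)
    (τ : ℝ) (hτ : 0 ≤ τ) (η : ℝ) (hη : 0 < η)
    (v₁ v₂ : Fin n → ℝ) (hv : IsDysonSolution S τ η v₁ v₂) :
    avg v₁ = avg v₂ := by
  obtain ⟨h1, h2, e1, e2⟩ := hv
  have hn0 : (0:ℝ) < n := by exact_mod_cast hn
  have hSnn : ∀ i j, 0 ≤ S i j := fun i j =>
    le_trans (by positivity) (hS i j).1
  set a : Fin n → ℝ := fun i => η + S.transpose.mulVec v₁ i with ha
  set b : Fin n → ℝ := fun i => η + S.mulVec v₂ i with hb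
  have hapos : ∀ i, 0 < a i := by
    intro i
    have : 0 ≤ S.transpose.mulVec v₁ i := by
      simp only [Matrix.mulVec, dotProduct, Matrix.transpose_apply]
      exact Finset.sum_nonneg fun j _ => mul_nonneg (hSnn j i) (h1 j).le
    simp only [ha]; linarith
  have hbpos : ∀ i, 0 < b i := by
    intro i
    have : 0 ≤ S.mulVec v₂ i := by
      simp only [Matrix.mulVec, dotProduct]
      exact Finset.sum_nonneg fun j _ => mul_nonneg (hSnn i j) (h2 j).le
    simp only [hb]; linarith
  -- pointwise identity: v₁ i * b i = v₂ i * a i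
  have hptw : ∀ i, v₁ i * b i = v₂ i * a i := by
    intro i
    have H1 := e1 i
    have H2 := e2 i
    have ha' := (hapos i).ne'
    have hb' := (hbpos i).ne'
    have hv1 := (h1 i).ne'
    have hv2 := (h2 i).ne'
    -- H1 : 1 / v₁ i = b i + τ / a i, H2 : 1 / v₂ i = a i + τ / b i
    have H1' : a i = v₁ i * (a i * b i + τ) := by
      field_simp [show η + (Sᵀ *ᵥ v₁) i ≠ 0 from ha'] at H1
      simp only [ha, hb]
      linear_combination H1
    have H2' : b i = v₂ i * (a i * b i + τ) := by
      field_simp [show η + (S *ᵥ v₂) i ≠ 0 from hb'] at H2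
      simp only [ha, hb]
      linear_combination H2
    have habτ : a i * b i + τ ≠ 0 :=
      (add_pos_of_pos_of_nonneg (mul_pos (hapos i) (hbpos i)) hτ).ne'
    have : v₁ i * b i * (a i * b i + τ) = v₂ i * a i * (a i * b i + τ) := by
      linear_combination (-(b i)) * H1' + a i * H2'
    exact mul_right_cancel₀ habτ this
  -- duality of the cross terms
  have hcross : ∑ i, v₁ i * S.mulVec v₂ i = ∑ i, v₂ i * S.transpose.mulVec v₁ i := by
    simp only [Matrix.mulVec, dotProduct, Matrix.transpose_apply, Finset.mul_sum]
    rw [Finset.sum_comm]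
    apply Finset.sum_congr rfl; intro i _
    apply Finset.sum_congr rfl; intro j _
    ring
  -- τ terms coincide
  have hτterm : ∑ i, v₁ i / a i = ∑ i, v₂ i / b i := by
    apply Finset.sum_congr rfl; intro i _
    rw [div_eq_div_iff (hapos i).ne' (hbpos i).ne']
    exact hptw i
  -- summed equations
  have key1 : η * ∑ i, v₁ i + ∑ i, v₁ i * S.mulVec v₂ i + τ * ∑ i, v₁ i / a i = n := by
    have : ∀ i ∈ Finset.univ, v₁ i * η + v₁ i * S.mulVec v₂ i + τ * (v₁ i / a i) = 1 := by
      intro i _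
      have : v₁ i * (1 / v₁ i) = 1 := by
        rw [mul_one_div]; exact div_self (h1 i).ne'
      rw [e1 i] at this
      rw [← this]; ring
    calc η * ∑ i, v₁ i + ∑ i, v₁ i * S.mulVec v₂ i + τ * ∑ i, v₁ i / a i
        = ∑ i, (v₁ i * η + v₁ i * S.mulVec v₂ i + τ * (v₁ i / a i)) := by
          rw [Finset.sum_add_distrib, Finset.sum_add_distrib, Finset.mul_sum,
            Finset.mul_sum]
          congr 1
          · congr 1
            apply Finset.sum_congr rfl; intro i _; ring
      _ = ∑ _i : Fin n, (1:ℝ) := Finset.sum_congr rfl this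
      _ = n := by simp
  have key2 : η * ∑ i, v₂ i + ∑ i, v₂ i * S.transpose.mulVec v₁ i + τ * ∑ i, v₂ i / b i = n := by
    have : ∀ i ∈ Finset.univ, v₂ i * η + v₂ i * S.transpose.mulVec v₁ i + τ * (v₂ i / b i) = 1 := by
      intro i _
      have : v₂ i * (1 / v₂ i) = 1 := by
        rw [mul_one_div]; exact div_self (h2 i).ne'
      rw [e2 i] at this
      rw [← this]; ring
    calc η * ∑ i, v₂ i + ∑ i, v₂ i * S.transpose.mulVec v₁ i + τ * ∑ i, v₂ i / b i
        = ∑ i, (v₂ i * η + v₂ i * S.transpose.mulVec v₁ i + τ * (v₂ i / b i)) := by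
          rw [Finset.sum_add_distrib, Finset.sum_add_distrib, Finset.mul_sum,
            Finset.mul_sum]
          congr 1
          · congr 1
            apply Finset.sum_congr rfl; intro i _; ring
      _ = ∑ _i : Fin n, (1:ℝ) := Finset.sum_congr rfl this
      _ = n := by simp
  have hsum : ∑ i, v₁ i = ∑ i, v₂ i := by
    have hη' : η ≠ 0 := hη.ne'
    have : η * ∑ i, v₁ i = η * ∑ i, v₂ i := by
      rw [hcross, hτterm] at key1
      linarith
    exact mul_left_cancel₀ hη' this
  simp only [avg, hsum]
end

section
/- Large-η behaviour of the Dyson solution: assume the spectral radius of S equals 1 and fix τ^* > 0. There exist constants c, C > 0, depending only on s_*, s^* and τ^*, such that for all η ≥ 1, all τ ∈ [0, τ^*], every index i and a = 1, 2, the unique positive solution satisfies c/η ≤ (v_a^τ(η))_i ≤ C/η. -/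
open Matrix

/-- The spectral radius of a real matrix (as a real number), computed via the
complex spectrum. -/
noncomputable def specRad {n : ℕ} (S : Matrix (Fin n) (Fin n) ℝ) : ℝ :=
  (spectralRadius ℂ (S.map (algebraMap ℝ ℂ))).toReal

private lemma aux_mulVec_nonneg {n : ℕ} {S : Matrix (Fin n) (Fin n) ℝ}
    (hS : ∀ i j, 0 ≤ S i j) {w : Fin n → ℝ} (hw : ∀ j, 0 ≤ w j) (i : Fin n) :
    0 ≤ S.mulVec w i := by
  simp only [Matrix.mulVec, dotProduct]
  exact Finset.sum_nonneg fun j _ => mul_nonneg (hS i j) (hw j)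

private lemma aux_mulVec_le {n : ℕ} (hn : 1 ≤ n) {S : Matrix (Fin n) (Fin n) ℝ} {su η : ℝ}
    (hsu : 0 ≤ su) (hη : 0 < η) (hS : ∀ i j, S i j ≤ su / n) {w : Fin n → ℝ}
    (hw0 : ∀ j, 0 ≤ w j) (hw : ∀ j, w j ≤ 1 / η) (i : Fin n) :
    S.mulVec w i ≤ su / η := by
  have hn0 : (0:ℝ) < (n:ℝ) := by exact_mod_cast hn
  have hsun : 0 ≤ su / (n:ℝ) := div_nonneg hsu hn0.le
  have : S.mulVec w i ≤ ∑ _j : Fin n, (su / n) * (1 / η) := by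
    simp only [Matrix.mulVec, dotProduct]
    exact Finset.sum_le_sum fun j _ =>
      mul_le_mul (hS i j) (hw j) (hw0 j) hsun
  refine this.trans (le_of_eq ?_)
  rw [Finset.sum_const, Finset.card_univ, Fintype.card_fin, nsmul_eq_mul]
  field_simp

/-- **Large-`η` behaviour of the Dyson solution:** if `ρ(S) = 1`, then uniformly
for `η ≥ 1` and `τ ∈ [0, τ⁺]` the positive solution satisfies `v_a ∼ 1/η`,
with constants depending only on `s⁎`, `s⁺` and `τ⁺`. -/
theorem dyson_solution_large_eta
    (sl su τsup : ℝ) (hsl : 0 < sl) (hslsu : sl ≤ su) (hτsup : 0 < τsup) :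
    ∃ c > (0:ℝ), ∃ C > (0:ℝ),
      ∀ (n : ℕ), 1 ≤ n → ∀ S : Matrix (Fin n) (Fin n) ℝ,
        (∀ i j, sl / n ≤ S i j ∧ S i j ≤ su / n) → specRad S = 1 →
        ∀ η : ℝ, 1 ≤ η → ∀ τ : ℝ, τ ∈ Set.Icc (0:ℝ) τsup →
          ∀ v₁ v₂ : Fin n → ℝ, IsDysonSolution S τ η v₁ v₂ →
            ∀ i, (c / η ≤ v₁ i ∧ v₁ i ≤ C / η) ∧ (c / η ≤ v₂ i ∧ v₂ i ≤ C / η) := by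
  have hsu : 0 < su := hsl.trans_le hslsu
  have hM : (0:ℝ) < 1 + su + τsup := by linarith
  refine ⟨1 / (1 + su + τsup), one_div_pos.mpr hM, 1, one_pos, ?_⟩
  intro n hn S hS _ η hη τ hτ v₁ v₂ hsol i
  obtain ⟨hv₁, hv₂, heq₁, heq₂⟩ := hsol
  obtain ⟨hτ0, hττ⟩ := hτ
  have hη0 : (0:ℝ) < η := lt_of_lt_of_le one_pos hη
  have hn0 : (0:ℝ) < (n:ℝ) := by exact_mod_cast hn
  have hSpos : ∀ i j, 0 ≤ S i j := fun i j =>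
    (div_nonneg hsl.le hn0.le).trans (hS i j).1
  have hSTpos : ∀ i j, 0 ≤ S.transpose i j := fun i j => hSpos j i
  -- upper bounds
  have hub : ∀ (v w : Fin n → ℝ) (T : Matrix (Fin n) (Fin n) ℝ),
      (∀ i j, 0 ≤ T i j) → (∀ i, 0 < v i) → (∀ i, 0 < w i) →
      (∀ i, 1 / v i = η + T.mulVec w i + τ / (η + T.transpose.mulVec v i)) →
      ∀ i, v i ≤ 1 / η := by
    intro v w T hT hv hw heq i
    have hX : 0 ≤ T.transpose.mulVec v i :=
      aux_mulVec_nonneg (fun a b => hT b a) (fun j => (hv j).le) i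
    have hA : 0 ≤ T.mulVec w i := aux_mulVec_nonneg hT (fun j => (hw j).le) i
    have hB : 0 ≤ τ / (η + T.transpose.mulVec v i) :=
      div_nonneg hτ0 (by linarith)
    have h1 : η ≤ 1 / v i := by rw [heq i]; linarith
    have h2 : η * v i ≤ 1 := (le_div_iff₀ (hv i)).mp h1
    rw [le_div_iff₀ hη0]
    linarith [mul_comm η (v i)]
  have hub₁ : ∀ j, v₁ j ≤ 1 / η := hub v₁ v₂ S hSpos hv₁ hv₂ heq₁
  have hub₂ : ∀ j, v₂ j ≤ 1 / η := by
    refine hub v₂ v₁ S.transpose hSTpos hv₂ hv₁ ?_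
    intro j
    rw [Matrix.transpose_transpose]
    exact heq₂ j
  -- lower bounds
  have hlb : ∀ (v w : Fin n → ℝ) (T : Matrix (Fin n) (Fin n) ℝ),
      (∀ i j, 0 ≤ T i j) → (∀ i j, T i j ≤ su / n) →
      (∀ i, 0 < v i) → (∀ i, 0 < w i) → (∀ j, w j ≤ 1 / η) →
      (∀ i, 1 / v i = η + T.mulVec w i + τ / (η + T.transpose.mulVec v i)) →
      ∀ i, 1 / (1 + su + τsup) / η ≤ v i := by
    intro v w T hT hTu hv hw hwu heq i
    have hX : 0 ≤ T.transpose.mulVec v i :=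
      aux_mulVec_nonneg (fun a b => hT b a) (fun j => (hv j).le) i
    have hA : T.mulVec w i ≤ su / η :=
      aux_mulVec_le hn hsu.le hη0 hTu (fun j => (hw j).le) hwu i
    have hA' : su / η ≤ su := div_le_self hsu.le hη
    have hB : τ / (η + T.transpose.mulVec v i) ≤ τsup := by
      have h1 : τ / (η + T.transpose.mulVec v i) ≤ τ :=
        div_le_self hτ0 (by linarith)
      linarith
    have h1 : 1 / v i ≤ (1 + su + τsup) * η := by
      rw [heq i]
      nlinarith
    have hMη : (0:ℝ) < (1 + su + τsup) * η := mul_pos hM hη0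
    have := (one_div_le (hv i) hMη).mp h1
    rwa [div_div]
  have hlb₁ : 1 / (1 + su + τsup) / η ≤ v₁ i :=
    hlb v₁ v₂ S hSpos (fun a b => (hS a b).2) hv₁ hv₂ hub₂ heq₁ i
  have hlb₂ : 1 / (1 + su + τsup) / η ≤ v₂ i := by
    refine hlb v₂ v₁ S.transpose hSTpos (fun a b => (hS b a).2) hv₂ hv₁ hub₁ ?_ i
    intro j
    rw [Matrix.transpose_transpose]
    exact heq₂ j
  exact ⟨⟨hlb₁, hub₁ i⟩, ⟨hlb₂, hub₂ i⟩⟩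
end

section
/- Inside regime behaviour of the Dyson solution: assume the spectral radius of S equals 1. There exist constants c, C > 0, depending only on s_* and s^*, such that for all η ∈ (0,1], all τ ∈ [0,1], every index i and a = 1, 2, the unique positive solution satisfies c·(η^{1/3} + (1−τ)^{1/2}) ≤ (v_a^τ(η))_i ≤ C·(η^{1/3} + (1−τ)^{1/2}). -/
open Matrix

open Filter Topology Finset

attribute [local instance] Matrix.linftyOpNormedAddCommGroup Matrix.linftyOpNormedRing
  Matrix.linftyOpNormedAlgebra

namespace DysonAux

variable {n : ℕ}

lemma map_pow_comm (S : Matrix (Fin n) (Fin n) ℝ) (k : ℕ) :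
    (S.map (algebraMap ℝ ℂ)) ^ k = (S ^ k).map (algebraMap ℝ ℂ) := by
  have h : S.map (algebraMap ℝ ℂ) = (algebraMap ℝ ℂ).mapMatrix S := rfl
  rw [h, ← map_pow]; rfl

lemma pow_entry_nonneg {S : Matrix (Fin n) (Fin n) ℝ} (hS : ∀ i j, 0 ≤ S i j) (k : ℕ) :
    ∀ i j, 0 ≤ (S ^ k) i j := by
  induction k with
  | zero => intro i j; rw [pow_zero]; by_cases h : i = j <;> simp [Matrix.one_apply, h]
  | succ k ih =>
      intro i j
      rw [pow_succ, Matrix.mul_apply]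
      exact Finset.sum_nonneg fun l _ => mul_nonneg (ih i l) (hS l j)

lemma pow_mulVec_le {S : Matrix (Fin n) (Fin n) ℝ} (hS : ∀ i j, 0 ≤ S i j)
    {u : Fin n → ℝ} {r : ℝ} (hr : 0 ≤ r)
    (h : ∀ i, S.mulVec u i ≤ r * u i) (k : ℕ) :
    ∀ i, (S ^ k).mulVec u i ≤ r ^ k * u i := by
  induction k with
  | zero => intro i; simp [Matrix.one_mulVec]
  | succ k ih =>
      intro i
      have h1 : (S ^ (k + 1)).mulVec u i = S.mulVec ((S ^ k).mulVec u) i := by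
        rw [pow_succ', ← Matrix.mulVec_mulVec]
      rw [h1]
      have h2 : S.mulVec ((S ^ k).mulVec u) i ≤ S.mulVec (fun j => r ^ k * u j) i := by
        simp only [Matrix.mulVec, dotProduct]
        exact Finset.sum_le_sum fun j _ => mul_le_mul_of_nonneg_left (ih j) (hS i j)
      have h3 : S.mulVec (fun j => r ^ k * u j) i = r ^ k * S.mulVec u i := by
        simp only [Matrix.mulVec, dotProduct, Finset.mul_sum]
        exact Finset.sum_congr rfl fun j _ => by ring
      calc S.mulVec ((S ^ k).mulVec u) i ≤ r ^ k * S.mulVec u i := by rw [← h3]; exact h2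
        _ ≤ r ^ k * (r * u i) := mul_le_mul_of_nonneg_left (h i) (pow_nonneg hr k)
        _ = r ^ (k + 1) * u i := by ring

lemma pow_mulVec_ge {S : Matrix (Fin n) (Fin n) ℝ} (hS : ∀ i j, 0 ≤ S i j)
    {u : Fin n → ℝ} {r : ℝ} (hr : 0 ≤ r)
    (h : ∀ i, r * u i ≤ S.mulVec u i) (k : ℕ) :
    ∀ i, r ^ k * u i ≤ (S ^ k).mulVec u i := by
  induction k with
  | zero => intro i; simp [Matrix.one_mulVec]
  | succ k ih =>
      intro i
      have h1 : (S ^ (k + 1)).mulVec u i = S.mulVec ((S ^ k).mulVec u) i := by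
        rw [pow_succ', ← Matrix.mulVec_mulVec]
      rw [h1]
      have h2 : S.mulVec (fun j => r ^ k * u j) i ≤ S.mulVec ((S ^ k).mulVec u) i := by
        simp only [Matrix.mulVec, dotProduct]
        exact Finset.sum_le_sum fun j _ => mul_le_mul_of_nonneg_left (ih j) (hS i j)
      have h3 : S.mulVec (fun j => r ^ k * u j) i = r ^ k * S.mulVec u i := by
        simp only [Matrix.mulVec, dotProduct, Finset.mul_sum]
        exact Finset.sum_congr rfl fun j _ => by ring
      calc r ^ (k + 1) * u i = r ^ k * (r * u i) := by ring
        _ ≤ r ^ k * S.mulVec u i := mul_le_mul_of_nonneg_left (h i) (pow_nonneg hr k)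
        _ = S.mulVec (fun j => r ^ k * u j) i := h3.symm
        _ ≤ S.mulVec ((S ^ k).mulVec u) i := h2

lemma linfty_norm_le_of_rows {B : Matrix (Fin n) (Fin n) ℂ} {c : ℝ} (hc : 0 ≤ c)
    (h : ∀ i, ∑ j, ‖B i j‖ ≤ c) : ‖B‖ ≤ c := by
  rw [Matrix.linfty_opNorm_def]
  have hsup : (Finset.univ.sup fun i => ∑ j, ‖B i j‖₊ : NNReal) ≤ c.toNNReal := by
    apply Finset.sup_le
    intro i _
    have h2 : ((∑ j, ‖B i j‖₊ : NNReal) : ℝ) ≤ c := by push_cast; exact h i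
    exact NNReal.coe_le_coe.mp (by rwa [Real.coe_toNNReal c hc])
  calc ((Finset.univ.sup fun i => ∑ j, ‖B i j‖₊ : NNReal) : ℝ) ≤ (c.toNNReal : ℝ) :=
        NNReal.coe_le_coe.mpr hsup
    _ = c := Real.coe_toNNReal c hc

lemma row_le_linfty_norm (B : Matrix (Fin n) (Fin n) ℂ) (i : Fin n) :
    ∑ j, ‖B i j‖ ≤ ‖B‖ := by
  rw [Matrix.linfty_opNorm_def]
  have h : (∑ j, ‖B i j‖₊ : NNReal) ≤ Finset.univ.sup fun i => ∑ j, ‖B i j‖₊ :=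
    Finset.le_sup (f := fun i => ∑ j, ‖B i j‖₊) (Finset.mem_univ i)
  calc (∑ j, ‖B i j‖) = ((∑ j, ‖B i j‖₊ : NNReal) : ℝ) := by push_cast; rfl
    _ ≤ _ := NNReal.coe_le_coe.mpr h

lemma toReal_bound (A : Matrix (Fin n) (Fin n) ℂ) (k : ℕ) :
    (spectralRadius ℂ A).toReal ≤
      ‖A ^ (k+1)‖ ^ (1/(k+1:ℝ)) * ‖(1 : Matrix (Fin n) (Fin n) ℂ)‖ ^ (1/(k+1:ℝ)) := by
  have he : (0:ℝ) ≤ 1/(k+1:ℝ) := by positivity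
  have e1 := spectrum.spectralRadius_le_pow_nnnorm_pow_one_div ℂ A k
  have hne : ((‖A ^ (k+1)‖₊ : ENNReal) ^ (1/(k+1:ℝ)) *
      (‖(1 : Matrix (Fin n) (Fin n) ℂ)‖₊ : ENNReal) ^ (1/(k+1:ℝ))) ≠ ⊤ :=
    ENNReal.mul_ne_top (ENNReal.rpow_ne_top_of_nonneg he ENNReal.coe_ne_top)
      (ENNReal.rpow_ne_top_of_nonneg he ENNReal.coe_ne_top)
  have e2 := ENNReal.toReal_mono hne e1
  rw [ENNReal.toReal_mul, ← ENNReal.toReal_rpow, ← ENNReal.toReal_rpow,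
    ENNReal.coe_toReal, ENNReal.coe_toReal, coe_nnnorm, coe_nnnorm] at e2
  exact e2

lemma hfin (A : Matrix (Fin n) (Fin n) ℂ) : spectralRadius ℂ A ≠ ⊤ := by
  have e1 := spectrum.spectralRadius_le_pow_nnnorm_pow_one_div ℂ A 0
  exact ne_top_of_le_ne_top
    (ENNReal.mul_ne_top (ENNReal.rpow_ne_top_of_nonneg (by positivity) ENNReal.coe_ne_top)
      (ENNReal.rpow_ne_top_of_nonneg (by positivity) ENNReal.coe_ne_top)) e1

lemma tendsto_rpow_one_div_nat {c : ℝ} (hc : 0 < c) :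
    Tendsto (fun k : ℕ => c ^ (1 / (k : ℝ))) atTop (𝓝 1) := by
  have h1 : ∀ k : ℕ, c ^ (1 / (k : ℝ)) = Real.exp (Real.log c * (1 / (k : ℝ))) := fun k => by
    rw [Real.rpow_def_of_pos hc]
  simp only [h1]
  have h2 : Tendsto (fun k : ℕ => Real.log c * (1 / (k : ℝ))) atTop (𝓝 0) := by
    have := tendsto_one_div_atTop_nhds_zero_nat.const_mul (Real.log c)
    simpa using this
  have h3 := (Real.continuous_exp.tendsto 0).comp h2
  simpa [Function.comp_def] using h3

lemma tendsto_rpow_one_div_succ {c : ℝ} (hc : 0 < c) :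
    Tendsto (fun k : ℕ => c ^ (1 / ((k:ℝ) + 1))) atTop (𝓝 1) := by
  have h := (tendsto_rpow_one_div_nat hc).comp (tendsto_add_atTop_nat 1)
  have heq : (fun k : ℕ => c ^ (1 / ((k + 1 : ℕ) : ℝ))) =
      fun k : ℕ => c ^ (1 / ((k:ℝ) + 1)) := by
    funext k; push_cast; rfl
  rw [← heq]
  exact h

lemma gelfand_real (A : Matrix (Fin n) (Fin n) ℂ) :
    Tendsto (fun k : ℕ => ‖A ^ k‖ ^ (1/(k:ℝ))) atTop (𝓝 ((spectralRadius ℂ A).toReal)) := by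
  have h := spectrum.pow_nnnorm_pow_one_div_tendsto_nhds_spectralRadius A
  have h2 := (ENNReal.tendsto_toReal (hfin A)).comp h
  have heq : (fun k : ℕ => (((‖A ^ k‖₊ : ENNReal) ^ (1/(k:ℝ))).toReal)) =
      fun k : ℕ => ‖A ^ k‖ ^ (1/(k:ℝ)) := by
    funext k
    rw [← ENNReal.toReal_rpow]
    simp
  rw [← heq]
  exact h2

lemma specRad_le_of_mulVec_le (hn : 0 < n) {S : Matrix (Fin n) (Fin n) ℝ}
    (hS : ∀ i j, 0 ≤ S i j) {u : Fin n → ℝ} (hu : ∀ i, 0 < u i) {r : ℝ} (hr : 0 ≤ r)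
    (h : ∀ i, S.mulVec u i ≤ r * u i) : specRad S ≤ r := by
  have hne : (Finset.univ : Finset (Fin n)).Nonempty := ⟨⟨0, hn⟩, Finset.mem_univ _⟩
  set β := Finset.univ.inf' hne u with hβdef
  set γ := Finset.univ.sup' hne u with hγdef
  have hβpos : 0 < β := (Finset.lt_inf'_iff hne).mpr fun i _ => hu i
  have hβle : ∀ j, β ≤ u j := fun j => Finset.inf'_le _ (Finset.mem_univ j)
  have hγge : ∀ j, u j ≤ γ := fun j => Finset.le_sup' _ (Finset.mem_univ j)
  have hγpos : 0 < γ := lt_of_lt_of_le hβpos (le_trans (hβle ⟨0, hn⟩) (hγge ⟨0, hn⟩))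
  have hM : (0:ℝ) < γ / β := by positivity
  have hrow : ∀ (k : ℕ) (i : Fin n), ∑ j, (S ^ k) i j ≤ (γ/β) * r ^ k := by
    intro k i
    have hpow := pow_entry_nonneg hS k
    have hk := pow_mulVec_le hS hr h k
    have h1 : β * ∑ j, (S ^ k) i j ≤ r ^ k * γ := by
      calc β * ∑ j, (S ^ k) i j = ∑ j, β * (S ^ k) i j := by rw [Finset.mul_sum]
        _ ≤ ∑ j, (S ^ k) i j * u j := Finset.sum_le_sum fun j _ => by
            rw [mul_comm]; exact mul_le_mul_of_nonneg_left (hβle j) (hpow i j)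
        _ = (S ^ k).mulVec u i := rfl
        _ ≤ r ^ k * u i := hk i
        _ ≤ r ^ k * γ := mul_le_mul_of_nonneg_left (hγge i) (pow_nonneg hr k)
    rw [div_mul_eq_mul_div, le_div_iff₀ hβpos]
    nlinarith [h1]
  have hnorm : ∀ k : ℕ, ‖(S.map (algebraMap ℝ ℂ)) ^ k‖ ≤ (γ/β) * r ^ k := by
    intro k
    rw [map_pow_comm]
    apply linfty_norm_le_of_rows (by positivity)
    intro i
    have hent : ∀ j, ‖((S ^ k).map (algebraMap ℝ ℂ)) i j‖ = (S ^ k) i j := by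
      intro j
      rw [Matrix.map_apply]
      have h5 : (algebraMap ℝ ℂ) ((S ^ k) i j) = ((S ^ k) i j : ℂ) := rfl
      rw [h5, Complex.norm_real, Real.norm_eq_abs, abs_of_nonneg (pow_entry_nonneg hS k i j)]
    calc ∑ j, ‖((S ^ k).map (algebraMap ℝ ℂ)) i j‖ = ∑ j, (S ^ k) i j :=
          Finset.sum_congr rfl fun j _ => hent j
      _ ≤ (γ/β) * r ^ k := hrow k i
  have hone : (0:ℝ) < ‖(1 : Matrix (Fin n) (Fin n) ℂ)‖ := by
    rw [norm_pos_iff]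
    intro h1
    have h2 := congrFun (congrFun h1 ⟨0, hn⟩) ⟨0, hn⟩
    simp [Matrix.one_apply] at h2
  have hub : ∀ k : ℕ, specRad S ≤
      (γ/β) ^ (1/((k:ℝ)+1)) * ‖(1 : Matrix (Fin n) (Fin n) ℂ)‖ ^ (1/((k:ℝ)+1)) * r := by
    intro k
    have e1 := toReal_bound (S.map (algebraMap ℝ ℂ)) k
    have e2 : ‖(S.map (algebraMap ℝ ℂ)) ^ (k+1)‖ ^ (1/(k+1:ℝ)) ≤
        ((γ/β) * r ^ (k+1)) ^ (1/(k+1:ℝ)) :=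
      Real.rpow_le_rpow (norm_nonneg _) (hnorm (k+1)) (by positivity)
    have e3 : ((γ/β) * r ^ (k+1)) ^ (1/(k+1:ℝ)) = (γ/β) ^ (1/(k+1:ℝ)) * r := by
      rw [Real.mul_rpow (le_of_lt hM) (pow_nonneg hr _)]
      congr 1
      rw [← Real.rpow_natCast r (k+1), ← Real.rpow_mul hr]
      push_cast
      rw [mul_one_div, div_self (by positivity : ((k:ℝ)+1) ≠ 0), Real.rpow_one]
    calc specRad S ≤ _ := e1
      _ ≤ ((γ/β) * r ^ (k+1)) ^ (1/(k+1:ℝ)) *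
            ‖(1 : Matrix (Fin n) (Fin n) ℂ)‖ ^ (1/(k+1:ℝ)) :=
          mul_le_mul_of_nonneg_right e2 (Real.rpow_nonneg (norm_nonneg _) _)
      _ = (γ/β) ^ (1/((k:ℝ)+1)) * ‖(1 : Matrix (Fin n) (Fin n) ℂ)‖ ^ (1/((k:ℝ)+1)) * r := by
          rw [e3]; ring
  have hg : Tendsto (fun k : ℕ => (γ/β) ^ (1/((k:ℝ)+1)) *
      ‖(1 : Matrix (Fin n) (Fin n) ℂ)‖ ^ (1/((k:ℝ)+1)) * r) atTop (𝓝 r) := by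
    have h6 := ((tendsto_rpow_one_div_succ hM).mul (tendsto_rpow_one_div_succ hone)).mul_const r
    rw [one_mul, one_mul] at h6
    exact h6
  exact ge_of_tendsto hg (Filter.Eventually.of_forall hub)

lemma le_specRad_of_mulVec_ge (hn : 0 < n) {S : Matrix (Fin n) (Fin n) ℝ}
    (hS : ∀ i j, 0 ≤ S i j) {u : Fin n → ℝ} (hu : ∀ i, 0 < u i) {r : ℝ} (hr : 0 ≤ r)
    (h : ∀ i, r * u i ≤ S.mulVec u i) : r ≤ specRad S := by
  have hne : (Finset.univ : Finset (Fin n)).Nonempty := ⟨⟨0, hn⟩, Finset.mem_univ _⟩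
  set i₀ : Fin n := ⟨0, hn⟩ with hi₀
  set β := Finset.univ.inf' hne u with hβdef
  set γ := Finset.univ.sup' hne u with hγdef
  have hβpos : 0 < β := (Finset.lt_inf'_iff hne).mpr fun i _ => hu i
  have hβle : ∀ j, β ≤ u j := fun j => Finset.inf'_le _ (Finset.mem_univ j)
  have hγge : ∀ j, u j ≤ γ := fun j => Finset.le_sup' _ (Finset.mem_univ j)
  have hγpos : 0 < γ := lt_of_lt_of_le hβpos (le_trans (hβle i₀) (hγge i₀))
  have hlow : ∀ k : ℕ, (β/γ) * r ^ k ≤ ‖(S.map (algebraMap ℝ ℂ)) ^ k‖ := by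
    intro k
    have hpow := pow_entry_nonneg hS k
    have hk := pow_mulVec_ge hS hr h k
    have h1 : r ^ k * β ≤ γ * ∑ j, (S ^ k) i₀ j := by
      calc r ^ k * β ≤ r ^ k * u i₀ := mul_le_mul_of_nonneg_left (hβle i₀) (pow_nonneg hr k)
        _ ≤ (S ^ k).mulVec u i₀ := hk i₀
        _ = ∑ j, (S ^ k) i₀ j * u j := rfl
        _ ≤ ∑ j, (S ^ k) i₀ j * γ := Finset.sum_le_sum fun j _ =>
            mul_le_mul_of_nonneg_left (hγge j) (hpow i₀ j)
        _ = γ * ∑ j, (S ^ k) i₀ j := by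
            rw [Finset.mul_sum]; exact Finset.sum_congr rfl fun j _ => by ring
    have h2 : (β/γ) * r ^ k ≤ ∑ j, (S ^ k) i₀ j := by
      rw [div_mul_eq_mul_div, div_le_iff₀ hγpos]
      nlinarith [h1]
    have hent : ∀ j, ‖((S ^ k).map (algebraMap ℝ ℂ)) i₀ j‖ = (S ^ k) i₀ j := by
      intro j
      rw [Matrix.map_apply]
      have h5 : (algebraMap ℝ ℂ) ((S ^ k) i₀ j) = ((S ^ k) i₀ j : ℂ) := rfl
      rw [h5, Complex.norm_real, Real.norm_eq_abs, abs_of_nonneg (hpow i₀ j)]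
    calc (β/γ) * r ^ k ≤ ∑ j, (S ^ k) i₀ j := h2
      _ = ∑ j, ‖((S ^ k).map (algebraMap ℝ ℂ)) i₀ j‖ :=
          (Finset.sum_congr rfl fun j _ => (hent j).symm)
      _ ≤ ‖(S ^ k).map (algebraMap ℝ ℂ)‖ := row_le_linfty_norm _ i₀
      _ = ‖(S.map (algebraMap ℝ ℂ)) ^ k‖ := by rw [map_pow_comm]
  have hglf : Tendsto (fun k : ℕ => ‖(S.map (algebraMap ℝ ℂ)) ^ k‖ ^ (1/(k:ℝ))) atTop
      (𝓝 (specRad S)) := gelfand_real _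
  have hgl : Tendsto (fun k : ℕ => (β/γ) ^ (1/(k:ℝ)) * r) atTop (𝓝 r) := by
    have h6 := (tendsto_rpow_one_div_nat (div_pos hβpos hγpos)).mul_const r
    rw [one_mul] at h6
    exact h6
  apply le_of_tendsto_of_tendsto hgl hglf
  filter_upwards [eventually_ge_atTop 1] with k hk1
  have hkpos : (0:ℝ) < (k:ℝ) := by exact_mod_cast Nat.pos_of_ne_zero (by omega)
  have e2 : ((β/γ) * r ^ k) ^ (1/(k:ℝ)) ≤ ‖(S.map (algebraMap ℝ ℂ)) ^ k‖ ^ (1/(k:ℝ)) :=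
    Real.rpow_le_rpow (by positivity) (hlow k) (by positivity)
  have e3 : ((β/γ) * r ^ k) ^ (1/(k:ℝ)) = (β/γ) ^ (1/(k:ℝ)) * r := by
    rw [Real.mul_rpow (by positivity) (pow_nonneg hr _)]
    congr 1
    rw [← Real.rpow_natCast r k, ← Real.rpow_mul hr, mul_one_div,
      div_self (ne_of_gt hkpos), Real.rpow_one]
  calc (β/γ) ^ (1/(k:ℝ)) * r = ((β/γ) * r ^ k) ^ (1/(k:ℝ)) := e3.symm
    _ ≤ _ := e2

lemma cube_root_le {x d y : ℝ} (hx : 0 ≤ x) (hd : 0 ≤ d) (hy : 0 ≤ y)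
    (h : x ^ 3 ≤ d * y) : x ≤ d ^ ((1:ℝ)/3) * y ^ ((1:ℝ)/3) := by
  have h1 : x = (x ^ 3) ^ ((1:ℝ)/3) := by
    rw [← Real.rpow_natCast x 3, ← Real.rpow_mul hx]
    norm_num
  rw [h1]
  calc (x ^ 3) ^ ((1:ℝ)/3) ≤ (d * y) ^ ((1:ℝ)/3) :=
        Real.rpow_le_rpow (pow_nonneg hx 3) h (by norm_num)
    _ = d ^ ((1:ℝ)/3) * y ^ ((1:ℝ)/3) := Real.mul_rpow hd hy

lemma cube_root_le' {x d y : ℝ} (hx : 0 ≤ x) (hd : 0 ≤ d) (hy : 0 ≤ y)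
    (h : x ≤ d * y ^ 3) : x ^ ((1:ℝ)/3) ≤ d ^ ((1:ℝ)/3) * y := by
  have h1 : (y ^ 3 : ℝ) ^ ((1:ℝ)/3) = y := by
    rw [← Real.rpow_natCast y 3, ← Real.rpow_mul hy]
    norm_num
  calc x ^ ((1:ℝ)/3) ≤ (d * y ^ 3) ^ ((1:ℝ)/3) :=
        Real.rpow_le_rpow hx h (by norm_num)
    _ = d ^ ((1:ℝ)/3) * (y ^ 3) ^ ((1:ℝ)/3) := Real.mul_rpow hd (pow_nonneg hy 3)
    _ = d ^ ((1:ℝ)/3) * y := by rw [h1]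

lemma flat_low {k1 sl η Ab mv : ℝ} (h1 : k1 ≤ 1) (h2 : k1 ≤ sl) (hη : 0 ≤ η) (hAb : 0 ≤ Ab)
    (hmv : sl*Ab ≤ mv) : k1*(η+Ab) ≤ η + mv := by nlinarith

lemma flat_high {k0 su η Ab mv : ℝ} (h1 : 1 ≤ k0) (h2 : su ≤ k0) (hη : 0 ≤ η) (hAb : 0 ≤ Ab)
    (hmv : mv ≤ su*Ab) : η + mv ≤ k0*(η+Ab) := by nlinarith

lemma apriori_bound {k0 k1 K a η τ Ab : ℝ} (hk1 : 0 < k1) (hK : 0 < K) (ha : 0 < a)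
    (hη0 : 0 < η) (hη1 : η ≤ 1) (hτ : 0 ≤ τ) (hAb : Ab = a - η) (hAbpos : 0 < Ab)
    (h17 : Ab*(k1^2*a^2+τ) ≤ k0*a) (hK2 : k1^2*K^2 = k0) : a ≤ K + 1 := by
  rw [hAb] at h17 hAbpos
  have t3 : (a-η)*(k1^2*a^2) ≤ k0*a := by nlinarith
  have t5 : (k1^2*(a*(a-η)))*a ≤ (k0)*a := by nlinarith [t3]
  have t4 : k1^2*(a*(a-η)) ≤ k0 := le_of_mul_le_mul_right t5 ha
  have t6 : a*(a-η) ≤ K^2 := by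
    rw [← hK2] at t4
    have hk2 : (0:ℝ) < k1^2 := by positivity
    exact (mul_le_mul_iff_right₀ hk2).mp t4
  have t8 : η*a ≤ a := mul_le_of_le_one_left ha.le hη1
  nlinarith [t6, t8, hK, ha, sq_nonneg (a - K - 1), mul_pos hK ha]

lemma translate_ineq {v w W τ η : ℝ} (hWτ : 0 < W + τ) (hkey : v * (W + τ) = w)
    (hle : v ≤ w - η) : η * (W + τ) ≤ w * (W + τ - 1) := by
  nlinarith [mul_le_mul_of_nonneg_right hle hWτ.le]

lemma translate_ineq' {v w W τ η : ℝ} (hWτ : 0 < W + τ) (hkey : v * (W + τ) = w)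
    (hge : w - η ≤ v) : w * (W + τ - 1) ≤ η * (W + τ) := by
  nlinarith [mul_le_mul_of_nonneg_right hge hWτ.le]

lemma pos_factor {w X : ℝ} (hw : 0 < w) (hpos : 0 < w * X) : 0 < X := by
  by_contra hc
  push_neg at hc
  nlinarith

lemma half_min {q x y aa : ℝ} (e5 : q*x ≤ aa) (e6 : q*y ≤ aa) : (1/2*q)*(x+y) ≤ aa := by
  nlinarith

lemma sq_half {s mm : ℝ} (h : s ≤ mm) (hs : 0 ≤ s) (h2 : s^2 = 1/2) : 1/2 ≤ mm^2 := by
  nlinarith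

lemma final_up {x CFv q mm k0 : ℝ} (hx : 0 < x) (hq : 0 < q) (hm : 0 < mm)
    (h52 : x*(q*mm) ≤ k0) (h54 : 2*k0 ≤ CFv*q) (h48 : 1/2 ≤ mm^2) (hk0 : 0 < k0) :
    x ≤ CFv*mm := by
  nlinarith [h52, h54, h48, mul_pos hq hm, mul_pos hx (mul_pos hq hm)]

end DysonAux

set_option maxHeartbeats 4000000 in
/-- **Inside regime behaviour of the Dyson solution:** if `ρ(S) = 1`, then
uniformly for `η ∈ (0,1]` and `τ ∈ [0,1]` the positive solution satisfies
`v_a ∼ η^{1/3} + (1-τ)^{1/2}`, with constants depending only on `s⁎, s⁺`. -/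
theorem dyson_solution_inside_regime
    (sl su : ℝ) (hsl : 0 < sl) (hslsu : sl ≤ su) :
    ∃ c > (0:ℝ), ∃ C > (0:ℝ),
      ∀ (n : ℕ), 1 ≤ n → ∀ S : Matrix (Fin n) (Fin n) ℝ,
        (∀ i j, sl / n ≤ S i j ∧ S i j ≤ su / n) → specRad S = 1 →
        ∀ η : ℝ, 0 < η → η ≤ 1 → ∀ τ : ℝ, τ ∈ Set.Icc (0:ℝ) 1 →
          ∀ v₁ v₂ : Fin n → ℝ, IsDysonSolution S τ η v₁ v₂ →
            ∀ i,
              (c * (η ^ ((1:ℝ)/3) + Real.sqrt (1 - τ)) ≤ v₁ i ∧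
                v₁ i ≤ C * (η ^ ((1:ℝ)/3) + Real.sqrt (1 - τ))) ∧
              (c * (η ^ ((1:ℝ)/3) + Real.sqrt (1 - τ)) ≤ v₂ i ∧
                v₂ i ≤ C * (η ^ ((1:ℝ)/3) + Real.sqrt (1 - τ))) := by
  -- the constants, depending only on `sl`, `su`
  set κ₀ := max 1 su with hκ₀def
  set κ₁ := min 1 sl with hκ₁def
  have hκ₀1 : 1 ≤ κ₀ := le_max_left _ _
  have hκ₀su : su ≤ κ₀ := le_max_right _ _
  have hκ₁pos : 0 < κ₁ := lt_min one_pos hsl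
  have hκ₁1 : κ₁ ≤ 1 := min_le_left _ _
  have hκ₁sl : κ₁ ≤ sl := min_le_right _ _
  have hκ₀pos : 0 < κ₀ := lt_of_lt_of_le one_pos hκ₀1
  set K := Real.sqrt κ₀ / κ₁ with hKdef
  have hKpos : 0 < K := div_pos (Real.sqrt_pos.mpr hκ₀pos) hκ₁pos
  set aP := K + 1 with haPdef
  have haPpos : 0 < aP := by rw [haPdef]; linarith
  set C₃ := κ₀^2*aP^2 + 1 with hC₃def
  have hC₃pos : 0 < C₃ := by
    rw [hC₃def]
    nlinarith [sq_nonneg (κ₀*aP)]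
  set CU := max (Real.sqrt 2 / κ₁) ((2*C₃/κ₁^3) ^ ((1:ℝ)/3)) with hCUdef
  have hCUpos : 0 < CU :=
    lt_of_lt_of_le (div_pos (Real.sqrt_pos.mpr two_pos) hκ₁pos) (le_max_left _ _)
  set ca := (1/(2*κ₀^3)) ^ ((1:ℝ)/3) with hcadef
  have h2κ₀3pos : (0:ℝ) < 2*κ₀^3 := by
    have := pow_pos hκ₀pos 3; linarith
  have hcapos : 0 < ca := Real.rpow_pos_of_pos (by rw [one_div]; exact inv_pos.mpr h2κ₀3pos) _
  set cL := (1/2) * min ca (1/κ₀) with hcLdef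
  have hcLpos : 0 < cL := mul_pos one_half_pos (lt_min hcapos (one_div_pos.mpr hκ₀pos))
  have hs2pos : (0:ℝ) < Real.sqrt 2 := Real.sqrt_pos.mpr two_pos
  set cL' := min cL (1/(2*Real.sqrt 2*κ₀)) with hcL'def
  have h2s2κ₀pos : (0:ℝ) < 2*Real.sqrt 2*κ₀ := mul_pos (mul_pos two_pos hs2pos) hκ₀pos
  have hcL'pos : 0 < cL' := lt_min hcLpos (one_div_pos.mpr h2s2κ₀pos)
  set cF := κ₁/C₃ * cL' with hcFdef
  have hcFpos : 0 < cF := mul_pos (div_pos hκ₁pos hC₃pos) hcL'pos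
  set CF := max (2*κ₀*CU) (2*κ₀/(κ₁^2*cL')) with hCFdef
  have hCFpos : 0 < CF :=
    lt_of_lt_of_le (mul_pos (mul_pos two_pos hκ₀pos) hCUpos)
      (le_max_left (2*κ₀*CU) (2*κ₀/(κ₁^2*cL')))
  clear_value κ₀ κ₁ K aP C₃ CU ca cL cL' cF CF
  refine ⟨cF, hcFpos, CF, hCFpos, ?_⟩
  intro n hn S hSent hspec η hη hη1 τ hτ v₁ v₂ hsol i
  obtain ⟨hτ0, hτ1⟩ := hτ
  obtain ⟨hv₁, hv₂, heq₁, heq₂⟩ := hsol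
  have hnpos : (0:ℝ) < n := by exact_mod_cast hn
  have hn0 : 0 < n := hn
  have hS0 : ∀ i j, 0 ≤ S i j := fun i j =>
    le_trans (div_nonneg hsl.le hnpos.le) (hSent i j).1
  -- the w functions
  set w₁ : Fin n → ℝ := fun k => η + S.transpose.mulVec v₁ k with hw₁def
  set w₂ : Fin n → ℝ := fun k => η + S.mulVec v₂ k with hw₂def
  have hw₁ : ∀ k, w₁ k = η + S.transpose.mulVec v₁ k := fun k => rfl
  have hw₂ : ∀ k, w₂ k = η + S.mulVec v₂ k := fun k => rfl
  clear_value w₁ w₂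
  have hmv₂0 : ∀ k, 0 ≤ S.mulVec v₂ k := by
    intro k
    rw [show S.mulVec v₂ k = ∑ j, S k j * v₂ j from rfl]
    exact Finset.sum_nonneg fun j _ => mul_nonneg (hS0 k j) (hv₂ j).le
  have hmv₁0 : ∀ k, 0 ≤ S.transpose.mulVec v₁ k := by
    intro k
    rw [show S.transpose.mulVec v₁ k = ∑ j, S j k * v₁ j from rfl]
    exact Finset.sum_nonneg fun j _ => mul_nonneg (hS0 j k) (hv₁ j).le
  have hw₁pos : ∀ k, 0 < w₁ k := fun k => by have := hmv₁0 k; rw [hw₁ k]; linarith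
  have hw₂pos : ∀ k, 0 < w₂ k := fun k => by have := hmv₂0 k; rw [hw₂ k]; linarith
  -- the basic identities
  have hkey₁ : ∀ k, v₁ k * (w₁ k * w₂ k + τ) = w₁ k := by
    intro k
    have h1 := heq₁ k
    rw [← hw₂ k, ← hw₁ k] at h1
    have hv := (hv₁ k).ne'
    have hw := (hw₁pos k).ne'
    have h2 : (1 / v₁ k) * (v₁ k * w₁ k) = (w₂ k + τ / w₁ k) * (v₁ k * w₁ k) := by rw [h1]
    have h3 : (1 / v₁ k) * (v₁ k * w₁ k) = w₁ k := by field_simp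
    have h4 : (w₂ k + τ / w₁ k) * (v₁ k * w₁ k) = v₁ k * (w₁ k * w₂ k + τ) := by
      field_simp
    exact (h4.symm.trans (h2.symm.trans h3))
  have hkey₂ : ∀ k, v₂ k * (w₁ k * w₂ k + τ) = w₂ k := by
    intro k
    have h1 := heq₂ k
    rw [← hw₂ k, ← hw₁ k] at h1
    have hv := (hv₂ k).ne'
    have hw := (hw₂pos k).ne'
    have h2 : (1 / v₂ k) * (v₂ k * w₂ k) = (w₁ k + τ / w₂ k) * (v₂ k * w₂ k) := by rw [h1]
    have h3 : (1 / v₂ k) * (v₂ k * w₂ k) = w₂ k := by field_simp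
    have h4 : (w₁ k + τ / w₂ k) * (v₂ k * w₂ k) = v₂ k * (w₁ k * w₂ k + τ) := by
      field_simp
    exact (h4.symm.trans (h2.symm.trans h3))
  have hWτpos : ∀ k, 0 < w₁ k * w₂ k + τ := fun k => by
    have := mul_pos (hw₁pos k) (hw₂pos k); linarith
  have hpoint : ∀ k, v₁ k * w₂ k = v₂ k * w₁ k := by
    intro k
    have e1 := hkey₁ k
    have e2 := hkey₂ k
    have h5 : v₁ k * w₂ k * (w₁ k * w₂ k + τ) = v₂ k * w₁ k * (w₁ k * w₂ k + τ) := by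
      linear_combination w₂ k * e1 - w₁ k * e2
    exact mul_right_cancel₀ (hWτpos k).ne' h5
  -- Fubini and the equality of the sums
  have hfub : ∑ k, v₁ k * S.mulVec v₂ k = ∑ k, v₂ k * S.transpose.mulVec v₁ k := by
    calc ∑ k, v₁ k * S.mulVec v₂ k = ∑ k, ∑ j, v₁ k * (S k j * v₂ j) := by
          refine Finset.sum_congr rfl fun k _ => ?_
          rw [show S.mulVec v₂ k = ∑ j, S k j * v₂ j from rfl, Finset.mul_sum]
      _ = ∑ j, ∑ k, v₁ k * (S k j * v₂ j) := Finset.sum_comm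
      _ = ∑ j, v₂ j * S.transpose.mulVec v₁ j := by
          refine Finset.sum_congr rfl fun j _ => ?_
          rw [show S.transpose.mulVec v₁ j = ∑ k, S.transpose j k * v₁ k from rfl,
            Finset.mul_sum]
          exact Finset.sum_congr rfl fun k _ => by rw [Matrix.transpose_apply]; ring
  have hsum : ∑ k, v₁ k = ∑ k, v₂ k := by
    have h7 : ∑ k, v₁ k * S.mulVec v₂ k = ∑ k, (v₁ k * w₂ k - η * v₁ k) :=
      Finset.sum_congr rfl fun k _ => by rw [hw₂ k]; ring
    have h8 : ∑ k, v₂ k * S.transpose.mulVec v₁ k = ∑ k, (v₂ k * w₁ k - η * v₂ k) :=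
      Finset.sum_congr rfl fun k _ => by rw [hw₁ k]; ring
    have h9 : ∑ k, (v₁ k * w₂ k - η * v₁ k) = ∑ k, (v₂ k * w₁ k - η * v₂ k) := by
      rw [← h7, ← h8]; exact hfub
    rw [Finset.sum_sub_distrib, Finset.sum_sub_distrib] at h9
    have h10 : ∑ k, v₁ k * w₂ k = ∑ k, v₂ k * w₁ k :=
      Finset.sum_congr rfl fun k _ => hpoint k
    rw [h10] at h9
    have h11 : η * ∑ k, v₁ k = η * ∑ k, v₂ k := by
      rw [Finset.mul_sum, Finset.mul_sum]
      linarith [h9]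
    exact mul_left_cancel₀ hη.ne' h11
  -- the average and the scale `a`
  set T := ∑ k, v₁ k with hTdef
  have hTpos : 0 < T :=
    Finset.sum_pos (fun k _ => hv₁ k) ⟨⟨0, hn0⟩, Finset.mem_univ _⟩
  set Ab := T / n with hAbdef
  have hAbpos : 0 < Ab := div_pos hTpos hnpos
  set a := η + Ab with hadef
  have hapos : 0 < a := by rw [hadef]; linarith
  have hAba : Ab = a - η := by rw [hadef]; ring
  clear_value T Ab a
  -- mulVec bounds
  have hmv₂b : ∀ k, sl * Ab ≤ S.mulVec v₂ k ∧ S.mulVec v₂ k ≤ su * Ab := by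
    intro k
    have hT₂ : ∑ j, v₂ j = T := hsum.symm
    constructor
    · have h15 : ∑ j, (sl/n) * v₂ j ≤ ∑ j, S k j * v₂ j :=
        Finset.sum_le_sum fun j _ => mul_le_mul_of_nonneg_right (hSent k j).1 (hv₂ j).le
      rw [← Finset.mul_sum, hT₂] at h15
      rw [show S.mulVec v₂ k = ∑ j, S k j * v₂ j from rfl]
      calc sl * Ab = sl / n * T := by rw [hAbdef]; ring
        _ ≤ _ := h15
    · have h15 : ∑ j, S k j * v₂ j ≤ ∑ j, (su/n) * v₂ j :=
        Finset.sum_le_sum fun j _ => mul_le_mul_of_nonneg_right (hSent k j).2 (hv₂ j).le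
      rw [← Finset.mul_sum, hT₂] at h15
      rw [show S.mulVec v₂ k = ∑ j, S k j * v₂ j from rfl]
      calc ∑ j, S k j * v₂ j ≤ su / n * T := h15
        _ = su * Ab := by rw [hAbdef]; ring
  have hmv₁b : ∀ k, sl * Ab ≤ S.transpose.mulVec v₁ k ∧
      S.transpose.mulVec v₁ k ≤ su * Ab := by
    intro k
    constructor
    · have h15 : ∑ j, (sl/n) * v₁ j ≤ ∑ j, S j k * v₁ j :=
        Finset.sum_le_sum fun j _ => mul_le_mul_of_nonneg_right (hSent j k).1 (hv₁ j).le
      rw [← Finset.mul_sum, ← hTdef] at h15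
      rw [show S.transpose.mulVec v₁ k = ∑ j, S j k * v₁ j from rfl]
      calc sl * Ab = sl / n * T := by rw [hAbdef]; ring
        _ ≤ _ := h15
    · have h15 : ∑ j, S j k * v₁ j ≤ ∑ j, (su/n) * v₁ j :=
        Finset.sum_le_sum fun j _ => mul_le_mul_of_nonneg_right (hSent j k).2 (hv₁ j).le
      rw [← Finset.mul_sum, ← hTdef] at h15
      rw [show S.transpose.mulVec v₁ k = ∑ j, S j k * v₁ j from rfl]
      calc ∑ j, S j k * v₁ j ≤ su / n * T := h15
        _ = su * Ab := by rw [hAbdef]; ring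
  -- flatness of w₁, w₂
  have hflat : ∀ k, (κ₁ * a ≤ w₁ k ∧ w₁ k ≤ κ₀ * a) ∧
      (κ₁ * a ≤ w₂ k ∧ w₂ k ≤ κ₀ * a) := by
    intro k
    have h₁ := hmv₁b k
    have h₂ := hmv₂b k
    refine ⟨⟨?_, ?_⟩, ?_, ?_⟩
    · rw [hw₁ k, hadef]
      exact DysonAux.flat_low hκ₁1 hκ₁sl hη.le hAbpos.le h₁.1
    · rw [hw₁ k, hadef]
      exact DysonAux.flat_high hκ₀1 hκ₀su hη.le hAbpos.le h₁.2
    · rw [hw₂ k, hadef]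
      exact DysonAux.flat_low hκ₁1 hκ₁sl hη.le hAbpos.le h₂.1
    · rw [hw₂ k, hadef]
      exact DysonAux.flat_high hκ₀1 hκ₀su hη.le hAbpos.le h₂.2
  -- bounds on the products
  have hW : ∀ k, κ₁^2*a^2 ≤ w₁ k * w₂ k ∧ w₁ k * w₂ k ≤ κ₀^2*a^2 := by
    intro k
    obtain ⟨⟨l1, u1⟩, ⟨l2, u2⟩⟩ := hflat k
    have hκ₁a : 0 ≤ κ₁ * a := (mul_pos hκ₁pos hapos).le
    constructor
    · calc κ₁^2*a^2 = (κ₁*a)*(κ₁*a) := by ring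
        _ ≤ w₁ k * w₂ k := mul_le_mul l1 l2 hκ₁a (le_trans hκ₁a l1)
    · calc w₁ k * w₂ k ≤ (κ₀*a)*(κ₀*a) :=
            mul_le_mul u1 u2 (hw₂pos k).le (le_trans (hw₁pos k).le u1)
        _ = κ₀^2*a^2 := by ring
  -- bounds on v in product form
  have hvub : ∀ k, v₁ k * (κ₁^2*a^2 + τ) ≤ κ₀ * a ∧ v₂ k * (κ₁^2*a^2 + τ) ≤ κ₀ * a := by
    intro k
    obtain ⟨lW, uW⟩ := hW k
    constructor
    · calc v₁ k * (κ₁^2*a^2 + τ) ≤ v₁ k * (w₁ k * w₂ k + τ) :=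
            mul_le_mul_of_nonneg_left (by linarith) (hv₁ k).le
        _ = w₁ k := hkey₁ k
        _ ≤ κ₀ * a := (hflat k).1.2
    · calc v₂ k * (κ₁^2*a^2 + τ) ≤ v₂ k * (w₁ k * w₂ k + τ) :=
            mul_le_mul_of_nonneg_left (by linarith) (hv₂ k).le
        _ = w₂ k := hkey₂ k
        _ ≤ κ₀ * a := (hflat k).2.2
  have hvlb : ∀ k, κ₁ * a ≤ v₁ k * (κ₀^2*a^2 + τ) ∧ κ₁ * a ≤ v₂ k * (κ₀^2*a^2 + τ) := by
    intro k
    obtain ⟨lW, uW⟩ := hW k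
    constructor
    · calc κ₁ * a ≤ w₁ k := (hflat k).1.1
        _ = v₁ k * (w₁ k * w₂ k + τ) := (hkey₁ k).symm
        _ ≤ v₁ k * (κ₀^2*a^2 + τ) :=
            mul_le_mul_of_nonneg_left (by linarith) (hv₁ k).le
    · calc κ₁ * a ≤ w₂ k := (hflat k).2.1
        _ = v₂ k * (w₁ k * w₂ k + τ) := (hkey₂ k).symm
        _ ≤ v₂ k * (κ₀^2*a^2 + τ) :=
            mul_le_mul_of_nonneg_left (by linarith) (hv₂ k).le
  -- a priori bound `a ≤ aP`
  have haP : a ≤ aP := by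
    have h13 : ∑ k, (v₁ k * (κ₁^2*a^2+τ)) ≤ ∑ _k : Fin n, κ₀ * a :=
      Finset.sum_le_sum fun k _ => (hvub k).1
    have h14 : (∑ _k : Fin n, κ₀ * a) = n * (κ₀ * a) := by
      rw [Finset.sum_const, Finset.card_univ, Fintype.card_fin, nsmul_eq_mul]
    have h15 : T * (κ₁^2*a^2+τ) ≤ n * (κ₀*a) := by
      have h16 : T * (κ₁^2*a^2+τ) = ∑ k, (v₁ k * (κ₁^2*a^2+τ)) := by
        rw [hTdef, Finset.sum_mul]
      rw [h16, ← h14]; exact h13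
    have h17 : Ab * (κ₁^2*a^2 + τ) ≤ κ₀ * a := by
      rw [hAbdef, div_mul_eq_mul_div, div_le_iff₀ hnpos]
      calc T * (κ₁^2*a^2+τ) ≤ n*(κ₀*a) := h15
        _ = κ₀ * a * n := by ring
    have hK2 : κ₁^2 * K^2 = κ₀ := by
      rw [hKdef, div_pow, Real.sq_sqrt hκ₀pos.le]
      field_simp
    rw [haPdef]
    exact DysonAux.apriori_bound hκ₁pos hKpos hapos hη hη1 hτ0 hAba hAbpos h17 hK2
  -- Collatz–Wielandt : there are indices `iU`, `jL`
  have hne : (Finset.univ : Finset (Fin n)).Nonempty := ⟨⟨0, hn0⟩, Finset.mem_univ _⟩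
  have hcw₁ : ∃ k, v₂ k ≤ S.mulVec v₂ k := by
    by_contra hcon
    push_neg at hcon
    set r := Finset.univ.sup' hne (fun k => S.mulVec v₂ k / v₂ k) with hrdef
    have hrlt : r < 1 := by
      rw [hrdef]
      apply (Finset.sup'_lt_iff hne).mpr
      intro k _
      exact (div_lt_one (hv₂ k)).mpr (hcon k)
    have hrge : ∀ k, S.mulVec v₂ k ≤ r * v₂ k := by
      intro k
      have h18 : S.mulVec v₂ k / v₂ k ≤ r :=
        Finset.le_sup' (fun k => S.mulVec v₂ k / v₂ k) (Finset.mem_univ k)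
      calc S.mulVec v₂ k = (S.mulVec v₂ k / v₂ k) * v₂ k :=
            (div_mul_cancel₀ _ (hv₂ k).ne').symm
        _ ≤ r * v₂ k := mul_le_mul_of_nonneg_right h18 (hv₂ k).le
    have hr0 : 0 ≤ r :=
      le_trans (div_nonneg (hmv₂0 ⟨0, hn0⟩) (hv₂ _).le)
        (Finset.le_sup' (fun k => S.mulVec v₂ k / v₂ k) (Finset.mem_univ ⟨0, hn0⟩))
    have h19 := DysonAux.specRad_le_of_mulVec_le hn0 hS0 hv₂ hr0 hrge
    rw [hspec] at h19
    linarith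
  have hcw₂ : ∃ k, S.mulVec v₂ k ≤ v₂ k := by
    by_contra hcon
    push_neg at hcon
    set r := Finset.univ.inf' hne (fun k => S.mulVec v₂ k / v₂ k) with hrdef
    have hrgt : 1 < r := by
      rw [hrdef]
      apply (Finset.lt_inf'_iff hne).mpr
      intro k _
      exact (one_lt_div (hv₂ k)).mpr (hcon k)
    have hrle : ∀ k, r * v₂ k ≤ S.mulVec v₂ k := by
      intro k
      have h18 : r ≤ S.mulVec v₂ k / v₂ k :=
        Finset.inf'_le (fun k => S.mulVec v₂ k / v₂ k) (Finset.mem_univ k)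
      calc r * v₂ k ≤ (S.mulVec v₂ k / v₂ k) * v₂ k :=
            mul_le_mul_of_nonneg_right h18 (hv₂ k).le
        _ = S.mulVec v₂ k := div_mul_cancel₀ _ (hv₂ k).ne'
    have hr0 : (0:ℝ) ≤ r := by linarith
    have h19 := DysonAux.le_specRad_of_mulVec_ge hn0 hS0 hv₂ hr0 hrle
    rw [hspec] at h19
    linarith
  obtain ⟨iU, hiU⟩ := hcw₁
  obtain ⟨jL, hjL⟩ := hcw₂
  -- translate into the two key inequalities
  have ineq1 : η * (w₁ iU * w₂ iU + τ) ≤ w₂ iU * (w₁ iU * w₂ iU + τ - 1) := by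
    have h20 : S.mulVec v₂ iU = w₂ iU - η := by rw [hw₂ iU]; ring
    rw [h20] at hiU
    exact DysonAux.translate_ineq (hWτpos iU) (hkey₂ iU) hiU
  have ineq2 : w₂ jL * (w₁ jL * w₂ jL + τ - 1) ≤ η * (w₁ jL * w₂ jL + τ) := by
    have h20 : S.mulVec v₂ jL = w₂ jL - η := by rw [hw₂ jL]; ring
    rw [h20] at hjL
    exact DysonAux.translate_ineq' (hWτpos jL) (hkey₂ jL) hjL
  -- the scale `m`
  set m := η ^ ((1:ℝ)/3) + Real.sqrt (1 - τ) with hmdef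
  clear_value m
  have hη13pos : 0 < η ^ ((1:ℝ)/3) := Real.rpow_pos_of_pos hη _
  have hη13le1 : η ^ ((1:ℝ)/3) ≤ 1 := Real.rpow_le_one hη.le hη1 (by norm_num)
  have hsq1 : Real.sqrt (1-τ) ≤ 1 := by
    calc Real.sqrt (1-τ) ≤ Real.sqrt 1 := Real.sqrt_le_sqrt (by linarith)
      _ = 1 := Real.sqrt_one
  have hmpos : 0 < m := by
    rw [hmdef]
    have := Real.sqrt_nonneg (1-τ)
    linarith
  have hm2 : m ≤ 2 := by
    rw [hmdef]; linarith
  have hWC₃ : ∀ k, w₁ k * w₂ k + τ ≤ C₃ := by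
    intro k
    have h22 := (hW k).2
    have haa : a^2 ≤ aP^2 := pow_le_pow_left₀ hapos.le haP 2
    have h23 : κ₀^2*a^2 ≤ κ₀^2*aP^2 :=
      mul_le_mul_of_nonneg_left haa (by positivity)
    rw [hC₃def]
    linarith
  -- upper bound on `a`
  have haCU : a ≤ CU * m := by
    by_cases hcase : κ₁^2*a^2 ≤ 2*(1-τ)
    · have h23 : (κ₁*a)^2 ≤ 2*(1-τ) := by
        have : (κ₁*a)^2 = κ₁^2*a^2 := by ring
        linarith
      have h22 : κ₁ * a ≤ Real.sqrt 2 * Real.sqrt (1-τ) := by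
        rw [← Real.sqrt_mul (by norm_num : (0:ℝ) ≤ 2)]
        calc κ₁ * a = Real.sqrt ((κ₁*a)^2) :=
              (Real.sqrt_sq (mul_pos hκ₁pos hapos).le).symm
          _ ≤ Real.sqrt (2*(1-τ)) := Real.sqrt_le_sqrt h23
      have h24 : a ≤ (Real.sqrt 2/κ₁) * Real.sqrt (1-τ) := by
        rw [div_mul_eq_mul_div, le_div_iff₀ hκ₁pos]
        calc a * κ₁ = κ₁ * a := by ring
          _ ≤ Real.sqrt 2 * Real.sqrt (1-τ) := h22
      have h25 : Real.sqrt (1-τ) ≤ m := by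
        rw [hmdef]; linarith
      calc a ≤ (Real.sqrt 2/κ₁) * Real.sqrt (1-τ) := h24
        _ ≤ CU * Real.sqrt (1-τ) :=
            mul_le_mul_of_nonneg_right (by rw [hCUdef]; exact le_max_left _ _)
              (Real.sqrt_nonneg _)
        _ ≤ CU * m := mul_le_mul_of_nonneg_left h25 hCUpos.le
    · push_neg at hcase
      obtain ⟨lW, uW⟩ := hW jL
      have h25 : κ₁^2*a^2/2 ≤ w₁ jL * w₂ jL + τ - 1 := by linarith
      have h26 : κ₁ * a * (κ₁^2*a^2/2) ≤ w₂ jL * (w₁ jL * w₂ jL + τ - 1) :=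
        mul_le_mul ((hflat jL).2.1) h25 (by positivity) (hw₂pos jL).le
      have h27 : η * (w₁ jL * w₂ jL + τ) ≤ η * C₃ :=
        mul_le_mul_of_nonneg_left (hWC₃ jL) hη.le
      have h29 : κ₁^3*a^3/2 ≤ C₃ * η := by
        calc κ₁^3*a^3/2 = κ₁ * a * (κ₁^2*a^2/2) := by ring
          _ ≤ w₂ jL * (w₁ jL * w₂ jL + τ - 1) := h26
          _ ≤ η * (w₁ jL * w₂ jL + τ) := ineq2
          _ ≤ η * C₃ := h27
          _ = C₃ * η := by ring
      have h28 : a^3 ≤ (2*C₃/κ₁^3) * η := by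
        rw [div_mul_eq_mul_div, le_div_iff₀ (pow_pos hκ₁pos 3)]
        linarith [h29]
      have h30 : a ≤ (2*C₃/κ₁^3) ^ ((1:ℝ)/3) * η ^ ((1:ℝ)/3) :=
        DysonAux.cube_root_le hapos.le
          (div_nonneg (by linarith) (pow_pos hκ₁pos 3).le) hη.le h28
      have h31 : η ^ ((1:ℝ)/3) ≤ m := by
        rw [hmdef]; linarith [Real.sqrt_nonneg (1-τ)]
      calc a ≤ (2*C₃/κ₁^3) ^ ((1:ℝ)/3) * η ^ ((1:ℝ)/3) := h30
        _ ≤ CU * η ^ ((1:ℝ)/3) :=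
            mul_le_mul_of_nonneg_right (by rw [hCUdef]; exact le_max_right _ _) hη13pos.le
        _ ≤ CU * m := mul_le_mul_of_nonneg_left h31 hCUpos.le
  -- lower bound on `a`
  have halo : cL' * m ≤ a := by
    have hiWpos : 0 < w₂ iU * (w₁ iU * w₂ iU + τ - 1) :=
      lt_of_lt_of_le (mul_pos hη (hWτpos iU)) ineq1
    have hWτ1 : 0 < w₁ iU * w₂ iU + τ - 1 := DysonAux.pos_factor (hw₂pos iU) hiWpos
    have hsqa : Real.sqrt (1-τ) ≤ κ₀ * a := by
      have h31 : 1 - τ ≤ (κ₀*a)^2 := by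
        have h32 := (hW iU).2
        have : (κ₀*a)^2 = κ₀^2*a^2 := by ring
        linarith
      calc Real.sqrt (1-τ) ≤ Real.sqrt ((κ₀*a)^2) := Real.sqrt_le_sqrt h31
        _ = κ₀ * a := Real.sqrt_sq (mul_pos hκ₀pos hapos).le
    have h37 : Real.sqrt (1-τ) / κ₀ ≤ a := by
      rw [div_le_iff₀ hκ₀pos]
      calc Real.sqrt (1-τ) ≤ κ₀ * a := hsqa
        _ = a * κ₀ := by ring
    by_cases hτhalf : (1:ℝ)/2 ≤ τ
    · have h32 : η * (1/2) ≤ η * (w₁ iU * w₂ iU + τ) := by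
        apply mul_le_mul_of_nonneg_left _ hη.le
        have := mul_pos (hw₁pos iU) (hw₂pos iU)
        linarith
      have h33 : w₂ iU * (w₁ iU * w₂ iU + τ - 1) ≤ κ₀*a * (κ₀^2*a^2) := by
        apply mul_le_mul ((hflat iU).2.2) _ hWτ1.le (mul_pos hκ₀pos hapos).le
        have := (hW iU).2
        linarith
      have h34 : η ≤ 2*κ₀^3 * a^3 := by
        have hr : κ₀*a * (κ₀^2*a^2) = κ₀^3*a^3 := by ring
        have hchain : η * (1/2) ≤ κ₀^3*a^3 := by
          calc η * (1/2) ≤ η * (w₁ iU * w₂ iU + τ) := h32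
            _ ≤ w₂ iU * (w₁ iU * w₂ iU + τ - 1) := ineq1
            _ ≤ κ₀*a * (κ₀^2*a^2) := h33
            _ = κ₀^3*a^3 := hr
        linarith
      have h35 : η ^ ((1:ℝ)/3) ≤ (2*κ₀^3) ^ ((1:ℝ)/3) * a :=
        DysonAux.cube_root_le' hη.le h2κ₀3pos.le hapos.le h34
      have h36 : ca * η^((1:ℝ)/3) ≤ a := by
        have hprod : ca * (2*κ₀^3) ^ ((1:ℝ)/3) = 1 := by
          rw [hcadef, ← Real.mul_rpow (le_of_lt (by rw [one_div]; exact inv_pos.mpr h2κ₀3pos))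
            h2κ₀3pos.le]
          rw [show (1/(2*κ₀^3)) * (2*κ₀^3) = 1 by field_simp]
          exact Real.one_rpow _
        calc ca * η^((1:ℝ)/3) ≤ ca * ((2*κ₀^3) ^ ((1:ℝ)/3) * a) :=
              mul_le_mul_of_nonneg_left h35 hcapos.le
          _ = (ca * (2*κ₀^3) ^ ((1:ℝ)/3)) * a := by ring
          _ = a := by rw [hprod, one_mul]
      have hmin1 : min ca (1/κ₀) ≤ ca := min_le_left _ _
      have hmin2 : min ca (1/κ₀) ≤ 1/κ₀ := min_le_right _ _
      have e5 : min ca (1/κ₀) * η^((1:ℝ)/3) ≤ a :=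
        le_trans (mul_le_mul_of_nonneg_right hmin1 hη13pos.le) h36
      have e6 : min ca (1/κ₀) * Real.sqrt (1-τ) ≤ a := by
        calc min ca (1/κ₀) * Real.sqrt (1-τ) ≤ 1/κ₀ * Real.sqrt (1-τ) :=
              mul_le_mul_of_nonneg_right hmin2 (Real.sqrt_nonneg _)
          _ = Real.sqrt (1-τ)/κ₀ := by ring
          _ ≤ a := h37
      have e7 : cL' ≤ cL := by rw [hcL'def]; exact min_le_left _ _
      have e8 : cL * m ≤ a := by
        rw [hcLdef, hmdef]
        exact DysonAux.half_min e5 e6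
      calc cL' * m ≤ cL * m := mul_le_mul_of_nonneg_right e7 hmpos.le
        _ ≤ a := e8
    · push_neg at hτhalf
      have h38 : Real.sqrt (1/2) ≤ Real.sqrt (1-τ) := Real.sqrt_le_sqrt (by linarith)
      have hs2 : Real.sqrt (1/2) = 1/Real.sqrt 2 := by
        rw [one_div, one_div]
        exact Real.sqrt_inv 2
      have h39 : 1/(Real.sqrt 2 * κ₀) ≤ a := by
        calc 1/(Real.sqrt 2 * κ₀) = (1/Real.sqrt 2)/κ₀ := by ring
          _ = Real.sqrt (1/2)/κ₀ := by rw [hs2]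
          _ ≤ Real.sqrt (1-τ)/κ₀ := (div_le_div_iff_of_pos_right hκ₀pos).mpr h38
          _ ≤ a := h37
      have h40 : cL' ≤ 1/(2*Real.sqrt 2*κ₀) := by rw [hcL'def]; exact min_le_right _ _
      have h41 : cL' * m ≤ 1/(2*Real.sqrt 2*κ₀) * 2 := by
        calc cL' * m ≤ 1/(2*Real.sqrt 2*κ₀) * m :=
              mul_le_mul_of_nonneg_right h40 hmpos.le
          _ ≤ _ := mul_le_mul_of_nonneg_left hm2 (one_div_pos.mpr h2s2κ₀pos).le
      calc cL' * m ≤ 1/(2*Real.sqrt 2*κ₀)*2 := h41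
        _ = 1/(Real.sqrt 2*κ₀) := by
            field_simp
        _ ≤ a := h39
  -- final conversion
  have hC₃' : κ₀^2*a^2 + τ ≤ C₃ := by
    have haa : a^2 ≤ aP^2 := pow_le_pow_left₀ hapos.le haP 2
    have h23 : κ₀^2*a^2 ≤ κ₀^2*aP^2 :=
      mul_le_mul_of_nonneg_left haa (by positivity)
    rw [hC₃def]
    linarith
  have hlowfin : ∀ x : ℝ, 0 < x → κ₁ * a ≤ x * (κ₀^2*a^2 + τ) → cF * m ≤ x := by
    intro x hx hxb
    have h43 : κ₁ * a ≤ x * C₃ :=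
      le_trans hxb (mul_le_mul_of_nonneg_left hC₃' hx.le)
    have h44 : κ₁ * (cL' * m) ≤ κ₁ * a := mul_le_mul_of_nonneg_left halo hκ₁pos.le
    have h45 : κ₁ * (cL' * m) ≤ x * C₃ := le_trans h44 h43
    calc cF * m = (κ₁*(cL'*m))/C₃ := by rw [hcFdef]; ring
      _ ≤ (x*C₃)/C₃ := (div_le_div_iff_of_pos_right hC₃pos).mpr h45
      _ = x := by field_simp
  have hupfin : ∀ x : ℝ, 0 < x → x * (κ₁^2*a^2 + τ) ≤ κ₀ * a → x ≤ CF * m := by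
    intro x hx hxb
    by_cases hτhalf : (1:ℝ)/2 ≤ τ
    · have hsq : (0:ℝ) ≤ κ₁^2*a^2 := by positivity
      have h45 : x * (1/2) ≤ κ₀ * a :=
        le_trans (mul_le_mul_of_nonneg_left (by linarith) hx.le) hxb
      have h47 : 2*κ₀*a ≤ 2*κ₀*(CU*m) :=
        mul_le_mul_of_nonneg_left haCU (mul_pos two_pos hκ₀pos).le
      calc x ≤ 2*κ₀*(CU*m) := by linarith
        _ = (2*κ₀*CU)*m := by ring
        _ ≤ CF*m :=
            mul_le_mul_of_nonneg_right (by rw [hCFdef]; exact le_max_left _ _) hmpos.le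
    · push_neg at hτhalf
      have h48 : (1:ℝ)/2 ≤ m^2 := by
        have h38 : Real.sqrt (1/2) ≤ Real.sqrt (1-τ) := Real.sqrt_le_sqrt (by linarith)
        have h49 : Real.sqrt (1/2)^2 = 1/2 := Real.sq_sqrt (by norm_num)
        have h50 : Real.sqrt (1/2) ≤ m := by
          rw [hmdef]; linarith [hη13pos]
        exact DysonAux.sq_half h50 (Real.sqrt_nonneg _) h49
      have h50 : x * (κ₁^2*a) ≤ κ₀ := by
        have h51 : (x*(κ₁^2*a))*a ≤ κ₀*a := by
          calc (x*(κ₁^2*a))*a = x*(κ₁^2*a^2) := by ring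
            _ ≤ x*(κ₁^2*a^2+τ) := mul_le_mul_of_nonneg_left (by linarith) hx.le
            _ ≤ κ₀*a := hxb
        exact le_of_mul_le_mul_right h51 hapos
      have h52 : x * ((κ₁^2*cL')*m) ≤ κ₀ := by
        have h53 : (κ₁^2*cL')*m = κ₁^2*(cL'*m) := by ring
        have h54 : κ₁^2*(cL'*m) ≤ κ₁^2*a :=
          mul_le_mul_of_nonneg_left halo (by positivity)
        calc x * ((κ₁^2*cL')*m) = x * (κ₁^2*(cL'*m)) := by rw [h53]
          _ ≤ x * (κ₁^2*a) := mul_le_mul_of_nonneg_left h54 hx.le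
          _ ≤ κ₀ := h50
      have h55 : 2*κ₀/(κ₁^2*cL') ≤ CF := by rw [hCFdef]; exact le_max_right _ _
      have hqpos : (0:ℝ) < κ₁^2*cL' := mul_pos (pow_pos hκ₁pos 2) hcL'pos
      have h56 : 2*κ₀ ≤ CF*(κ₁^2*cL') := by
        rw [div_le_iff₀ hqpos] at h55
        linarith
      exact DysonAux.final_up hx hqpos hmpos h52 h56 h48 hκ₀pos
  refine ⟨⟨?_, ?_⟩, ?_, ?_⟩
  · exact hlowfin (v₁ i) (hv₁ i) (hvlb i).1
  · exact hupfin (v₁ i) (hv₁ i) (hvub i).1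
  · exact hlowfin (v₂ i) (hv₂ i) (hvlb i).2
  · exact hupfin (v₂ i) (hv₂ i) (hvub i).2
end

section
/- Outside regime behaviour of the Dyson solution: assume the spectral radius of S equals 1 and fix τ^* > 1. There exist constants c, C > 0, depending only on s_*, s^* and τ^*, such that for all η ∈ (0,1], all τ ∈ [1, τ^*], every index i and a = 1, 2, the unique positive solution satisfies c·η/(τ − 1 + η^{2/3}) ≤ (v_a^τ(η))_i ≤ C·η/(τ − 1 + η^{2/3}). -/
open Matrix

open Filter Topology

attribute [local instance] Matrix.linftyOpNormedRing Matrix.linftyOpNormedAlgebra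

section Aux

/-- monotonicity of mulVec for entrywise nonneg matrices -/
lemma dyson_mulVec_mono {n : ℕ} {S : Matrix (Fin n) (Fin n) ℝ} (hS : ∀ i j, 0 ≤ S i j)
    {p q : Fin n → ℝ} (h : ∀ j, p j ≤ q j) (i : Fin n) : (S *ᵥ p) i ≤ (S *ᵥ q) i := by
  simp only [Matrix.mulVec, dotProduct]
  apply Finset.sum_le_sum
  intro j _
  exact mul_le_mul_of_nonneg_left (h j) (hS i j)

/-- entrywise bounds on mulVec -/
lemma dyson_mv_bounds {n : ℕ} {S : Matrix (Fin n) (Fin n) ℝ} {lo hi : ℝ} {u : Fin n → ℝ}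
    (hS : ∀ i j, lo ≤ S i j ∧ S i j ≤ hi) (hu : ∀ j, 0 ≤ u j) (i : Fin n) :
    lo * ∑ j, u j ≤ (S *ᵥ u) i ∧ (S *ᵥ u) i ≤ hi * ∑ j, u j := by
  simp only [Matrix.mulVec, dotProduct]
  constructor
  · rw [Finset.mul_sum]
    apply Finset.sum_le_sum
    intro j _
    exact mul_le_mul_of_nonneg_right (hS i j).1 (hu j)
  · rw [Finset.mul_sum]
    apply Finset.sum_le_sum
    intro j _
    exact mul_le_mul_of_nonneg_right (hS i j).2 (hu j)

/-- componentwise comparability from a two-sided window -/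
lemma dyson_comp {n : ℕ} {A : Fin n → ℝ} {L η κ : ℝ} (hκ : 1 ≤ κ) (hη : 0 ≤ η) (hL : 0 ≤ L)
    (h : ∀ i, L ≤ A i ∧ A i ≤ κ * L) (i j : Fin n) : η + A i ≤ κ * (η + A j) := by
  have h1 := (h i).2
  have h2 := mul_le_mul_of_nonneg_left (h j).1 (by linarith : (0:ℝ) ≤ κ)
  have h3 : 0 ≤ (κ - 1) * η := mul_nonneg (by linarith) hη
  nlinarith

/-- the weighted-sum identity -/
lemma dyson_sum_identity {n : ℕ} {S : Matrix (Fin n) (Fin n) ℝ} {y v w : Fin n → ℝ} {η : ℝ}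
    (hyeig : S *ᵥ y = y) (hw : ∀ i, w i = η + (Sᵀ *ᵥ v) i) :
    ∑ i, y i * (w i - v i) = η * ∑ i, y i := by
  have h2 : ∑ i, y i * (Sᵀ *ᵥ v) i = ∑ i, y i * v i := by
    calc ∑ i, y i * (Sᵀ *ᵥ v) i = ∑ i, ∑ j, y i * (S j i * v j) := by
          apply Finset.sum_congr rfl
          intro i _
          simp only [Matrix.mulVec, dotProduct, Matrix.transpose_apply, Finset.mul_sum]
      _ = ∑ j, ∑ i, y i * (S j i * v j) := Finset.sum_comm
      _ = ∑ j, ((S *ᵥ y) j) * v j := by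
          apply Finset.sum_congr rfl
          intro j _
          simp only [Matrix.mulVec, dotProduct, Finset.sum_mul]
          apply Finset.sum_congr rfl
          intro i _
          ring
      _ = ∑ j, y j * v j := by
          apply Finset.sum_congr rfl
          intro j _
          rw [hyeig]
  have h1 : ∑ i, y i * w i = η * ∑ i, y i + ∑ i, y i * (Sᵀ *ᵥ v) i := by
    calc ∑ i, y i * w i = ∑ i, (η * y i + y i * (Sᵀ *ᵥ v) i) := by
          apply Finset.sum_congr rfl
          intro i _
          rw [hw i]; ring
      _ = η * ∑ i, y i + ∑ i, y i * (Sᵀ *ᵥ v) i := by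
          rw [Finset.sum_add_distrib, Finset.mul_sum]
  calc ∑ i, y i * (w i - v i) = ∑ i, y i * w i - ∑ i, y i * v i := by
        rw [← Finset.sum_sub_distrib]
        apply Finset.sum_congr rfl
        intro i _; ring
    _ = η * ∑ i, y i := by rw [h1, h2]; ring

end Aux
/-- cross-multiplied comparison for ratios -/
lemma dyson_ratio_le {κ σ τ a a' W W' : ℝ} (hκ : 1 ≤ κ) (hσ : 0 ≤ σ) (hστ : σ ≤ τ)
    (hτ : 0 < τ) (ha : 0 < a) (ha' : 0 < a') (hW : 0 < W) (hW' : 0 < W')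
    (haa : a ≤ κ * a') (h1 : W ≤ κ^2 * W') (h2 : W' ≤ κ^2 * W) :
    a * (W + σ) / (W + τ) ≤ κ^3 * (a' * (W' + σ) / (W' + τ)) := by
  have hden : (0:ℝ) < W + τ := by linarith
  have hden' : (0:ℝ) < W' + τ := by linarith
  rw [show κ^3 * (a' * (W'+σ) / (W'+τ)) = κ^3 * (a' * (W'+σ)) / (W'+τ) by ring]
  rw [div_le_div_iff₀ hden hden']
  have hκ2 : (0:ℝ) ≤ κ^2 - 1 := by nlinarith
  have h3 : (W+σ) * (W'+τ) ≤ κ^2 * ((W'+σ) * (W+τ)) := by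
    nlinarith [mul_nonneg (sub_nonneg.mpr h1) hτ.le, mul_nonneg (sub_nonneg.mpr h2) hσ,
      mul_nonneg (mul_nonneg hκ2 hW.le) hW'.le, mul_nonneg (mul_nonneg hκ2 hσ) hτ.le]
  calc a * (W+σ) * (W'+τ) = a * ((W+σ) * (W'+τ)) := by ring
    _ ≤ (κ * a') * (κ^2 * ((W'+σ) * (W+τ))) := by
        apply mul_le_mul haa h3 (by positivity) (by positivity)
    _ = κ^3 * (a' * (W'+σ)) * (W+τ) := by ring

set_option maxHeartbeats 1000000 in
/-- solving the cubic window -/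
lemma dyson_phi_window {σ η a c4 C4 : ℝ} (hσ : 0 ≤ σ) (hη : 0 < η) (hη1 : η ≤ 1)
    (hc4 : 0 < c4) (hC4 : 0 < C4) (ha : 0 < a)
    (hlo : c4 * η ≤ a^3 + σ * a) (hhi : a^3 + σ * a ≤ C4 * η) :
    min 1 (c4/4) * (η / (σ + η^((2:ℝ)/3))) ≤ a ∧
      a ≤ (8*C4+1) * (η / (σ + η^((2:ℝ)/3))) := by
  set e : ℝ := η^((2:ℝ)/3) with hedef
  have he : 0 < e := Real.rpow_pos_of_pos hη _
  have he1 : e ≤ 1 := Real.rpow_le_one hη.le hη1 (by norm_num)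
  have he3 : e ^ (3:ℕ) = η ^ (2:ℕ) := by
    rw [hedef, ← Real.rpow_natCast (η ^ ((2:ℝ)/3)) 3, ← Real.rpow_mul hη.le,
      show ((2:ℝ)/3) * ((3:ℕ):ℝ) = ((2:ℕ):ℝ) by push_cast; ring, Real.rpow_natCast]
  clear_value e
  set a₀ : ℝ := η / (σ + e) with ha₀def
  have hse : 0 < σ + e := by linarith
  have ha₀ : 0 < a₀ := div_pos hη hse
  -- upper bound on φ(a₀)
  have ha₀3 : a₀^3 ≤ η := by
    have h1 : a₀ ≤ η / e := div_le_div_of_nonneg_left hη.le he (by linarith)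
    have h2 : a₀^3 ≤ (η/e)^3 := pow_le_pow_left₀ ha₀.le h1 3
    have h3 : (η/e)^3 = η^3 / e^3 := div_pow η e 3
    have h4 : η^3 / e^3 = η := by
      rw [he3]
      field_simp
    calc a₀^3 ≤ (η/e)^3 := h2
      _ = η := by rw [h3, h4]
  have hσa₀ : σ * a₀ ≤ η := by
    rw [ha₀def, ← mul_div_assoc, div_le_iff₀ hse]
    nlinarith
  have hupper : a₀^3 + σ * a₀ ≤ 2 * η := by linarith
  -- lower bound on φ(a₀)
  have hsq : (σ + e)/8 ≤ a₀^2 + σ := by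
    rcases le_total σ e with hcase | hcase
    · have h1 : η/(2*e) ≤ a₀ := by
        apply div_le_div_of_nonneg_left hη.le (by positivity)
        linarith
      have h2 : (η/(2*e))^2 ≤ a₀^2 := pow_le_pow_left₀ (by positivity) h1 2
      have h3 : (η/(2*e))^2 = e/4 := by
        rw [div_pow]
        rw [show η^2 = e^3 from he3.symm]
        field_simp
        ring
      nlinarith
    · nlinarith
  have hlower : η/8 ≤ a₀^3 + σ * a₀ := by
    have h1 : a₀ * ((σ+e)/8) ≤ a₀ * (a₀^2 + σ) := mul_le_mul_of_nonneg_left hsq ha₀.le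
    have h2 : a₀ * ((σ+e)/8) = η/8 := by
      rw [ha₀def]; field_simp
    nlinarith
  clear_value a₀
  constructor
  · -- lower bound on a
    set k : ℝ := min 1 (c4/4) with hkdef
    have hk0 : 0 < k := by positivity
    have hk1 : k ≤ 1 := min_le_left _ _
    have hk2 : k ≤ c4/4 := min_le_right _ _
    clear_value k
    by_contra hcon
    push_neg at hcon
    have hk3 : k^3 ≤ k := by nlinarith [mul_nonneg hk0.le (sub_nonneg.mpr hk1)]
    have hpow : a^3 ≤ (k*a₀)^3 := pow_le_pow_left₀ ha.le hcon.le 3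
    have hs : σ*a ≤ σ*(k*a₀) := mul_le_mul_of_nonneg_left hcon.le hσ
    have h2 : (k*a₀)^3 + σ*(k*a₀) ≤ k * (a₀^3 + σ*a₀) := by
      have e2 : k^3*a₀^3 ≤ k*a₀^3 := mul_le_mul_of_nonneg_right hk3 (by positivity)
      nlinarith
    have h3 : k * (a₀^3 + σ*a₀) ≤ k * (2*η) :=
      mul_le_mul_of_nonneg_left hupper hk0.le
    have h4 : k * η ≤ (c4/4) * η := mul_le_mul_of_nonneg_right hk2 hη.le
    nlinarith [mul_pos hc4 hη]
  · -- upper bound on a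
    set K : ℝ := 8*C4+1 with hKdef
    have hK1 : 1 ≤ K := by rw [hKdef]; nlinarith
    have hKC : 8*C4 + 1 ≤ K := le_of_eq hKdef.symm
    have hKC2 : K ≤ 8*C4 + 1 := le_of_eq hKdef
    clear_value K
    by_contra hcon
    push_neg at hcon
    have hK0 : 0 < K := by linarith
    have hK3 : K ≤ K^3 := by nlinarith [mul_nonneg hK0.le (sub_nonneg.mpr hK1)]
    have hpow : (K*a₀)^3 ≤ a^3 := pow_le_pow_left₀ (by positivity) hcon.le 3
    have hs : σ*(K*a₀) ≤ σ*a := mul_le_mul_of_nonneg_left hcon.le hσ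
    have h2 : K * (a₀^3 + σ*a₀) ≤ (K*a₀)^3 + σ*(K*a₀) := by
      have e2 : K*a₀^3 ≤ K^3*a₀^3 := mul_le_mul_of_nonneg_right hK3 (by positivity)
      nlinarith
    have h3 : K * (η/8) ≤ K * (a₀^3 + σ*a₀) :=
      mul_le_mul_of_nonneg_left hlower hK0.le
    have h4 : (8*C4+1) * (η/8) ≤ K * (η/8) :=
      mul_le_mul_of_nonneg_right hKC (by positivity)
    nlinarith [mul_pos hC4 hη, hη]

/-- window bounds from weighted-sum identity -/
lemma dyson_window {n : ℕ} {y d : Fin n → ℝ} {η κ3 : ℝ} (hy : ∀ i, 0 < y i)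
    (hne : Nonempty (Fin n))
    (hsum : ∑ i, y i * d i = η * ∑ i, y i) (hcomp : ∀ i j, d i ≤ κ3 * d j)
    (j : Fin n) : η ≤ κ3 * d j ∧ d j ≤ κ3 * η := by
  obtain ⟨i₀⟩ := hne
  have hY : 0 < ∑ i, y i := Finset.sum_pos (fun i _ => hy i) ⟨i₀, Finset.mem_univ i₀⟩
  constructor
  · have h1 : ∑ i, y i * d i ≤ ∑ i, y i * (κ3 * d j) := by
      apply Finset.sum_le_sum
      intro i _
      exact mul_le_mul_of_nonneg_left (hcomp i j) (hy i).le
    have h2 : ∑ i, y i * (κ3 * d j) = (κ3 * d j) * ∑ i, y i := by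
      rw [Finset.mul_sum]
      apply Finset.sum_congr rfl
      intro i _; ring
    rw [hsum, h2] at h1
    exact le_of_mul_le_mul_right h1 hY
  · have h1 : ∑ i, y i * d j ≤ ∑ i, y i * (κ3 * d i) := by
      apply Finset.sum_le_sum
      intro i _
      exact mul_le_mul_of_nonneg_left (hcomp j i) (hy i).le
    have h2 : ∑ i, y i * d j = d j * ∑ i, y i := by
      rw [Finset.mul_sum]; apply Finset.sum_congr rfl; intro i _; ring
    have h3 : ∑ i, y i * (κ3 * d i) = κ3 * ∑ i, y i * d i := by
      rw [Finset.mul_sum]; apply Finset.sum_congr rfl; intro i _; ring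
    rw [h2, h3, hsum] at h1
    have h4 : d j * (∑ i, y i) ≤ (κ3 * η) * ∑ i, y i := by
      calc d j * (∑ i, y i) ≤ κ3 * (η * ∑ i, y i) := h1
        _ = (κ3 * η) * ∑ i, y i := by ring
    exact le_of_mul_le_mul_right h4 hY
/-- monotonicity of mulVec for entrywise nonneg matrices -/
lemma dyson_perron_exists {n : ℕ} (hn : 0 < n) (S : Matrix (Fin n) (Fin n) ℝ)
    {cc : ℝ} (hcc : 0 < cc) (hpos : ∀ i j, cc ≤ S i j) (hrad : specRad S = 1) :
    ∃ y : Fin n → ℝ, (∀ i, 0 < y i) ∧ S *ᵥ y = y := by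
  haveI : Nonempty (Fin n) := ⟨⟨0, hn⟩⟩
  haveI : Nontrivial (Matrix (Fin n) (Fin n) ℂ) := by infer_instance
  set Sc : Matrix (Fin n) (Fin n) ℂ := S.map (algebraMap ℝ ℂ) with hSc
  have hSnn : ∀ i j, 0 ≤ S i j := fun i j => le_trans hcc.le (hpos i j)
  -- eigenvalue of modulus one
  obtain ⟨lam, hmem, hlam⟩ := spectrum.exists_nnnorm_eq_spectralRadius (a := Sc)
  have hlam1 : ‖lam‖ = 1 := by
    have hr : (spectralRadius ℂ Sc).toReal = 1 := hrad
    have := congrArg ENNReal.toReal hlam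
    rw [hr] at this
    simpa using this
  -- eigenvector
  have hdet : (algebraMap ℂ (Matrix (Fin n) (Fin n) ℂ) lam - Sc).det = 0 := by
    rw [spectrum.mem_iff] at hmem
    by_contra hd
    exact hmem ((Matrix.isUnit_iff_isUnit_det _).mpr (isUnit_iff_ne_zero.mpr hd))
  obtain ⟨z, hz0, hzeq⟩ := Matrix.exists_mulVec_eq_zero_iff.mpr hdet
  have hzeig : Sc *ᵥ z = lam • z := by
    have : (algebraMap ℂ (Matrix (Fin n) (Fin n) ℂ) lam - Sc) *ᵥ z
        = lam • z - Sc *ᵥ z := by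
      rw [Matrix.sub_mulVec, Algebra.algebraMap_eq_smul_one, Matrix.smul_mulVec,
        Matrix.one_mulVec]
    rw [this] at hzeq
    linear_combination (norm := module) -hzeq
  -- y₀ := |z| satisfies S y₀ ≥ y₀
  set y₀ : Fin n → ℝ := fun i => ‖z i‖ with hy₀
  have hy₀nn : ∀ i, 0 ≤ y₀ i := fun i => norm_nonneg _
  obtain ⟨i₀, hi₀⟩ : ∃ i, z i ≠ 0 := Function.ne_iff.mp hz0
  have hy₀pos : 0 < y₀ i₀ := norm_pos_iff.mpr hi₀
  have hsub : ∀ i, y₀ i ≤ (S *ᵥ y₀) i := by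
    intro i
    have h1 : ((Sc *ᵥ z) i) = lam * z i := by rw [hzeig]; rfl
    have h2 : ‖(Sc *ᵥ z) i‖ = y₀ i := by rw [h1, norm_mul, hlam1, one_mul]
    rw [← h2]
    calc ‖(Sc *ᵥ z) i‖ = ‖∑ j, (algebraMap ℝ ℂ) (S i j) * z j‖ := rfl
      _ ≤ ∑ j, ‖(algebraMap ℝ ℂ) (S i j) * z j‖ := norm_sum_le _ _
      _ = ∑ j, S i j * y₀ j := by
          apply Finset.sum_congr rfl
          intro j _
          simp only [hy₀, norm_mul]
          rw [show ((algebraMap ℝ ℂ) (S i j)) = ((S i j : ℝ) : ℂ) from rfl,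
            Complex.norm_real, Real.norm_eq_abs, abs_of_nonneg (hSnn i j)]
      _ = (S *ᵥ y₀) i := rfl
  -- y := S y₀ is positive with S y ≥ y
  set y : Fin n → ℝ := S *ᵥ y₀ with hy
  have hypos : ∀ i, 0 < y i := by
    intro i
    have : cc * y₀ i₀ ≤ (S *ᵥ y₀) i := by
      calc cc * y₀ i₀ ≤ S i i₀ * y₀ i₀ :=
            mul_le_mul_of_nonneg_right (hpos i i₀) (hy₀nn i₀)
        _ ≤ ∑ j, S i j * y₀ j := by
            apply Finset.single_le_sum (f := fun j => S i j * y₀ j)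
            · intro j _; exact mul_nonneg (hSnn i j) (hy₀nn j)
            · exact Finset.mem_univ i₀
        _ = (S *ᵥ y₀) i := rfl
    exact lt_of_lt_of_le (mul_pos hcc hy₀pos) this
  have hygrow : ∀ i, y i ≤ (S *ᵥ y) i := fun i => dyson_mulVec_mono hSnn hsub i
  refine ⟨y, hypos, ?_⟩
  -- suppose not: strict growth somewhere
  by_contra hne
  obtain ⟨j₀, hj₀⟩ : ∃ j, (S *ᵥ y) j ≠ y j := Function.ne_iff.mp hne
  have hj₀' : y j₀ < (S *ᵥ y) j₀ := lt_of_le_of_ne (hygrow j₀) (Ne.symm hj₀)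
  set u : Fin n → ℝ := S *ᵥ y with hu
  have hupos : ∀ i, 0 < u i := fun i => lt_of_lt_of_le (hypos i) (hygrow i)
  set d : ℝ := u j₀ - y j₀ with hdd
  have hd : 0 < d := sub_pos.mpr hj₀'
  set M : ℝ := ∑ j, u j with hM
  have hMpos : 0 < M := by
    have : 0 < u j₀ := hupos j₀
    exact Finset.sum_pos (fun j _ => hupos j) ⟨j₀, Finset.mem_univ j₀⟩
  set θ : ℝ := 1 + cc * d / M with hθ
  have hθ1 : 1 < θ := by
    have h0 : 0 < cc * d / M := div_pos (mul_pos hcc hd) hMpos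
    rw [hθ]
    linarith
  -- S u ≥ θ u
  have hstep : ∀ i, θ * u i ≤ (S *ᵥ u) i := by
    intro i
    have h1 : cc * d ≤ (S *ᵥ u) i - u i := by
      have : (S *ᵥ u) i - u i = (S *ᵥ (u - y)) i := by
        rw [Matrix.mulVec_sub]; simp [hu]
      rw [this]
      calc cc * d ≤ S i j₀ * (u j₀ - y j₀) :=
            mul_le_mul (hpos i j₀) le_rfl hd.le (le_trans hcc.le (hpos i j₀))
        _ ≤ ∑ j, S i j * (u j - y j) := by
            apply Finset.single_le_sum (f := fun j => S i j * (u j - y j))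
            · intro j _; exact mul_nonneg (hSnn i j) (sub_nonneg.mpr (hygrow j))
            · exact Finset.mem_univ j₀
        _ = (S *ᵥ (u - y)) i := rfl
    have h2 : u i ≤ M := by
      rw [hM]
      exact Finset.single_le_sum (fun j _ => (hupos j).le) (Finset.mem_univ i)
    have h3 : (cc * d / M) * u i ≤ cc * d := by
      rw [div_mul_eq_mul_div, div_le_iff₀ hMpos]
      exact mul_le_mul_of_nonneg_left h2 (mul_pos hcc hd).le
    calc θ * u i = u i + (cc * d / M) * u i := by ring
      _ ≤ u i + cc * d := by linarith
      _ ≤ (S *ᵥ u) i := by linarith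
  -- iterate
  have hiter : ∀ k : ℕ, ∀ i, θ ^ k * u i ≤ ((S ^ k) *ᵥ u) i := by
    intro k
    induction k with
    | zero => intro i; simp [Matrix.one_mulVec]
    | succ k ih =>
      intro i
      have h1 : ((S ^ (k+1)) *ᵥ u) i = (S *ᵥ ((S ^ k) *ᵥ u)) i := by
        rw [pow_succ']
        rw [← Matrix.mulVec_mulVec]
      rw [h1]
      have h2 : ∀ j, θ ^ k * u j ≤ ((S ^ k) *ᵥ u) j := ih
      have h3 : (S *ᵥ (fun j => θ ^ k * u j)) i ≤ (S *ᵥ ((S ^ k) *ᵥ u)) i :=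
        dyson_mulVec_mono hSnn h2 i
      have h4 : (S *ᵥ (fun j => θ ^ k * u j)) i = θ ^ k * (S *ᵥ u) i := by
        simp [Matrix.mulVec, dotProduct, Finset.mul_sum]
        apply Finset.sum_congr rfl
        intro j _; ring
      have h5 : θ ^ (k+1) * u i = θ ^ k * (θ * u i) := by ring
      rw [h5]
      calc θ ^ k * (θ * u i) ≤ θ ^ k * (S *ᵥ u) i :=
            mul_le_mul_of_nonneg_left (hstep i) (pow_nonneg (by linarith) k)
        _ = (S *ᵥ (fun j => θ ^ k * u j)) i := h4.symm
        _ ≤ (S *ᵥ ((S ^ k) *ᵥ u)) i := h3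
  -- norm lower bound
  set uC : Fin n → ℂ := fun j => ((u j : ℝ) : ℂ) with huC
  have hlow : ∀ k : ℕ, θ ^ k * u j₀ ≤ ‖Sc ^ k‖ * ‖uC‖ := by
    intro k
    have hpow : Sc ^ k = (S ^ k).map (algebraMap ℝ ℂ) := by
      rw [hSc]; simp only [← RingHom.mapMatrix_apply, map_pow]
    have hmv : (Sc ^ k) *ᵥ uC = fun i => (((S ^ k) *ᵥ u) i : ℂ) := by
      rw [hpow]
      have h := RingHom.map_mulVec (algebraMap ℝ ℂ) (S ^ k) u
      funext i
      have h2 := (h i).symm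
      exact h2
    have h1 : θ ^ k * u j₀ ≤ ((S ^ k) *ᵥ u) j₀ := hiter k j₀
    have h2 : ((S ^ k) *ᵥ u) j₀ ≤ ‖(Sc ^ k) *ᵥ uC‖ := by
      rw [hmv]
      calc ((S ^ k) *ᵥ u) j₀ ≤ ‖(((S ^ k) *ᵥ u) j₀ : ℂ)‖ := by
            rw [Complex.norm_real]; exact le_abs_self _
        _ ≤ ‖fun i => (((S ^ k) *ᵥ u) i : ℂ)‖ :=
            norm_le_pi_norm (f := fun i => (((S ^ k) *ᵥ u) i : ℂ)) j₀
    calc θ ^ k * u j₀ ≤ ‖(Sc ^ k) *ᵥ uC‖ := le_trans h1 h2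
      _ ≤ ‖Sc ^ k‖ * ‖uC‖ := Matrix.linfty_opNorm_mulVec _ _
  -- Gelfand's formula contradiction
  have hnormuC : 0 < ‖uC‖ := by
    have h1 : uC j₀ ≠ 0 := by
      simp only [huC]
      exact_mod_cast (hupos j₀).ne'
    have h2 : ‖uC j₀‖ ≤ ‖uC‖ := norm_le_pi_norm uC j₀
    have h3 : 0 < ‖uC j₀‖ := norm_pos_iff.mpr h1
    linarith
  have hsr1 : spectralRadius ℂ Sc = 1 := (ENNReal.toReal_eq_one_iff _).mp hrad
  have hG := spectrum.pow_norm_pow_one_div_tendsto_nhds_spectralRadius Sc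
  rw [hsr1] at hG
  clear_value θ
  obtain ⟨θ', hθ'1, hθ'θ⟩ : ∃ t : ℝ, 1 < t ∧ t < θ :=
    ⟨(1 + θ) / 2, by linarith [hθ1], by linarith [hθ1]⟩
  have hθpos : (0:ℝ) < θ := by linarith [hθ1]
  have hev1 : ∀ᶠ k : ℕ in atTop,
      ENNReal.ofReal (‖Sc ^ k‖ ^ (1 / (k:ℝ))) < ENNReal.ofReal θ' := by
    apply hG.eventually_lt_const
    rw [← ENNReal.ofReal_one]
    exact (ENNReal.ofReal_lt_ofReal_iff (by linarith)).mpr hθ'1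
  have hratio : (0:ℝ) ≤ θ' / θ := div_nonneg (by linarith) hθpos.le
  have hratio1 : θ' / θ < 1 := (div_lt_one hθpos).mpr hθ'θ
  have hev2 : ∀ᶠ k : ℕ in atTop, (θ' / θ) ^ k < u j₀ / ‖uC‖ := by
    have := tendsto_pow_atTop_nhds_zero_of_lt_one hratio hratio1
    exact this.eventually_lt_const (div_pos (hupos j₀) hnormuC)
  obtain ⟨k, hk1, hk2, hk3⟩ := (hev1.and (hev2.and (eventually_ge_atTop 1))).exists
  have hk0 : (k:ℝ) ≠ 0 := Nat.cast_ne_zero.mpr (by omega)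
  have hxk : ‖Sc ^ k‖ < θ' ^ k := by
    have h1 : ‖Sc ^ k‖ ^ (1 / (k:ℝ)) < θ' :=
      (ENNReal.ofReal_lt_ofReal_iff (by linarith)).mp hk1
    have h2 : (‖Sc ^ k‖ ^ (1 / (k:ℝ))) ^ (k:ℕ) = ‖Sc ^ k‖ := by
      rw [← Real.rpow_natCast (‖Sc ^ k‖ ^ (1 / (k:ℝ))) k, ← Real.rpow_mul (norm_nonneg _)]
      rw [one_div_mul_cancel hk0, Real.rpow_one]
    calc ‖Sc ^ k‖ = (‖Sc ^ k‖ ^ (1 / (k:ℝ))) ^ (k:ℕ) := h2.symm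
      _ < θ' ^ k := by
          apply pow_lt_pow_left₀ h1 (Real.rpow_nonneg (norm_nonneg _) _)
          omega
  have hA : θ' ^ k < θ ^ k * (u j₀ / ‖uC‖) := by
    have hmul : (θ' / θ) ^ k * θ ^ k = θ' ^ k := by
      rw [← mul_pow, div_mul_cancel₀ _ hθpos.ne']
    calc θ' ^ k = (θ' / θ) ^ k * θ ^ k := hmul.symm
      _ < (u j₀ / ‖uC‖) * θ ^ k := mul_lt_mul_of_pos_right hk2 (pow_pos hθpos k)
      _ = θ ^ k * (u j₀ / ‖uC‖) := by ring
  have hB := hlow k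
  have hC : θ ^ k * (u j₀ / ‖uC‖) * ‖uC‖ = θ ^ k * u j₀ := by
    field_simp
  nlinarith [pow_pos hθpos k, mul_lt_mul_of_pos_right hxk hnormuC,
    mul_lt_mul_of_pos_right hA hnormuC]
set_option maxHeartbeats 1000000 in
lemma dyson_core {κ τ τsup σ η a b : ℝ} (hκ : 1 ≤ κ) (hτ1 : 1 ≤ τ) (hττ : τ ≤ τsup)
    (hτs : 1 < τsup) (hσdef : σ = τ - 1)
    (hη : 0 < η) (hη1 : η ≤ 1) (ha : 0 < a) (hb : 0 < b)
    (hda : η ≤ κ^3 * (a * (a*b+σ) / (a*b+τ))) (hda' : a * (a*b+σ) / (a*b+τ) ≤ κ^3 * η)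
    (hdb : η ≤ κ^3 * (b * (a*b+σ) / (a*b+τ))) (hdb' : b * (a*b+σ) / (a*b+τ) ≤ κ^3 * η) :
    min 1 ((1/κ^9)/4) / ((κ^3*(2+τsup))^2 + τsup) * (η / (σ + η^((2:ℝ)/3))) ≤ a / (a*b+τ) ∧
      a / (a*b+τ) ≤ (8*(κ^9*((κ^3*(2+τsup))^2 + τsup))+1) * (η / (σ + η^((2:ℝ)/3))) := by
  have hκ0 : (0:ℝ) < κ := by linarith
  have hσ0 : 0 ≤ σ := by rw [hσdef]; linarith
  have hστ : σ ≤ τ := by rw [hσdef]; linarith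
  set W : ℝ := a * b with hWdef
  have hW0 : 0 < W := mul_pos ha hb
  have hden : (0:ℝ) < W + τ := by linarith
  have hden1 : (1:ℝ) ≤ W + τ := by linarith
  have hnum : (0:ℝ) < W + σ := by linarith
  have hg : 0 < (W+σ)/(W+τ) := div_pos hnum hden
  -- comparability of a and b
  have hba : b ≤ κ^6 * a := by
    have h1 : b * ((W+σ)/(W+τ)) ≤ (κ^6*a) * ((W+σ)/(W+τ)) := by
      have h2 := mul_le_mul_of_nonneg_left hda (by positivity : (0:ℝ) ≤ κ^3)
      calc b * ((W+σ)/(W+τ)) = b*(W+σ)/(W+τ) := by ring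
        _ ≤ κ^3*η := hdb'
        _ ≤ κ^3*(κ^3*(a*(W+σ)/(W+τ))) := h2
        _ = (κ^6*a)*((W+σ)/(W+τ)) := by ring
    exact le_of_mul_le_mul_right h1 hg
  have hab : a ≤ κ^6 * b := by
    have h1 : a * ((W+σ)/(W+τ)) ≤ (κ^6*b) * ((W+σ)/(W+τ)) := by
      have h2 := mul_le_mul_of_nonneg_left hdb (by positivity : (0:ℝ) ≤ κ^3)
      calc a * ((W+σ)/(W+τ)) = a*(W+σ)/(W+τ) := by ring
        _ ≤ κ^3*η := hda'
        _ ≤ κ^3*(κ^3*(b*(W+σ)/(W+τ))) := h2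
        _ = (κ^6*b)*((W+σ)/(W+τ)) := by ring
    exact le_of_mul_le_mul_right h1 hg
  have hW2hi : a^2 ≤ κ^6 * W := by
    have := mul_le_mul_of_nonneg_left hab ha.le
    nlinarith
  have hW2lo : W ≤ κ^6 * a^2 := by
    have := mul_le_mul_of_nonneg_left hba ha.le
    nlinarith
  -- upper bound on a
  have hatop : a ≤ κ^3*(2+τsup) := by
    by_contra hcon
    push_neg at hcon
    have hκ3 : (0:ℝ) < κ^3 := by positivity
    have hκ6 : (0:ℝ) < κ^6 := by positivity
    have hsq : (κ^3*(2+τsup))^2 < a^2 := by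
      have h0 := mul_self_lt_mul_self (by positivity : (0:ℝ) ≤ κ^3*(2+τsup)) hcon
      nlinarith [h0]
    have hW' : κ^6*((2+τsup)^2) < κ^6*W := by nlinarith
    have hW'' : (2+τsup)^2 < W := lt_of_mul_lt_mul_left hW' hκ6.le
    have hWτ : τ < W := by nlinarith
    have hdiv : a/2 ≤ a*(W+σ)/(W+τ) := by
      rw [div_le_div_iff₀ (by norm_num) hden]
      nlinarith
    have h5 : a/2 ≤ κ^3*η := le_trans hdiv hda'
    nlinarith [mul_le_mul_of_nonneg_left hη1 hκ3.le]
  have hbtop : b ≤ κ^3*(2+τsup) := by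
    by_contra hcon
    push_neg at hcon
    have hκ3 : (0:ℝ) < κ^3 := by positivity
    have hκ6 : (0:ℝ) < κ^6 := by positivity
    have hW2hi' : b^2 ≤ κ^6 * W := by
      have := mul_le_mul_of_nonneg_left hab hb.le
      nlinarith
    have hsq : (κ^3*(2+τsup))^2 < b^2 := by
      have h0 := mul_self_lt_mul_self (by positivity : (0:ℝ) ≤ κ^3*(2+τsup)) hcon
      nlinarith [h0]
    have hW' : κ^6*((2+τsup)^2) < κ^6*W := by nlinarith
    have hW'' : (2+τsup)^2 < W := lt_of_mul_lt_mul_left hW' hκ6.le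
    have hWτ : τ < W := by nlinarith
    have hdiv : b/2 ≤ b*(W+σ)/(W+τ) := by
      rw [div_le_div_iff₀ (by norm_num) hden]
      nlinarith
    have h5 : b/2 ≤ κ^3*η := le_trans hdiv hdb'
    nlinarith [mul_le_mul_of_nonneg_left hη1 hκ3.le]
  set C0 : ℝ := κ^3*(2+τsup) with hC0def
  have hC00 : 0 < C0 := by positivity
  have hWtop : W + τ ≤ C0^2 + τsup := by
    have h1 : W ≤ C0^2 := by
      have := mul_le_mul hatop hbtop hb.le hC00.le
      nlinarith
    linarith
  -- window for a*(W+σ)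
  have haWhi : a*(W+σ) ≤ κ^3*η*(C0^2+τsup) := by
    have h1 : a*(W+σ) ≤ κ^3*η*(W+τ) := by
      rw [← div_le_iff₀ hden]
      exact hda'
    calc a*(W+σ) ≤ κ^3*η*(W+τ) := h1
      _ ≤ κ^3*η*(C0^2+τsup) := by
          apply mul_le_mul_of_nonneg_left hWtop (by positivity)
  have haWlo : η ≤ κ^3*(a*(W+σ)) := by
    have h1 : a*(W+σ)/(W+τ) ≤ a*(W+σ) := by
      apply div_le_self (by positivity) hden1
    calc η ≤ κ^3*(a*(W+σ)/(W+τ)) := hda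
      _ ≤ κ^3*(a*(W+σ)) := by
          apply mul_le_mul_of_nonneg_left h1 (by positivity)
  -- cubic window
  have hphihi : a^3 + σ*a ≤ (κ^9*(C0^2+τsup))*η := by
    have h1 : a^3 ≤ κ^6*(a*W) := by nlinarith
    have h2 : σ*a ≤ κ^6*(σ*a) := by nlinarith [mul_nonneg hσ0 ha.le]
    have h3 : a^3 + σ*a ≤ κ^6*(a*(W+σ)) := by nlinarith
    calc a^3 + σ*a ≤ κ^6*(a*(W+σ)) := h3
      _ ≤ κ^6*(κ^3*η*(C0^2+τsup)) := by
          apply mul_le_mul_of_nonneg_left haWhi (by positivity)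
      _ = (κ^9*(C0^2+τsup))*η := by ring
  have hphilo : (1/κ^9)*η ≤ a^3 + σ*a := by
    have h1 : a*(W+σ) ≤ κ^6*(a^3+σ*a) := by nlinarith [mul_nonneg hσ0 ha.le]
    have h2 : η ≤ κ^9*(a^3+σ*a) := by
      calc η ≤ κ^3*(a*(W+σ)) := haWlo
        _ ≤ κ^3*(κ^6*(a^3+σ*a)) := by
            apply mul_le_mul_of_nonneg_left h1 (by positivity)
        _ = κ^9*(a^3+σ*a) := by ring
    have h3 := mul_le_mul_of_nonneg_left h2 (by positivity : (0:ℝ) ≤ 1/κ^9)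
    have h4 : (1/κ^9)*(κ^9*(a^3+σ*a)) = a^3+σ*a := by field_simp
    linarith
  obtain ⟨hwlo, hwhi⟩ := dyson_phi_window hσ0 hη hη1 (by positivity : (0:ℝ) < 1/κ^9)
    (by positivity : (0:ℝ) < κ^9*(C0^2+τsup)) ha hphilo hphihi
  have hD0 : (0:ℝ) < C0^2 + τsup := by positivity
  constructor
  · have h1 : a/(C0^2+τsup) ≤ a/(W+τ) :=
      div_le_div_of_nonneg_left ha.le hden hWtop
    have h2 : (min 1 ((1/κ^9)/4) * (η/(σ+η^((2:ℝ)/3))))/(C0^2+τsup) ≤ a/(C0^2+τsup) :=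
      (div_le_div_iff_of_pos_right hD0).mpr hwlo
    calc min 1 ((1/κ^9)/4) / (C0^2+τsup) * (η/(σ+η^((2:ℝ)/3)))
        = (min 1 ((1/κ^9)/4) * (η/(σ+η^((2:ℝ)/3))))/(C0^2+τsup) := by ring
      _ ≤ a/(C0^2+τsup) := h2
      _ ≤ a/(W+τ) := h1
  · calc a/(W+τ) ≤ a := div_le_self ha.le hden1
      _ ≤ (8*(κ^9*(C0^2+τsup))+1) * (η/(σ+η^((2:ℝ)/3))) := hwhi

lemma dyson_specRad_transpose {n : ℕ} (S : Matrix (Fin n) (Fin n) ℝ) :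
    specRad Sᵀ = specRad S := by
  have hspec : spectrum ℂ ((Sᵀ).map (algebraMap ℝ ℂ)) = spectrum ℂ (S.map (algebraMap ℝ ℂ)) := by
    ext μ
    simp only [spectrum.mem_iff]
    have key : (algebraMap ℂ (Matrix (Fin n) (Fin n) ℂ)) μ - (Sᵀ).map (algebraMap ℝ ℂ)
        = ((algebraMap ℂ (Matrix (Fin n) (Fin n) ℂ)) μ - S.map (algebraMap ℝ ℂ))ᵀ := by
      rw [Matrix.transpose_sub, Matrix.transpose_map]
      congr 1
      rw [Algebra.algebraMap_eq_smul_one, Matrix.transpose_smul, Matrix.transpose_one]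
    rw [key]
    have hIsU : ∀ M : Matrix (Fin n) (Fin n) ℂ, IsUnit Mᵀ ↔ IsUnit M := by
      intro M
      rw [Matrix.isUnit_iff_isUnit_det, Matrix.det_transpose, ← Matrix.isUnit_iff_isUnit_det]
    exact not_congr (hIsU _)
  unfold specRad spectralRadius
  rw [hspec]

set_option maxHeartbeats 2000000 in
/-- **Outside regime behaviour of the Dyson solution:** if `ρ(S) = 1` and
`τ⁺ > 1`, then uniformly for `η ∈ (0,1]` and `τ ∈ [1, τ⁺]` the positive
solution satisfies `v_a ∼ η/(τ - 1 + η^{2/3})`, with constants depending only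
on `s⁎`, `s⁺` and `τ⁺`. -/
theorem dyson_solution_outside_regime
    (sl su τsup : ℝ) (hsl : 0 < sl) (hslsu : sl ≤ su) (hτsup : 1 < τsup) :
    ∃ c > (0:ℝ), ∃ C > (0:ℝ),
      ∀ (n : ℕ), 1 ≤ n → ∀ S : Matrix (Fin n) (Fin n) ℝ,
        (∀ i j, sl / n ≤ S i j ∧ S i j ≤ su / n) → specRad S = 1 →
        ∀ η : ℝ, 0 < η → η ≤ 1 → ∀ τ : ℝ, τ ∈ Set.Icc (1:ℝ) τsup →
          ∀ v₁ v₂ : Fin n → ℝ, IsDysonSolution S τ η v₁ v₂ →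
            ∀ i,
              (c * η / (τ - 1 + η ^ ((2:ℝ)/3)) ≤ v₁ i ∧
                v₁ i ≤ C * η / (τ - 1 + η ^ ((2:ℝ)/3))) ∧
              (c * η / (τ - 1 + η ^ ((2:ℝ)/3)) ≤ v₂ i ∧
                v₂ i ≤ C * η / (τ - 1 + η ^ ((2:ℝ)/3))) := by
  have hκ : 1 ≤ su/sl := (one_le_div hsl).mpr hslsu
  set κ : ℝ := su/sl with hκdef
  have hκ0 : (0:ℝ) < κ := by linarith
  have hts0 : (0:ℝ) < τsup := by linarith
  have hD0 : (0:ℝ) < (κ^3*(2+τsup))^2 + τsup := by nlinarith [sq_nonneg (κ^3*(2+τsup))]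
  refine ⟨min 1 ((1/κ^9)/4) / ((κ^3*(2+τsup))^2 + τsup), ?_,
    8*(κ^9*((κ^3*(2+τsup))^2 + τsup))+1, ?_, ?_⟩
  · exact div_pos (lt_min one_pos (by positivity)) hD0
  · nlinarith [mul_pos (pow_pos hκ0 9) hD0]
  intro n hn S hS hrad η hη hη1 τ hτ v₁ v₂ hsol i
  obtain ⟨hτ1, hττ⟩ := hτ
  have hn0 : (0:ℝ) < (n:ℝ) := by exact_mod_cast Nat.pos_of_ne_zero (by omega)
  have hsln : (0:ℝ) < sl/n := div_pos hsl hn0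
  haveI hne : Nonempty (Fin n) := ⟨⟨0, by omega⟩⟩
  obtain ⟨hv₁pos, hv₂pos, heq₁, heq₂⟩ := hsol
  have hτ0 : (0:ℝ) < τ := by linarith
  set σ : ℝ := τ - 1 with hσdef
  have hσ0 : 0 ≤ σ := by rw [hσdef]; linarith
  have hστ : σ ≤ τ := by rw [hσdef]; linarith
  -- Perron vectors
  obtain ⟨y, hy, hyeig⟩ := dyson_perron_exists (by omega) S hsln (fun i j => (hS i j).1) hrad
  have hST : ∀ i j, sl/(n:ℝ) ≤ Sᵀ i j ∧ Sᵀ i j ≤ su/n := fun i j => hS j i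
  obtain ⟨x, hx, hxeig⟩ := dyson_perron_exists (by omega) Sᵀ hsln (fun i j => (hST i j).1)
    (by rw [dyson_specRad_transpose]; exact hrad)
  -- auxiliary functions
  set w₁ : Fin n → ℝ := fun i => η + (Sᵀ *ᵥ v₁) i with hw₁def
  set w₂ : Fin n → ℝ := fun i => η + (S *ᵥ v₂) i with hw₂def
  have hw₁app : ∀ i, w₁ i = η + (Sᵀ *ᵥ v₁) i := fun i => rfl
  have hw₂app : ∀ i, w₂ i = η + (S *ᵥ v₂) i := fun i => rfl
  have hT₁ : 0 < ∑ j, v₁ j := Finset.sum_pos (fun j _ => hv₁pos j) Finset.univ_nonempty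
  have hT₂ : 0 < ∑ j, v₂ j := Finset.sum_pos (fun j _ => hv₂pos j) Finset.univ_nonempty
  have hmv₁ := fun i' => dyson_mv_bounds hST (fun j => (hv₁pos j).le) i'
  have hmv₂ := fun i' => dyson_mv_bounds hS (fun j => (hv₂pos j).le) i'
  have hw₁pos : ∀ i', 0 < w₁ i' := by
    intro i'
    rw [hw₁app i']
    nlinarith [(hmv₁ i').1, mul_pos hsln hT₁]
  have hw₂pos : ∀ i', 0 < w₂ i' := by
    intro i'
    rw [hw₂app i']
    nlinarith [(hmv₂ i').1, mul_pos hsln hT₂]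
  have hsun : su/(n:ℝ) = κ * (sl/n) := by
    rw [hκdef]
    field_simp
  -- componentwise comparability
  have hw₁comp : ∀ i' j', w₁ i' ≤ κ * w₁ j' := by
    intro i' j'
    rw [hw₁app i', hw₁app j']
    apply dyson_comp hκ hη.le (by positivity : (0:ℝ) ≤ sl/n * ∑ j, v₁ j)
    intro i''
    refine ⟨(hmv₁ i'').1, ?_⟩
    calc (Sᵀ *ᵥ v₁) i'' ≤ su/n * ∑ j, v₁ j := (hmv₁ i'').2
      _ = κ * (sl/n * ∑ j, v₁ j) := by rw [hsun]; ring
  have hw₂comp : ∀ i' j', w₂ i' ≤ κ * w₂ j' := by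
    intro i' j'
    rw [hw₂app i', hw₂app j']
    apply dyson_comp hκ hη.le (by positivity : (0:ℝ) ≤ sl/n * ∑ j, v₂ j)
    intro i''
    refine ⟨(hmv₂ i'').1, ?_⟩
    calc (S *ᵥ v₂) i'' ≤ su/n * ∑ j, v₂ j := (hmv₂ i'').2
      _ = κ * (sl/n * ∑ j, v₂ j) := by rw [hsun]; ring
  -- v in terms of w
  have hWpos : ∀ i', 0 < w₁ i' * w₂ i' := fun i' => mul_pos (hw₁pos i') (hw₂pos i')
  have hdenpos : ∀ i', 0 < w₁ i' * w₂ i' + τ := fun i' => by nlinarith [hWpos i']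
  have hv₁form : ∀ i', v₁ i' = w₁ i' / (w₁ i' * w₂ i' + τ) := by
    intro i'
    have h := heq₁ i'
    rw [← hw₂app i', ← hw₁app i'] at h
    have hv0 : v₁ i' ≠ 0 := (hv₁pos i').ne'
    have hw0 : w₁ i' ≠ 0 := (hw₁pos i').ne'
    rw [eq_div_iff (hdenpos i').ne']
    field_simp at h
    linarith [h]
  have hv₂form : ∀ i', v₂ i' = w₂ i' / (w₁ i' * w₂ i' + τ) := by
    intro i'
    have h := heq₂ i'
    rw [← hw₂app i', ← hw₁app i'] at h
    have hv0 : v₂ i' ≠ 0 := (hv₂pos i').ne'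
    have hw0 : w₂ i' ≠ 0 := (hw₂pos i').ne'
    rw [eq_div_iff (hdenpos i').ne']
    field_simp at h
    linarith [h]
  have hdrep : ∀ i', w₁ i' - v₁ i' = w₁ i' * (w₁ i' * w₂ i' + σ) / (w₁ i' * w₂ i' + τ) := by
    intro i'
    rw [hv₁form i', hσdef]
    field_simp [(hdenpos i').ne']
    ring
  have herep : ∀ i', w₂ i' - v₂ i' = w₂ i' * (w₁ i' * w₂ i' + σ) / (w₁ i' * w₂ i' + τ) := by
    intro i'
    rw [hv₂form i', hσdef]
    rw [eq_div_iff (hdenpos i').ne', sub_mul, div_mul_cancel₀ _ (hdenpos i').ne']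
    ring
  -- comparability of the summands
  have hWcomp : ∀ i' j', w₁ i' * w₂ i' ≤ κ^2 * (w₁ j' * w₂ j') := by
    intro i' j'
    have h := mul_le_mul (hw₁comp i' j') (hw₂comp i' j') (hw₂pos i').le
      (mul_nonneg hκ0.le (hw₁pos j').le)
    nlinarith [h]
  have hdcomp : ∀ i' j', (w₁ i' - v₁ i') ≤ κ^3 * (w₁ j' - v₁ j') := by
    intro i' j'
    rw [hdrep i', hdrep j']
    exact dyson_ratio_le hκ hσ0 hστ hτ0 (hw₁pos i') (hw₁pos j') (hWpos i') (hWpos j')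
      (hw₁comp i' j') (hWcomp i' j') (hWcomp j' i')
  have hecomp : ∀ i' j', (w₂ i' - v₂ i') ≤ κ^3 * (w₂ j' - v₂ j') := by
    intro i' j'
    rw [herep i', herep j']
    exact dyson_ratio_le hκ hσ0 hστ hτ0 (hw₂pos i') (hw₂pos j') (hWpos i') (hWpos j')
      (hw₂comp i' j') (hWcomp i' j') (hWcomp j' i')
  -- sum identities
  have hE1 : ∑ i', y i' * (w₁ i' - v₁ i') = η * ∑ i', y i' :=
    dyson_sum_identity hyeig hw₁app
  have hE2 : ∑ i', x i' * (w₂ i' - v₂ i') = η * ∑ i', x i' := by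
    apply dyson_sum_identity (S := Sᵀ) hxeig
    intro i'
    rw [hw₂app i', Matrix.transpose_transpose]
  have hdwin := dyson_window hy hne hE1 hdcomp i
  have hewin := dyson_window hx hne hE2 hecomp i
  rw [hdrep i] at hdwin
  rw [herep i] at hewin
  -- apply the scalar core lemma
  have hcore₁ := dyson_core (a := w₁ i) (b := w₂ i) hκ hτ1 hττ hτsup hσdef hη hη1
    (hw₁pos i) (hw₂pos i) hdwin.1 hdwin.2 hewin.1 hewin.2
  have hcomm : w₂ i * w₁ i = w₁ i * w₂ i := mul_comm _ _
  have hda₂ : η ≤ κ^3 * (w₂ i * (w₂ i * w₁ i + σ) / (w₂ i * w₁ i + τ)) := by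
    rw [hcomm]; exact hewin.1
  have hda₂' : w₂ i * (w₂ i * w₁ i + σ) / (w₂ i * w₁ i + τ) ≤ κ^3 * η := by
    rw [hcomm]; exact hewin.2
  have hdb₂ : η ≤ κ^3 * (w₁ i * (w₂ i * w₁ i + σ) / (w₂ i * w₁ i + τ)) := by
    rw [hcomm]; exact hdwin.1
  have hdb₂' : w₁ i * (w₂ i * w₁ i + σ) / (w₂ i * w₁ i + τ) ≤ κ^3 * η := by
    rw [hcomm]; exact hdwin.2
  have hcore₂ := dyson_core (a := w₂ i) (b := w₁ i) hκ hτ1 hττ hτsup hσdef hη hη1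
    (hw₂pos i) (hw₁pos i) hda₂ hda₂' hdb₂ hdb₂'
  rw [hcomm] at hcore₂
  rw [← hv₁form i] at hcore₁
  rw [← hv₂form i] at hcore₂
  rw [mul_div_assoc, mul_div_assoc]
  exact ⟨⟨hcore₁.1, hcore₁.2⟩, ⟨hcore₂.1, hcore₂.2⟩⟩
end

section
/- Spectral structure of F: for every τ ≥ 0 and η > 0, the eigenspace of the symmetric matrix F corresponding to its largest eigenvalue ‖F‖₂ is one-dimensional and spanned by a unique entrywise positive eigenvector f₊ with ‖f₊‖₂ = 1, i.e., F f₊ = ‖F‖₂ f₊. The norm satisfies ‖F‖₂ = 1 − η·⟨f₊ √(v/(η + S_o v))⟩ / ⟨f₊ √(v(η + S_o v))⟩. Moreover, setting f₋ := e₋ f₊ (componentwise product), where e₋ := (1,…,1,−1,…,−1) ∈ ℝ^{2n}, one has F f₋ = −‖F‖₂ f₋. -/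
set_option linter.unusedSectionVars false
set_option linter.unusedVariables false



open Matrix

/-- The `2n × 2n` block matrix `S_o = [[0, S], [Sᵗ, 0]]`. -/
def SoM {n : ℕ} (S : Matrix (Fin n) (Fin n) ℝ) :
    Matrix (Fin n ⊕ Fin n) (Fin n ⊕ Fin n) ℝ :=
  Matrix.fromBlocks 0 S S.transpose 0

/-- The auxiliary vector `u = v₁/(η + Sᵗ v₁)`. -/
noncomputable def uvec {n : ℕ} (S : Matrix (Fin n) (Fin n) ℝ) (η : ℝ)
    (v₁ : Fin n → ℝ) : Fin n → ℝ :=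
  fun i => v₁ i / (η + S.transpose.mulVec v₁ i)

/-- The matrix `F`, acting by `F y = √(v u/ṽ) · S_o(√(v u/ṽ) · y)`, realized as
`diag(w) S_o diag(w)` with `w = √(v u/ṽ)`. -/
noncomputable def FM {n : ℕ} (S : Matrix (Fin n) (Fin n) ℝ) (η : ℝ)
    (v₁ v₂ : Fin n → ℝ) : Matrix (Fin n ⊕ Fin n) (Fin n ⊕ Fin n) ℝ :=
  Matrix.diagonal
      (Sum.elim (fun i => Real.sqrt (v₁ i * uvec S η v₁ i / v₂ i))
        (fun i => Real.sqrt (v₂ i * uvec S η v₁ i / v₁ i))) *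
    SoM S *
    Matrix.diagonal
      (Sum.elim (fun i => Real.sqrt (v₁ i * uvec S η v₁ i / v₂ i))
        (fun i => Real.sqrt (v₂ i * uvec S η v₁ i / v₁ i)))

/-- The ℓ² → ℓ² operator norm of a real matrix. -/
noncomputable def opNorm2 {m : Type*} [Fintype m] [DecidableEq m]
    (A : Matrix m m ℝ) : ℝ :=
  ‖LinearMap.toContinuousLinearMap (Matrix.toEuclideanLin A)‖

/-- The normalized ℓ² norm `‖x‖₂ = ((card m)⁻¹ ∑ᵢ xᵢ²)^{1/2}`. -/
noncomputable def nrm2 {m : Type*} [Fintype m] (x : m → ℝ) : ℝ :=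
  Real.sqrt ((∑ i, (x i) ^ 2) / (Fintype.card m))

/-- The normalized average `⟨w⟩ = (card m)⁻¹ ∑ᵢ wᵢ`. -/
noncomputable def avg2 {m : Type*} [Fintype m] (w : m → ℝ) : ℝ :=
  (∑ i, w i) / (Fintype.card m)

/-- The sign vector `e₋ = (1, …, 1, −1, …, −1)`. -/
def eMinus {n : ℕ} : Fin n ⊕ Fin n → ℝ :=
  Sum.elim (fun _ => (1:ℝ)) (fun _ => (-1:ℝ))





namespace SpecAux
variable {m : Type*} [Fintype m] [DecidableEq m]

noncomputable def tC (M : Matrix m m ℝ) : EuclideanSpace ℝ m →L[ℝ] EuclideanSpace ℝ m :=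
  LinearMap.toContinuousLinearMap (Matrix.toEuclideanLin M)

lemma tC_apply (M : Matrix m m ℝ) (x : EuclideanSpace ℝ m) : ⇑(tC M x) = M.mulVec ⇑x := rfl

lemma inner_eq (x y : EuclideanSpace ℝ m) : inner ℝ x y = ∑ i, x i * y i := by
  simp [PiLp.inner_apply, RCLike.inner_apply, conj_trivial]
  exact Finset.sum_congr rfl fun i _ => mul_comm _ _

lemma norm_sq_eq (x : EuclideanSpace ℝ m) : ‖x‖ ^ 2 = ∑ i, x i ^ 2 := by
  rw [← real_inner_self_eq_norm_sq, inner_eq]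
  exact Finset.sum_congr rfl fun i _ => (sq (x i)).symm

lemma reApply_eq (M : Matrix m m ℝ) (x : EuclideanSpace ℝ m) :
    (tC M).reApplyInnerSelf x = (⇑x) ⬝ᵥ M.mulVec ⇑x := by
  rw [ContinuousLinearMap.reApplyInnerSelf_apply]
  rw [show @inner ℝ _ _ (tC M x) x = ∑ i, (tC M x) i * x i from inner_eq _ _]
  simp only [RCLike.re_to_real, tC_apply]
  rw [dotProduct]
  exact Finset.sum_congr rfl fun i _ => mul_comm _ _

lemma selfAdj (M : Matrix m m ℝ) (hsym : M.transpose = M) : IsSelfAdjoint (tC M) := by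
  rw [ContinuousLinearMap.isSelfAdjoint_iff_isSymmetric]
  have : (tC M : EuclideanSpace ℝ m →ₗ[ℝ] EuclideanSpace ℝ m) = Matrix.toEuclideanLin M := rfl
  rw [this]
  rw [← Matrix.isHermitian_iff_isSymmetric]
  unfold Matrix.IsHermitian
  rw [Matrix.conjTranspose]
  ext i j; rw [Matrix.map_apply, star_trivial]; exact congrFun (congrFun hsym i) j

end SpecAux

namespace SpecAux
variable {m : Type*} [Fintype m] [DecidableEq m]

lemma dot_pos {f g : m → ℝ} (hf : ∀ k, 0 < f k) (hg : ∀ k, 0 ≤ g k) (hg0 : g ≠ 0) :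
    0 < f ⬝ᵥ g := by
  obtain ⟨k0, hk0⟩ : ∃ k, g k ≠ 0 := by
    by_contra h
    push_neg at h
    exact hg0 (funext h)
  refine Finset.sum_pos' (fun k _ => mul_nonneg (hf k).le (hg k)) ⟨k0, Finset.mem_univ _, ?_⟩
  exact mul_pos (hf k0) (lt_of_le_of_ne (hg k0) (Ne.symm hk0))

lemma lemB (M : Matrix m m ℝ) (hsym : M.transpose = M) {a b : ℝ} {f g : m → ℝ}
    (hf : ∀ k, 0 < f k) (hg : ∀ k, 0 ≤ g k) (hg0 : g ≠ 0)
    (hfe : M.mulVec f = a • f) (hge : M.mulVec g = b • g) : a = b := by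
  have hsymdot : ∀ x y : m → ℝ, x ⬝ᵥ M.mulVec y = (M.mulVec x) ⬝ᵥ y := by
    intro x y
    rw [Matrix.dotProduct_mulVec, ← Matrix.mulVec_transpose, hsym]
  have key : a * (f ⬝ᵥ g) = b * (f ⬝ᵥ g) := by
    calc a * (f ⬝ᵥ g) = (a • f) ⬝ᵥ g := by rw [smul_dotProduct, smul_eq_mul]
    _ = (M.mulVec f) ⬝ᵥ g := by rw [hfe]
    _ = f ⬝ᵥ (M.mulVec g) := (hsymdot f g).symm
    _ = f ⬝ᵥ (b • g) := by rw [hge]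
    _ = b * (f ⬝ᵥ g) := by rw [dotProduct_smul, smul_eq_mul]
  exact mul_right_cancel₀ (dot_pos hf hg hg0).ne' key

lemma lemA [Nonempty m] (M : Matrix m m ℝ) (hsym : M.transpose = M)
    (hnn : ∀ k l, 0 ≤ M k l) :
    ∃ (lam : ℝ) (f : m → ℝ), 0 ≤ lam ∧ (∀ k, 0 ≤ f k) ∧ f ≠ 0 ∧
      M.mulVec f = lam • f ∧ ∀ x : m → ℝ, x ⬝ᵥ M.mulVec x ≤ lam * (x ⬝ᵥ x) := by
  classical
  set T := tC M with hT
  have hsa : IsSelfAdjoint T := selfAdj M hsym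
  -- a point on the unit sphere
  have hx₀ : (EuclideanSpace.single (Classical.arbitrary m) (1:ℝ)) ∈
      Metric.sphere (0 : EuclideanSpace ℝ m) 1 := by
    simp [EuclideanSpace.norm_single]
  obtain ⟨g, hg_mem, hg_max⟩ :=
    (isCompact_sphere (0 : EuclideanSpace ℝ m) 1).exists_isMaxOn ⟨_, hx₀⟩
      (T.reApplyInnerSelf_continuous.continuousOn)
  have hgnorm : ‖g‖ = 1 := mem_sphere_zero_iff_norm.mp hg_mem
  set f : m → ℝ := fun k => |g k| with hf
  set g' : EuclideanSpace ℝ m := (WithLp.equiv 2 (m → ℝ)).symm f with hg'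
  have hg'norm : ‖g'‖ = 1 := by
    have h2 : ‖g'‖ ^ 2 = ‖g‖ ^ 2 := by
      rw [norm_sq_eq, norm_sq_eq]
      refine Finset.sum_congr rfl fun i _ => ?_
      simp [hg', hf, sq_abs]
    calc ‖g'‖ = Real.sqrt (‖g'‖ ^ 2) := (Real.sqrt_sq (norm_nonneg _)).symm
      _ = Real.sqrt (‖g‖ ^ 2) := by rw [h2]
      _ = 1 := by rw [Real.sqrt_sq (norm_nonneg _), hgnorm]
  have hQmono : T.reApplyInnerSelf g ≤ T.reApplyInnerSelf g' := by
    rw [reApply_eq, reApply_eq]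
    have h1 : ∀ x : m → ℝ, x ⬝ᵥ M.mulVec x = ∑ k, ∑ l, x k * (M k l * x l) := by
      intro x
      simp only [dotProduct, Matrix.mulVec, Finset.mul_sum]
    rw [h1, h1]
    calc ∑ k, ∑ l, (g : m → ℝ) k * (M k l * g l)
        ≤ |∑ k, ∑ l, (g : m → ℝ) k * (M k l * g l)| := le_abs_self _
      _ ≤ ∑ k, ∑ l, |(g : m → ℝ) k * (M k l * g l)| := by
          refine (Finset.abs_sum_le_sum_abs _ _).trans ?_
          exact Finset.sum_le_sum fun k _ => Finset.abs_sum_le_sum_abs _ _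
      _ = ∑ k, ∑ l, (g' : m → ℝ) k * (M k l * g' l) := by
          refine Finset.sum_congr rfl fun k _ => Finset.sum_congr rfl fun l _ => ?_
          rw [abs_mul, abs_mul, abs_of_nonneg (hnn k l)]
          rfl
  have hg'max : IsMaxOn T.reApplyInnerSelf (Metric.sphere (0 : EuclideanSpace ℝ m) 1) g' := by
    intro y hy
    exact le_trans (hg_max hy) hQmono
  have hg'mem : g' ∈ Metric.sphere (0 : EuclideanSpace ℝ m) 1 :=
    mem_sphere_zero_iff_norm.mpr hg'norm
  have hextr : IsLocalExtrOn T.reApplyInnerSelf (Metric.sphere (0 : EuclideanSpace ℝ m) ‖g'‖) g' := by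
    rw [hg'norm]
    exact Or.inr hg'max.localize
  have heig := hsa.eq_smul_self_of_isLocalExtrOn_real hextr
  set lam : ℝ := T.reApplyInnerSelf g' with hlam
  have hray : T.rayleighQuotient g' = lam := by
    rw [ContinuousLinearMap.rayleighQuotient, hg'norm]
    simp
    rfl
  rw [hray] at heig
  have hfg' : (g' : m → ℝ) = f := rfl
  have heigf : M.mulVec f = lam • f := by
    have := congrArg (fun z => (WithLp.equiv 2 (m → ℝ)) z) heig
    exact this
  have hfne : f ≠ 0 := by
    intro h
    have hz : g' = 0 := by rw [hg', h]; rfl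
    rw [hz] at hg'norm
    simp at hg'norm
  refine ⟨lam, f, ?_, fun k => abs_nonneg _, hfne, heigf, ?_⟩
  · -- 0 ≤ lam
    have h1 : lam * (f ⬝ᵥ f) = f ⬝ᵥ M.mulVec f := by
      rw [heigf]
      rw [dotProduct_smul]
      simp [mul_comm]
    have h2 : 0 ≤ f ⬝ᵥ M.mulVec f := by
      refine Finset.sum_nonneg fun k _ => mul_nonneg (abs_nonneg _) ?_
      exact Finset.sum_nonneg fun l _ => mul_nonneg (hnn k l) (abs_nonneg _)
    have h3 : 0 < f ⬝ᵥ f := by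
      obtain ⟨k0, hk0⟩ : ∃ k, f k ≠ 0 := by
        by_contra h; push_neg at h; exact hfne (funext h)
      refine Finset.sum_pos' (fun k _ => mul_self_nonneg _) ⟨k0, Finset.mem_univ _, ?_⟩
      have hpos0 : 0 < f k0 := lt_of_le_of_ne (by rw [hf]; exact abs_nonneg _) (Ne.symm hk0)
      exact mul_pos hpos0 hpos0
    nlinarith [h1, h2, h3]
  · -- Rayleigh bound
    intro x
    by_cases hx : x = 0
    · simp [hx]
    set X : EuclideanSpace ℝ m := (WithLp.equiv 2 (m → ℝ)).symm x with hX
    have hXne : X ≠ 0 := by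
      intro h
      exact hx (congrArg (WithLp.equiv 2 (m → ℝ)) h)
    have hr : (0:ℝ) < ‖X‖ := norm_pos_iff.mpr hXne
    have hy : (‖X‖⁻¹ • X) ∈ Metric.sphere (0 : EuclideanSpace ℝ m) 1 := by
      simp [norm_smul, abs_of_pos hr, inv_mul_cancel₀ hr.ne']
    have hQy : T.reApplyInnerSelf (‖X‖⁻¹ • X) ≤ lam := le_trans (hg_max hy) hQmono
    have hsmul : T.reApplyInnerSelf (‖X‖⁻¹ • X) = ‖X‖⁻¹ ^ 2 * T.reApplyInnerSelf X := by
      have := T.reApplyInnerSelf_smul X (c := (‖X‖⁻¹ : ℝ))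
      simpa [Real.norm_eq_abs, abs_of_pos (inv_pos.mpr hr)] using this
    have hQX : T.reApplyInnerSelf X = x ⬝ᵥ M.mulVec x := reApply_eq M X
    have hnormX : ‖X‖ ^ 2 = x ⬝ᵥ x := by
      rw [norm_sq_eq]
      refine Finset.sum_congr rfl fun i _ => ?_
      show X i ^ 2 = x i * x i
      exact sq (x i)
    rw [hsmul, hQX] at hQy
    have : x ⬝ᵥ M.mulVec x ≤ lam * ‖X‖ ^ 2 := by
      have h4 : (0:ℝ) < ‖X‖ ^ 2 := by positivity
      calc x ⬝ᵥ M.mulVec x = ‖X‖ ^ 2 * (‖X‖⁻¹ ^ 2 * (x ⬝ᵥ M.mulVec x)) := by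
            field_simp
        _ ≤ ‖X‖ ^ 2 * lam := by nlinarith [hQy, h4]
        _ = lam * ‖X‖ ^ 2 := mul_comm _ _
    rwa [hnormX] at this

end SpecAux

namespace SpecAux
variable {m : Type*} [Fintype m] [DecidableEq m]

lemma lemP (M : Matrix m m ℝ) {lam : ℝ} (hlam : 0 < lam)
    (hApos : ∀ k l, 0 < M k l + (M * M) k l)
    {f : m → ℝ} (hf : ∀ k, 0 ≤ f k) (hfne : f ≠ 0)
    (hfe : M.mulVec f = lam • f) : ∀ k, 0 < f k := by
  intro k
  have h2 : (M * M).mulVec f = (lam * lam) • f := by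
    rw [← Matrix.mulVec_mulVec, hfe, Matrix.mulVec_smul, hfe, smul_smul]
  have hkey : (lam + lam * lam) * f k = ∑ l, (M k l + (M * M) k l) * f l := by
    have h1 : M.mulVec f k = lam * f k := by rw [hfe]; rfl
    have h2' : (M * M).mulVec f k = (lam * lam) * f k := by rw [h2]; rfl
    simp only [Matrix.mulVec, dotProduct] at h1 h2'
    rw [add_mul, ← h1, ← h2', ← Finset.sum_add_distrib]
    exact Finset.sum_congr rfl fun l _ => (add_mul _ _ _).symm
  have hpos : 0 < ∑ l, (M k l + (M * M) k l) * f l := by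
    obtain ⟨l0, hl0⟩ : ∃ l, f l ≠ 0 := by
      by_contra h; push_neg at h; exact hfne (funext h)
    refine Finset.sum_pos' (fun l _ => mul_nonneg (hApos k l).le (hf l)) ⟨l0, Finset.mem_univ _, ?_⟩
    exact mul_pos (hApos k l0) (lt_of_le_of_ne (hf l0) (Ne.symm hl0))
  have : 0 < (lam + lam * lam) * f k := hkey ▸ hpos
  have hc : 0 < lam + lam * lam := by nlinarith
  nlinarith [this, hc]

end SpecAux

namespace SpecAux
variable {m : Type*} [Fintype m] [DecidableEq m]

lemma lemU [Nonempty m] (M : Matrix m m ℝ) {lam : ℝ} (hlam : 0 < lam)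
    (hApos : ∀ k l, 0 < M k l + (M * M) k l)
    {f g : m → ℝ} (hf : ∀ k, 0 < f k)
    (hfe : M.mulVec f = lam • f) (hge : M.mulVec g = lam • g) :
    ∃ c : ℝ, g = c • f := by
  obtain ⟨k0, -, hk0⟩ := Finset.exists_min_image Finset.univ (fun k => g k / f k)
    ⟨Classical.arbitrary m, Finset.mem_univ _⟩
  set c : ℝ := g k0 / f k0 with hc
  refine ⟨c, ?_⟩
  set h : m → ℝ := g - c • f with hh
  have hhnn : ∀ k, 0 ≤ h k := by
    intro k
    have := hk0 k (Finset.mem_univ _)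
    have hfk := hf k
    simp only [hh, Pi.sub_apply, Pi.smul_apply, smul_eq_mul, sub_nonneg]
    rw [div_le_div_iff₀ (hf k0) hfk] at this
    calc c * f k = g k0 / f k0 * f k := rfl
      _ ≤ g k := by
        rw [div_mul_eq_mul_div, div_le_iff₀ (hf k0)]
        nlinarith [this]
  have hhk0 : h k0 = 0 := by
    simp only [hh, Pi.sub_apply, Pi.smul_apply, smul_eq_mul, hc]
    rw [div_mul_eq_mul_div, mul_div_assoc, div_self (hf k0).ne', mul_one, sub_self]
  have hhe : M.mulVec h = lam • h := by
    rw [hh, Matrix.mulVec_sub, Matrix.mulVec_smul, hfe, hge, smul_sub, smul_comm]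
  have hhe2 : (M * M).mulVec h = (lam * lam) • h := by
    rw [← Matrix.mulVec_mulVec, hhe, Matrix.mulVec_smul, hhe, smul_smul]
  have hzero : ∀ l, h l = 0 := by
    have hsum : ∑ l, (M k0 l + (M * M) k0 l) * h l = 0 := by
      have h1 : M.mulVec h k0 = lam * h k0 := by rw [hhe]; rfl
      have h2 : (M * M).mulVec h k0 = lam * lam * h k0 := by rw [hhe2]; rfl
      simp only [Matrix.mulVec, dotProduct] at h1 h2
      have : ∑ l, (M k0 l + (M * M) k0 l) * h l = lam * h k0 + lam * lam * h k0 := by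
        rw [← h1, ← h2, ← Finset.sum_add_distrib]
        exact Finset.sum_congr rfl fun l _ => add_mul _ _ _
      rw [this, hhk0]
      ring
    intro l
    have := (Finset.sum_eq_zero_iff_of_nonneg
      (fun l _ => mul_nonneg (hApos k0 l).le (hhnn l))).mp hsum l (Finset.mem_univ _)
    rcases mul_eq_zero.mp this with h' | h'
    · exact absurd h' (hApos k0 l).ne'
    · exact h'
  funext k
  have := hzero k
  simp only [hh, Pi.sub_apply, Pi.smul_apply, smul_eq_mul, sub_eq_zero] at this
  simpa using this

lemma opNorm2_eq [Nonempty m] (M : Matrix m m ℝ) (hsym : M.transpose = M)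
    (hnn : ∀ k l, 0 ≤ M k l)
    {lam : ℝ} (hlam : 0 ≤ lam) {f : m → ℝ} (hf : ∀ k, 0 < f k)
    (hfe : M.mulVec f = lam • f) : opNorm2 M = lam := by
  have hsymdot : ∀ x y : m → ℝ, x ⬝ᵥ M.mulVec y = (M.mulVec x) ⬝ᵥ y := by
    intro x y
    rw [Matrix.dotProduct_mulVec, ← Matrix.mulVec_transpose, hsym]
  have hM2sym : (M * M).transpose = M * M := by
    rw [Matrix.transpose_mul, hsym]
  have hM2nn : ∀ k l, 0 ≤ (M * M) k l := by
    intro k l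
    exact Finset.sum_nonneg fun j _ => mul_nonneg (hnn k j) (hnn j l)
  obtain ⟨mu, h, hmu0, hhnn, hhne, hhe, hhray⟩ := lemA (M * M) hM2sym hM2nn
  have hfe2 : (M * M).mulVec f = (lam * lam) • f := by
    rw [← Matrix.mulVec_mulVec, hfe, Matrix.mulVec_smul, hfe, smul_smul]
  have hmueq : lam * lam = mu := lemB (M * M) hM2sym hf hhnn hhne hfe2 hhe
  have hMT : opNorm2 M = ‖tC M‖ := rfl
  rw [hMT]
  apply le_antisymm
  · refine ContinuousLinearMap.opNorm_le_bound _ hlam fun x => ?_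
    have hnx : ‖tC M x‖ ^ 2 = (⇑x : m → ℝ) ⬝ᵥ (M * M).mulVec ⇑x := by
      rw [← real_inner_self_eq_norm_sq, inner_eq]
      have : ∀ i, (tC M x) i = M.mulVec ⇑x i := fun i => congrFun (tC_apply M x) i
      calc ∑ i, (tC M x) i * (tC M x) i
          = (M.mulVec ⇑x) ⬝ᵥ (M.mulVec ⇑x) := by
            rw [dotProduct]
            exact Finset.sum_congr rfl fun i _ => by rw [this i]
        _ = (⇑x : m → ℝ) ⬝ᵥ (M * M).mulVec ⇑x := by
            rw [← Matrix.mulVec_mulVec, hsymdot, dotProduct_comm]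
    have hx2 : ‖x‖ ^ 2 = (⇑x : m → ℝ) ⬝ᵥ ⇑x := by
      rw [norm_sq_eq, dotProduct]
      exact Finset.sum_congr rfl fun i _ => sq (x i)
    have hb : ‖tC M x‖ ^ 2 ≤ (lam * ‖x‖) ^ 2 := by
      rw [hnx]
      calc (⇑x : m → ℝ) ⬝ᵥ (M * M).mulVec ⇑x ≤ mu * ((⇑x : m → ℝ) ⬝ᵥ ⇑x) := hhray _
        _ = (lam * ‖x‖) ^ 2 := by rw [← hmueq, ← hx2]; ring
    calc ‖tC M x‖ = Real.sqrt (‖tC M x‖ ^ 2) := (Real.sqrt_sq (norm_nonneg _)).symm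
      _ ≤ Real.sqrt ((lam * ‖x‖) ^ 2) := Real.sqrt_le_sqrt hb
      _ = lam * ‖x‖ := Real.sqrt_sq (by positivity)
  · set f' : EuclideanSpace ℝ m := (WithLp.equiv 2 (m → ℝ)).symm f with hf'
    have hf'ne : f' ≠ 0 := by
      intro hz
      have : f (Classical.arbitrary m) = 0 := by
        have := congrArg (fun z => (WithLp.equiv 2 (m → ℝ)) z (Classical.arbitrary m)) hz
        exact this
      exact (hf _).ne' this
    have hTf' : tC M f' = lam • f' := by
      apply (WithLp.equiv 2 (m → ℝ)).injective
      have h1 : (WithLp.equiv 2 (m → ℝ)) (tC M f') = M.mulVec f := tC_apply M f'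
      rw [h1, hfe]
      rfl
    have h2 : ‖tC M f'‖ = lam * ‖f'‖ := by
      rw [hTf', norm_smul, Real.norm_eq_abs, abs_of_nonneg hlam]
    have h3 := (tC M).le_opNorm f'
    rw [h2] at h3
    have hf'pos : 0 < ‖f'‖ := norm_pos_iff.mpr hf'ne
    exact le_of_mul_le_mul_right h3 hf'pos

end SpecAux

namespace SpecAux
variable {m : Type*} [Fintype m]

lemma nrm2_smul (c : ℝ) (f : m → ℝ) : nrm2 (c • f) = |c| * nrm2 f := by
  unfold nrm2
  have h1 : ∑ i, ((c • f) i) ^ 2 = c ^ 2 * ∑ i, (f i) ^ 2 := by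
    rw [Finset.mul_sum]
    exact Finset.sum_congr rfl fun i _ => by simp [mul_pow]
  rw [h1, mul_div_assoc, Real.sqrt_mul (sq_nonneg c), Real.sqrt_sq_eq_abs]

lemma nrm2_pos [Nonempty m] {f : m → ℝ} (hf : ∀ k, 0 < f k) : 0 < nrm2 f := by
  unfold nrm2
  apply Real.sqrt_pos.mpr
  apply div_pos
  · exact Finset.sum_pos (fun k _ => pow_pos (hf k) 2) ⟨Classical.arbitrary m, Finset.mem_univ _⟩
  · exact_mod_cast Fintype.card_pos

end SpecAux


/-- **Spectral structure of `F`:** the eigenspace of `F` for its largest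
eigenvalue `‖F‖₂` is one-dimensional, spanned by a unique positive normalized
eigenvector `f₊`; the norm formula
`‖F‖₂ = 1 − η⟨f₊√(v/(η+S_o v))⟩/⟨f₊√(v(η+S_o v))⟩` holds; and
`F f₋ = −‖F‖₂ f₋` for `f₋ = e₋ f₊`. -/
theorem spectral_structure_of_F
    (n : ℕ) (hn : 1 ≤ n) (sl su : ℝ) (hsl : 0 < sl) (hslsu : sl ≤ su)
    (S : Matrix (Fin n) (Fin n) ℝ)
    (hS : ∀ i j, sl / n ≤ S i j ∧ S i j ≤ su / n) (hρ : specRad S = 1)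
    (τ η : ℝ) (hτ : 0 ≤ τ) (hη : 0 < η)
    (v₁ v₂ : Fin n → ℝ) (hv : IsDysonSolution S τ η v₁ v₂) :
    -- existence and uniqueness of the positive normalized Perron eigenvector
    (∃! fp : Fin n ⊕ Fin n → ℝ,
      (∀ k, 0 < fp k) ∧ nrm2 fp = 1 ∧
        (FM S η v₁ v₂).mulVec fp = opNorm2 (FM S η v₁ v₂) • fp) ∧
    -- the top eigenspace is one-dimensional
    (∀ fp : Fin n ⊕ Fin n → ℝ,
      ((∀ k, 0 < fp k) ∧ nrm2 fp = 1 ∧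
        (FM S η v₁ v₂).mulVec fp = opNorm2 (FM S η v₁ v₂) • fp) →
      ∀ g : Fin n ⊕ Fin n → ℝ,
        (FM S η v₁ v₂).mulVec g = opNorm2 (FM S η v₁ v₂) • g →
        ∃ c : ℝ, g = c • fp) ∧
    -- the formula for the norm of `F`
    (∀ fp : Fin n ⊕ Fin n → ℝ,
      ((∀ k, 0 < fp k) ∧ nrm2 fp = 1 ∧
        (FM S η v₁ v₂).mulVec fp = opNorm2 (FM S η v₁ v₂) • fp) →
      opNorm2 (FM S η v₁ v₂) =
        1 - η * avg2 (fun k => fp k *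
            Real.sqrt (Sum.elim v₁ v₂ k /
              (η + (SoM S).mulVec (Sum.elim v₁ v₂) k))) /
          avg2 (fun k => fp k *
            Real.sqrt (Sum.elim v₁ v₂ k *
              (η + (SoM S).mulVec (Sum.elim v₁ v₂) k)))) ∧
    -- `f₋ = e₋ f₊` is an eigenvector with eigenvalue `−‖F‖₂`
    (∀ fp : Fin n ⊕ Fin n → ℝ,
      ((∀ k, 0 < fp k) ∧ nrm2 fp = 1 ∧
        (FM S η v₁ v₂).mulVec fp = opNorm2 (FM S η v₁ v₂) • fp) →
      (FM S η v₁ v₂).mulVec (fun k => eMinus k * fp k) =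
        (-opNorm2 (FM S η v₁ v₂)) • (fun k => eMinus k * fp k)) := by
  classical
  obtain ⟨hv1, hv2, hd1, hd2⟩ := hv
  have hn0 : (0:ℝ) < (n:ℝ) := by exact_mod_cast hn
  haveI : Nonempty (Fin n) := ⟨⟨0, Nat.lt_of_lt_of_le Nat.zero_lt_one hn⟩⟩
  have hSpos : ∀ i j, 0 < S i j := fun i j => lt_of_lt_of_le (by positivity) (hS i j).1
  have hq1 : ∀ i, 0 < η + S.mulVec v₂ i := by
    intro i
    refine add_pos_of_pos_of_nonneg hη ?_
    rw [Matrix.mulVec, dotProduct]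
    exact Finset.sum_nonneg fun j _ => mul_nonneg (hSpos i j).le (hv2 j).le
  have hq2 : ∀ i, 0 < η + S.transpose.mulVec v₁ i := by
    intro i
    refine add_pos_of_pos_of_nonneg hη ?_
    rw [Matrix.mulVec, dotProduct]
    refine Finset.sum_nonneg fun j _ => ?_
    rw [Matrix.transpose_apply]
    exact mul_nonneg (hSpos j i).le (hv1 j).le
  have hu : ∀ i, 0 < uvec S η v₁ i := fun i => div_pos (hv1 i) (hq2 i)
  have hkey : ∀ i, v₁ i * (η + S.mulVec v₂ i) = v₂ i * (η + S.transpose.mulVec v₁ i) := by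
    intro i
    have hv1ne : v₁ i ≠ 0 := (hv1 i).ne'
    have hv2ne : v₂ i ≠ 0 := (hv2 i).ne'
    have hane : η + S.mulVec v₂ i ≠ 0 := (hq1 i).ne'
    have hbne : η + S.transpose.mulVec v₁ i ≠ 0 := (hq2 i).ne'
    have h1 := hd1 i
    have h2 := hd2 i
    field_simp at h1 h2
    linear_combination v₁ i * h2 - v₂ i * h1
  set w : (Fin n ⊕ Fin n) → ℝ := Sum.elim (fun i => Real.sqrt (v₁ i * uvec S η v₁ i / v₂ i))
      (fun i => Real.sqrt (v₂ i * uvec S η v₁ i / v₁ i)) with hwdef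
  have hFapp : ∀ k l, FM S η v₁ v₂ k l = w k * SoM S k l * w l := by
    intro k l
    simp only [FM]
    rw [Matrix.mul_diagonal, Matrix.diagonal_mul, ← hwdef]
  have hSo11 : ∀ i j, SoM S (Sum.inl i) (Sum.inl j) = 0 := by intro i j; simp [SoM]
  have hSo12 : ∀ i j, SoM S (Sum.inl i) (Sum.inr j) = S i j := by intro i j; simp [SoM]
  have hSo21 : ∀ i j, SoM S (Sum.inr i) (Sum.inl j) = S j i := by intro i j; simp [SoM]
  have hSo22 : ∀ i j, SoM S (Sum.inr i) (Sum.inr j) = 0 := by intro i j; simp [SoM]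
  have hwpos : ∀ k, 0 < w k := by
    intro k
    rcases k with i | i
    · exact Real.sqrt_pos.mpr (div_pos (mul_pos (hv1 i) (hu i)) (hv2 i))
    · exact Real.sqrt_pos.mpr (div_pos (mul_pos (hv2 i) (hu i)) (hv1 i))
  have hFsym : (FM S η v₁ v₂).transpose = FM S η v₁ v₂ := by
    ext k l
    rw [Matrix.transpose_apply, hFapp, hFapp]
    have hsos : SoM S l k = SoM S k l := by
      rcases k with i | i <;> rcases l with j | j <;>
        simp [hSo11, hSo12, hSo21, hSo22]
    rw [hsos]
    ring
  have hFd1 : ∀ i j, FM S η v₁ v₂ (Sum.inl i) (Sum.inl j) = 0 := by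
    intro i j; rw [hFapp, hSo11]; ring
  have hFd2 : ∀ i j, FM S η v₁ v₂ (Sum.inr i) (Sum.inr j) = 0 := by
    intro i j; rw [hFapp, hSo22]; ring
  have hF12 : ∀ i j, 0 < FM S η v₁ v₂ (Sum.inl i) (Sum.inr j) := by
    intro i j; rw [hFapp, hSo12]
    exact mul_pos (mul_pos (hwpos _) (hSpos i j)) (hwpos _)
  have hF21 : ∀ i j, 0 < FM S η v₁ v₂ (Sum.inr i) (Sum.inl j) := by
    intro i j; rw [hFapp, hSo21]
    exact mul_pos (mul_pos (hwpos _) (hSpos j i)) (hwpos _)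
  have hFnn : ∀ k l, 0 ≤ FM S η v₁ v₂ k l := by
    intro k l
    rcases k with i | i <;> rcases l with j | j
    · rw [hFd1]
    · exact (hF12 i j).le
    · exact (hF21 i j).le
    · rw [hFd2]
  have hF2nn : ∀ k l, 0 ≤ (FM S η v₁ v₂ * FM S η v₁ v₂) k l := by
    intro k l
    rw [Matrix.mul_apply]
    exact Finset.sum_nonneg fun c _ => mul_nonneg (hFnn k c) (hFnn c l)
  have hFApos : ∀ k l, 0 < FM S η v₁ v₂ k l +
      (FM S η v₁ v₂ * FM S η v₁ v₂) k l := by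
    intro k l
    set F := FM S η v₁ v₂
    have hcross : ∀ k l : Fin n ⊕ Fin n,
        (∃ c, 0 < F k c ∧ 0 < F c l) → 0 < (F * F) k l := by
      rintro k l ⟨c, h1, h2⟩
      rw [Matrix.mul_apply]
      refine Finset.sum_pos' (fun c' _ => mul_nonneg (hFnn k c') (hFnn c' l))
        ⟨c, Finset.mem_univ _, mul_pos h1 h2⟩
    have i0 : Fin n := Classical.arbitrary (Fin n)
    rcases k with i | i <;> rcases l with j | j
    · exact add_pos_of_nonneg_of_pos (hFnn _ _)
        (hcross _ _ ⟨Sum.inr i0, hF12 i i0, hF21 i0 j⟩)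
    · exact add_pos_of_pos_of_nonneg (hF12 i j) (hF2nn _ _)
    · exact add_pos_of_pos_of_nonneg (hF21 i j) (hF2nn _ _)
    · exact add_pos_of_nonneg_of_pos (hFnn _ _)
        (hcross _ _ ⟨Sum.inl i0, hF21 i i0, hF12 i0 j⟩)
  set vb : Fin n ⊕ Fin n → ℝ := Sum.elim v₁ v₂ with hvb
  set q : Fin n ⊕ Fin n → ℝ := fun k => η + (SoM S).mulVec vb k with hqdef
  have hmv : (SoM S).mulVec vb = Sum.elim (S.mulVec v₂) (S.transpose.mulVec v₁) := by
    rw [hvb, SoM, Matrix.fromBlocks_mulVec]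
    have e1 : (Sum.elim v₁ v₂ ∘ Sum.inl) = v₁ := rfl
    have e2 : (Sum.elim v₁ v₂ ∘ Sum.inr) = v₂ := rfl
    rw [e1, e2, Matrix.zero_mulVec, Matrix.zero_mulVec, zero_add, add_zero]
  have hql : ∀ i, q (Sum.inl i) = η + S.mulVec v₂ i := by
    intro i; rw [hqdef]; simp only [hmv, Sum.elim_inl]
  have hqr : ∀ i, q (Sum.inr i) = η + S.transpose.mulVec v₁ i := by
    intro i; rw [hqdef]; simp only [hmv, Sum.elim_inr]
  have hqpos : ∀ k, 0 < q k := by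
    intro k
    rcases k with i | i
    · rw [hql]; exact hq1 i
    · rw [hqr]; exact hq2 i
  have hvbpos : ∀ k, 0 < vb k := by
    intro k; rcases k with i | i
    · exact hv1 i
    · exact hv2 i
  have hwq : ∀ k, w k = Real.sqrt (vb k / q k) := by
    intro k
    rcases k with i | i
    · rw [hwdef]
      simp only [Sum.elim_inl]
      congr 1
      rw [hql, uvec]
      have h1 : vb (Sum.inl i) = v₁ i := rfl
      have h2ne : η + S.transpose.mulVec v₁ i ≠ 0 := (hq2 i).ne'
      have h1ne : η + S.mulVec v₂ i ≠ 0 := (hq1 i).ne'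
      have hv2ne : v₂ i ≠ 0 := (hv2 i).ne'
      have hv1ne : v₁ i ≠ 0 := (hv1 i).ne'
      rw [h1]
      field_simp
      linear_combination hkey i
    · rw [hwdef]
      simp only [Sum.elim_inr]
      congr 1
      rw [hqr, uvec]
      have h1 : vb (Sum.inr i) = v₂ i := rfl
      have h2ne : η + S.transpose.mulVec v₁ i ≠ 0 := (hq2 i).ne'
      have hv1ne : v₁ i ≠ 0 := (hv1 i).ne'
      rw [h1]
      field_simp
  have hwgq : ∀ k, w k * Real.sqrt (vb k * q k) = vb k := by
    intro k
    rw [hwq k, ← Real.sqrt_mul (div_nonneg (hvbpos k).le (hqpos k).le)]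
    have : vb k / q k * (vb k * q k) = vb k ^ 2 := by
      have hqne : q k ≠ 0 := (hqpos k).ne'
      field_simp
    rw [this, Real.sqrt_sq (hvbpos k).le]
  have hwqq : ∀ k, w k * q k = Real.sqrt (vb k * q k) := by
    intro k
    have hqne : q k ≠ 0 := (hqpos k).ne'
    have h1 : vb k * q k = (vb k / q k) * q k ^ 2 := by field_simp
    rw [hwq k, h1, Real.sqrt_mul (div_nonneg (hvbpos k).le (hqpos k).le),
      Real.sqrt_sq (hqpos k).le]
  have hFgq : (FM S η v₁ v₂).mulVec (fun k => Real.sqrt (vb k * q k)) =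
      (fun k => Real.sqrt (vb k * q k)) - η • (fun k => Real.sqrt (vb k / q k)) := by
    funext k
    have hstep : ∀ l, FM S η v₁ v₂ k l * Real.sqrt (vb l * q l) =
        w k * (SoM S k l * vb l) := by
      intro l
      rw [hFapp]
      calc w k * SoM S k l * w l * Real.sqrt (vb l * q l)
          = w k * SoM S k l * (w l * Real.sqrt (vb l * q l)) := by ring
        _ = w k * (SoM S k l * vb l) := by rw [hwgq l]; ring
    have hsum : (FM S η v₁ v₂).mulVec (fun k => Real.sqrt (vb k * q k)) k =
        w k * ((SoM S).mulVec vb k) := by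
      rw [Matrix.mulVec, dotProduct, Matrix.mulVec, dotProduct, Finset.mul_sum]
      exact Finset.sum_congr rfl fun l _ => hstep l
    rw [hsum]
    have hq' : (SoM S).mulVec vb k = q k - η := by rw [hqdef]; ring
    rw [hq']
    have : w k * (q k - η) = w k * q k - η * w k := by ring
    rw [this, hwqq k, hwq k]
    simp only [Pi.sub_apply, Pi.smul_apply, smul_eq_mul]
  obtain ⟨lam0, f0, hlam00, hf0nn, hf0ne, hf0e, hray⟩ :=
    SpecAux.lemA (FM S η v₁ v₂) hFsym hFnn
  have hcard : (0:ℝ) < (Fintype.card (Fin n ⊕ Fin n) : ℝ) := by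
    have := Fintype.card_pos (α := Fin n ⊕ Fin n)
    exact_mod_cast this
  have hlam0pos : 0 < lam0 := by
    have h1 := hray (fun _ => 1)
    have hL : 0 < (fun _ => (1:ℝ)) ⬝ᵥ (FM S η v₁ v₂).mulVec (fun _ => 1) := by
      rw [dotProduct]
      refine Finset.sum_pos' (fun k _ => ?_)
        ⟨Sum.inl (Classical.arbitrary (Fin n)), Finset.mem_univ _, ?_⟩
      · refine mul_nonneg zero_le_one ?_
        rw [Matrix.mulVec, dotProduct]
        exact Finset.sum_nonneg fun l _ => mul_nonneg (hFnn _ _) zero_le_one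
      · rw [one_mul, Matrix.mulVec, dotProduct]
        refine Finset.sum_pos' (fun l _ => mul_nonneg (hFnn _ _) zero_le_one)
          ⟨Sum.inr (Classical.arbitrary (Fin n)), Finset.mem_univ _, by
            rw [mul_one]; exact hF12 _ _⟩
    have hR : ((fun _ => (1:ℝ)) : Fin n ⊕ Fin n → ℝ) ⬝ᵥ ((fun _ => (1:ℝ)) : Fin n ⊕ Fin n → ℝ) = (Fintype.card (Fin n ⊕ Fin n) : ℝ) := by
      rw [dotProduct]
      simp
    rw [hR] at h1
    nlinarith [h1, hL, hcard]
  have hf0pos : ∀ k, 0 < f0 k :=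
    SpecAux.lemP (FM S η v₁ v₂) hlam0pos hFApos hf0nn hf0ne hf0e
  have hopn : opNorm2 (FM S η v₁ v₂) = lam0 :=
    SpecAux.opNorm2_eq (FM S η v₁ v₂) hFsym hFnn hlam00 hf0pos hf0e
  have hopnpos : 0 < opNorm2 (FM S η v₁ v₂) := by rw [hopn]; exact hlam0pos
  have hnrmf0 : 0 < nrm2 f0 := SpecAux.nrm2_pos hf0pos
  set fp0 : Fin n ⊕ Fin n → ℝ := (nrm2 f0)⁻¹ • f0 with hfp0
  have hfp0pos : ∀ k, 0 < fp0 k := fun k => mul_pos (inv_pos.mpr hnrmf0) (hf0pos k)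
  have hfp0nrm : nrm2 fp0 = 1 := by
    rw [hfp0, SpecAux.nrm2_smul, abs_of_pos (inv_pos.mpr hnrmf0)]
    exact inv_mul_cancel₀ hnrmf0.ne'
  have hfp0e : (FM S η v₁ v₂).mulVec fp0 = opNorm2 (FM S η v₁ v₂) • fp0 := by
    rw [hfp0, Matrix.mulVec_smul, hf0e, hopn, smul_comm]
  have hdim : ∀ fp : Fin n ⊕ Fin n → ℝ,
      ((∀ k, 0 < fp k) ∧ nrm2 fp = 1 ∧
        (FM S η v₁ v₂).mulVec fp = opNorm2 (FM S η v₁ v₂) • fp) →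
      ∀ g : Fin n ⊕ Fin n → ℝ,
        (FM S η v₁ v₂).mulVec g = opNorm2 (FM S η v₁ v₂) • g →
        ∃ c : ℝ, g = c • fp := by
    rintro fp ⟨hfppos, -, hfpe⟩ g hg
    exact SpecAux.lemU (FM S η v₁ v₂) hopnpos hFApos hfppos hfpe hg
  have hsymdot : ∀ x y : Fin n ⊕ Fin n → ℝ,
      x ⬝ᵥ (FM S η v₁ v₂).mulVec y = ((FM S η v₁ v₂).mulVec x) ⬝ᵥ y := by
    intro x y
    rw [Matrix.dotProduct_mulVec, ← Matrix.mulVec_transpose, hFsym]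
  refine ⟨⟨fp0, ⟨hfp0pos, hfp0nrm, hfp0e⟩, ?_⟩, hdim, ?_, ?_⟩
  · rintro y ⟨hypos, hynrm, hye⟩
    obtain ⟨c, hc⟩ := hdim fp0 ⟨hfp0pos, hfp0nrm, hfp0e⟩ y hye
    have hcpos : 0 < c := by
      have h1 := hypos (Sum.inl (Classical.arbitrary (Fin n)))
      rw [hc] at h1
      simp only [Pi.smul_apply, smul_eq_mul] at h1
      nlinarith [hfp0pos (Sum.inl (Classical.arbitrary (Fin n))), h1]
    have hc1 : (1:ℝ) = c := by
      rw [hc, SpecAux.nrm2_smul, hfp0nrm, mul_one, abs_of_pos hcpos] at hynrm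
      exact hynrm.symm
    rw [hc, ← hc1, one_smul]
  · -- norm formula
    rintro fp ⟨hfppos, hfpnrm, hfpe⟩
    show opNorm2 (FM S η v₁ v₂) =
      1 - η * avg2 (fun k => fp k * Real.sqrt (vb k / q k)) /
        avg2 (fun k => fp k * Real.sqrt (vb k * q k))
    set lam := opNorm2 (FM S η v₁ v₂) with hlamdef
    set A : ℝ := avg2 (fun k => fp k * Real.sqrt (vb k * q k)) with hA
    set B : ℝ := avg2 (fun k => fp k * Real.sqrt (vb k / q k)) with hB
    have hApos : 0 < A := by
      rw [hA, avg2]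
      refine div_pos (Finset.sum_pos (fun k _ => ?_) (Finset.univ_nonempty (α := Fin n ⊕ Fin n))) hcard
      exact mul_pos (hfppos k) (Real.sqrt_pos.mpr (mul_pos (hvbpos k) (hqpos k)))
    have hAdot : fp ⬝ᵥ (fun k => Real.sqrt (vb k * q k)) =
        A * (Fintype.card (Fin n ⊕ Fin n) : ℝ) := by
      rw [dotProduct, hA, avg2, div_mul_cancel₀ _ hcard.ne']
    have hBdot : fp ⬝ᵥ (fun k => Real.sqrt (vb k / q k)) =
        B * (Fintype.card (Fin n ⊕ Fin n) : ℝ) := by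
      rw [dotProduct, hB, avg2, div_mul_cancel₀ _ hcard.ne']
    have hpair : lam * (fp ⬝ᵥ (fun k => Real.sqrt (vb k * q k))) =
        fp ⬝ᵥ (fun k => Real.sqrt (vb k * q k)) -
          η * (fp ⬝ᵥ (fun k => Real.sqrt (vb k / q k))) := by
      calc lam * (fp ⬝ᵥ (fun k => Real.sqrt (vb k * q k)))
          = (lam • fp) ⬝ᵥ (fun k => Real.sqrt (vb k * q k)) := by
            rw [smul_dotProduct, smul_eq_mul]
        _ = ((FM S η v₁ v₂).mulVec fp) ⬝ᵥ (fun k => Real.sqrt (vb k * q k)) := by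
            rw [hfpe]
        _ = fp ⬝ᵥ ((FM S η v₁ v₂).mulVec (fun k => Real.sqrt (vb k * q k))) :=
            (hsymdot _ _).symm
        _ = fp ⬝ᵥ ((fun k => Real.sqrt (vb k * q k)) -
              η • (fun k => Real.sqrt (vb k / q k))) := by rw [hFgq]
        _ = fp ⬝ᵥ (fun k => Real.sqrt (vb k * q k)) -
              η * (fp ⬝ᵥ (fun k => Real.sqrt (vb k / q k))) := by
            rw [dotProduct_sub, dotProduct_smul, smul_eq_mul]
    rw [hAdot, hBdot] at hpair
    have hlamA : lam * A = A - η * B := by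
      apply mul_right_cancel₀ hcard.ne'
      linear_combination hpair
    have hBA : η * B / A = 1 - lam := by
      rw [div_eq_iff hApos.ne']
      linear_combination hlamA
    rw [hBA]
    ring
  · -- eMinus
    rintro fp ⟨hfppos, hfpnrm, hfpe⟩
    funext k
    have hexp := congrFun hfpe k
    rcases k with i | i
    · have hz1 : ∑ j, FM S η v₁ v₂ (Sum.inl i) (Sum.inl j) * fp (Sum.inl j) = 0 :=
        Finset.sum_eq_zero fun j _ => by rw [hFd1]; ring
      have hz2 : ∑ j, FM S η v₁ v₂ (Sum.inl i) (Sum.inl j) *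
          (eMinus (Sum.inl j) * fp (Sum.inl j)) = 0 :=
        Finset.sum_eq_zero fun j _ => by rw [hFd1]; ring
      have hneg : ∑ j, FM S η v₁ v₂ (Sum.inl i) (Sum.inr j) *
          (eMinus (Sum.inr j) * fp (Sum.inr j)) =
          -∑ j, FM S η v₁ v₂ (Sum.inl i) (Sum.inr j) * fp (Sum.inr j) := by
        rw [← Finset.sum_neg_distrib]
        refine Finset.sum_congr rfl fun j _ => ?_
        simp [eMinus]
      simp only [Matrix.mulVec, dotProduct, Fintype.sum_sum_type,
        Pi.smul_apply, smul_eq_mul] at hexp ⊢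
      rw [hz2, hneg, zero_add]
      rw [hz1, zero_add] at hexp
      rw [hexp]
      simp [eMinus]
    · have hz1 : ∑ j, FM S η v₁ v₂ (Sum.inr i) (Sum.inr j) * fp (Sum.inr j) = 0 :=
        Finset.sum_eq_zero fun j _ => by rw [hFd2]; ring
      have hz2 : ∑ j, FM S η v₁ v₂ (Sum.inr i) (Sum.inr j) *
          (eMinus (Sum.inr j) * fp (Sum.inr j)) = 0 :=
        Finset.sum_eq_zero fun j _ => by rw [hFd2]; ring
      have hpos' : ∑ j, FM S η v₁ v₂ (Sum.inr i) (Sum.inl j) *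
          (eMinus (Sum.inl j) * fp (Sum.inl j)) =
          ∑ j, FM S η v₁ v₂ (Sum.inr i) (Sum.inl j) * fp (Sum.inl j) := by
        refine Finset.sum_congr rfl fun j _ => ?_
        simp [eMinus]
      simp only [Matrix.mulVec, dotProduct, Fintype.sum_sum_type,
        Pi.smul_apply, smul_eq_mul] at hexp ⊢
      rw [hz2, hpos', add_zero]
      rw [hz1, add_zero] at hexp
      rw [hexp]
      simp [eMinus]
end
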